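/- arXiv:1002.4121 — 9 statements merged into one kernel-verified Lean document; each statement's English description precedes it below -/
import Mathlib

section
/- Let L : ℝ → ℝ be a differentiable function, increasing to infinity, slowly varying at infinity, such that x·L'(x)/L(x) is eventually decreasing as x → ∞. Define φ(t) = ∫ from 1 to t of L(u)/u du. Then log(L(t)·log t) / log(φ(t)) → 1 as t → ∞. -/
open Filter Real
open Set Topology intervalIntegral

/-- L is slowly varying at infinity. -/
def SlowlyVarying (L : ℝ → ℝ) : Prop :=
  ∀ c > (0:ℝ), Tendsto (fun x => L (c * x) / L x) atTop (nhds 1)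

set_option maxHeartbeats 2000000 in
theorem stmt0 (L : ℝ → ℝ)
    (hdiff : DifferentiableOn ℝ L (Set.Ici 1))
    (hmono : MonotoneOn L (Set.Ici 1))
    (htop : Tendsto L atTop atTop)
    (hsv : SlowlyVarying L)
    (hdec : ∃ x₀ : ℝ, AntitoneOn (fun x => x * deriv L x / L x) (Set.Ici x₀))
    (φ : ℝ → ℝ) (hφ : ∀ t, φ t = ∫ u in (1:ℝ)..t, L u / u) :
    Tendsto (fun t => Real.log (L t * Real.log t) / Real.log (φ t)) atTop (nhds 1) := by
  obtain ⟨x₀, hE⟩ := hdec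
  set E : ℝ → ℝ := fun x => x * deriv L x / L x with hEdef
  have hcont : ContinuousOn L (Set.Ici 1) := hdiff.continuousOn
  obtain ⟨M₀, hM₀⟩ := eventually_atTop.mp (htop.eventually_ge_atTop 1)
  set M : ℝ := max M₀ (max x₀ 2) with hMdef
  have hML : ∀ x, M ≤ x → 1 ≤ L x := fun x hx => hM₀ x (le_trans (le_max_left _ _) hx)
  have hM2 : (2:ℝ) ≤ M := le_trans (le_max_right _ _) (le_max_right _ _)
  have hMx₀ : x₀ ≤ M := le_trans (le_max_left _ _) (le_max_right _ _)
  have hM1 : (1:ℝ) ≤ M := by linarith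
  have hM0 : (0:ℝ) < M := by linarith
  set g : ℝ → ℝ := fun s => Real.log (L (Real.exp s)) with hgdef
  set s₁ : ℝ := Real.log M + 1 with hs₁def
  have hs₁pos : 0 < s₁ := by
    have : 0 ≤ Real.log M := Real.log_nonneg (by linarith)
    simp only [hs₁def]; linarith
  have hLpos : ∀ x, M ≤ x → 0 < L x := fun x hx => lt_of_lt_of_le one_pos (hML x hx)
  -- derivative of g
  have hg : ∀ s : ℝ, Real.log M < s → HasDerivAt g (E (Real.exp s)) s := by
    intro s hs
    have hxM : M ≤ Real.exp s := by
      calc M = Real.exp (Real.log M) := (Real.exp_log hM0).symm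
        _ ≤ Real.exp s := Real.exp_le_exp.2 hs.le
    have hx1 : (1:ℝ) < Real.exp s := by linarith
    have h1 : HasDerivAt L (deriv L (Real.exp s)) (Real.exp s) :=
      ((hdiff _ hx1.le).differentiableAt (Ici_mem_nhds hx1)).hasDerivAt
    have h2 : HasDerivAt (fun s => L (Real.exp s)) (deriv L (Real.exp s) * Real.exp s) s :=
      h1.comp s (Real.hasDerivAt_exp s)
    have h3 := h2.log (ne_of_gt (hLpos _ hxM))
    convert h3 using 1
    simp only [hEdef]
    ring
  have hgnn : ∀ s, Real.log M ≤ s → 0 ≤ g s := by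
    intro s hs
    apply Real.log_nonneg
    apply hML
    calc M = Real.exp (Real.log M) := (Real.exp_log hM0).symm
      _ ≤ Real.exp s := Real.exp_le_exp.2 hs
  -- KEY comparison lemma via MVT
  have hkey : ∀ κ : ℝ, 0 < κ → κ < 1 → ∀ s : ℝ, 2 * s₁ ≤ (2 * κ / (1 + κ)) * s →
      g s ≤ (1/κ) * g ((2 * κ / (1 + κ)) * s) := by
    intro κ hκ0 hκ1 s hs
    set θ : ℝ := 2 * κ / (1 + κ) with hθdef
    have hθ0 : 0 < θ := by positivity
    have hθ1 : θ < 1 := by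
      rw [hθdef, div_lt_one (by linarith)]; linarith
    set a : ℝ := θ * s with hadef
    have hs₁a : s₁ < a := by
      have : 2 * s₁ ≤ a := hs
      linarith
    have has : a < s := by
      have hspos : 0 < s := by nlinarith
      calc a = θ * s := rfl
        _ < 1 * s := by nlinarith
        _ = s := one_mul s
    have hlogM_s₁ : Real.log M < s₁ := by simp only [hs₁def]; linarith
    have hcontg : ∀ p q : ℝ, s₁ ≤ p → ContinuousOn g (Set.Icc p q) := by
      intro p q hp
      intro y hy
      exact ((hg y (lt_of_lt_of_le hlogM_s₁ (hp.trans hy.1))).continuousAt).continuousWithinAt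
    obtain ⟨c, hc, hceq⟩ := exists_hasDerivAt_eq_slope g (fun y => E (Real.exp y)) has
      (hcontg a s hs₁a.le) (fun y hy => hg y (lt_of_lt_of_le hlogM_s₁ (hs₁a.le.trans hy.1.le)))
    obtain ⟨c', hc', hceq'⟩ := exists_hasDerivAt_eq_slope g (fun y => E (Real.exp y)) hs₁a
      (hcontg s₁ a le_rfl) (fun y hy => hg y (lt_of_lt_of_le hlogM_s₁ hy.1.le))
    have hcc : Real.exp c' ≤ Real.exp c := Real.exp_le_exp.2 (hc'.2.trans hc.1).le
    have hMc' : M ≤ Real.exp c' := by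
      have h1 : Real.log M < c' := lt_of_lt_of_le hlogM_s₁ hc'.1.le
      calc M = Real.exp (Real.log M) := (Real.exp_log hM0).symm
        _ ≤ Real.exp c' := Real.exp_le_exp.2 h1.le
    have hc'x₀ : x₀ ≤ Real.exp c' := le_trans hMx₀ hMc'
    have hEcomp : E (Real.exp c) ≤ E (Real.exp c') :=
      hE hc'x₀ (le_trans hc'x₀ hcc) hcc
    rw [hceq, hceq'] at hEcomp
    have hsa : 0 < s - a := by linarith
    have has₁ : 0 < a - s₁ := by linarith
    rw [div_le_div_iff₀ hsa has₁] at hEcomp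
    set r : ℝ := (s - a)/(a - s₁) with hrdef
    have h4 : g s - g a ≤ (g a - g s₁) * r := by
      rw [hrdef, mul_div_assoc', le_div_iff₀ has₁]
      nlinarith [hEcomp]
    have hr0 : 0 ≤ r := le_of_lt (div_pos hsa has₁)
    have hrB : r ≤ 2 * (1 - θ) / θ := by
      rw [hrdef, div_le_div_iff₀ has₁ hθ0]
      nlinarith [mul_le_mul_of_nonneg_left hs (by linarith : (0:ℝ) ≤ 1 - θ), hs₁pos]
    have hgs₁nn : 0 ≤ g s₁ := hgnn s₁ (by simp only [hs₁def]; linarith)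
    have hgann : 0 ≤ g a := hgnn a (by linarith [hlogM_s₁])
    have hBκ : 1 + 2 * (1 - θ) / θ = 1/κ := by
      rw [hθdef]
      have h1κ : (0:ℝ) < 1 + κ := by linarith
      field_simp
      ring
    calc g s ≤ g a + (g a - g s₁) * r := by linarith
      _ ≤ g a + g a * r := by
          have := mul_le_mul_of_nonneg_right (by linarith : g a - g s₁ ≤ g a) hr0
          linarith
      _ ≤ g a + g a * (2 * (1 - θ) / θ) := by
          have := mul_le_mul_of_nonneg_left hrB hgann
          linarith
      _ = g a * (1 + 2 * (1 - θ) / θ) := by ring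
      _ = (1/κ) * g a := by rw [hBκ]; ring
  -- integrability
  have hInt : ∀ a b : ℝ, 1 ≤ a → a ≤ b →
      IntervalIntegrable (fun u => L u / u) MeasureTheory.volume a b := by
    intro a b ha hab
    apply ContinuousOn.intervalIntegrable
    rw [Set.uIcc_of_le hab]
    apply ContinuousOn.div (hcont.mono ?_) continuousOn_id ?_
    · exact fun u hu => le_trans ha hu.1
    · exact fun u hu => ne_of_gt (lt_of_lt_of_le one_pos (le_trans ha hu.1))
  -- lower bound for tail integrals
  have hlow : ∀ a b : ℝ, 1 ≤ a → a ≤ b →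
      L a * (Real.log b - Real.log a) ≤ ∫ u in a..b, L u / u := by
    intro a b ha hab
    have ha0 : (0:ℝ) < a := lt_of_lt_of_le one_pos ha
    have hb0 : (0:ℝ) < b := lt_of_lt_of_le ha0 hab
    have h1 : (∫ u in a..b, L a / u) ≤ ∫ u in a..b, L u / u := by
      refine intervalIntegral.integral_mono_on hab ?_ (hInt a b ha hab) ?_
      · apply ContinuousOn.intervalIntegrable
        rw [Set.uIcc_of_le hab]
        exact continuousOn_const.div continuousOn_id
          (fun u hu => ne_of_gt (lt_of_lt_of_le ha0 hu.1))
      · intro u hu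
        have hu0 : 0 < u := lt_of_lt_of_le ha0 hu.1
        have : L a ≤ L u := hmono ha (le_trans ha hu.1) hu.1
        gcongr
    calc L a * (Real.log b - Real.log a) = ∫ u in a..b, L a / u := by
          simp only [div_eq_mul_inv]
          rw [intervalIntegral.integral_const_mul, integral_inv_of_pos ha0 hb0,
            Real.log_div (ne_of_gt hb0) (ne_of_gt ha0)]
      _ ≤ _ := h1
  -- upper bound for φ
  have hup : ∀ t : ℝ, 1 ≤ t → φ t ≤ L t * Real.log t := by
    intro t ht
    rw [hφ]
    have h1 : (∫ u in (1:ℝ)..t, L u / u) ≤ ∫ u in (1:ℝ)..t, L t / u := by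
      refine intervalIntegral.integral_mono_on ht (hInt 1 t le_rfl ht) ?_ ?_
      · apply ContinuousOn.intervalIntegrable
        rw [Set.uIcc_of_le ht]
        exact continuousOn_const.div continuousOn_id
          (fun u hu => ne_of_gt (lt_of_lt_of_le one_pos hu.1))
      · intro u hu
        have hu0 : 0 < u := lt_of_lt_of_le one_pos hu.1
        have : L u ≤ L t := hmono hu.1 (le_trans hu.1 hu.2) hu.2
        gcongr
    refine h1.trans (le_of_eq ?_)
    simp only [div_eq_mul_inv]
    rw [intervalIntegral.integral_const_mul, integral_inv_of_pos one_pos (lt_of_lt_of_le one_pos ht)]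
    simp
  -- lower bound for φ
  set Cφ : ℝ := |∫ u in (1:ℝ)..M, L u / u| with hCφdef
  have hCφ0 : 0 ≤ Cφ := abs_nonneg _
  have hφlow : ∀ t x : ℝ, M ≤ x → x ≤ t →
      L x * (Real.log t - Real.log x) - Cφ ≤ φ t := by
    intro t x hMx hxt
    have hx1 : (1:ℝ) ≤ x := le_trans hM1 hMx
    have ht1 : (1:ℝ) ≤ t := le_trans hx1 hxt
    rw [hφ]
    have e1 : (∫ u in (1:ℝ)..M, L u / u) + (∫ u in M..x, L u / u) = ∫ u in (1:ℝ)..x, L u / u :=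
      intervalIntegral.integral_add_adjacent_intervals (hInt 1 M le_rfl hM1) (hInt M x hM1 hMx)
    have e2 : (∫ u in (1:ℝ)..x, L u / u) + (∫ u in x..t, L u / u) = ∫ u in (1:ℝ)..t, L u / u :=
      intervalIntegral.integral_add_adjacent_intervals (hInt 1 x le_rfl hx1) (hInt x t hx1 hxt)
    have b1 : -Cφ ≤ ∫ u in (1:ℝ)..M, L u / u := neg_abs_le _
    have b2 : 0 ≤ ∫ u in M..x, L u / u := by
      apply intervalIntegral.integral_nonneg hMx
      intro u hu
      exact div_nonneg (le_trans zero_le_one (hML u hu.1)) (by linarith [hu.1])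
    have b3 := hlow x t hx1 hxt
    linarith
  -- φ tends to infinity
  have hφtop : Tendsto φ atTop atTop := by
    have hLM : (1:ℝ) ≤ L M := hML M le_rfl
    have h1 : Tendsto (fun t : ℝ => L M * (Real.log t - Real.log M) - Cφ) atTop atTop := by
      apply tendsto_atTop_add_const_right
      apply Tendsto.const_mul_atTop (by linarith : (0:ℝ) < L M)
      exact tendsto_atTop_add_const_right _ _ tendsto_log_atTop
    apply tendsto_atTop_mono' atTop ?_ h1
    filter_upwards [eventually_ge_atTop M] with t hMt
    exact hφlow t M le_rfl hMt
  clear_value E M g s₁ Cφ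
  -- Part (i): eventually 1 ≤ ratio
  have ev1 : ∀ᶠ t in atTop, 1 ≤ Real.log (L t * Real.log t) / Real.log (φ t) := by
    filter_upwards [eventually_ge_atTop M, tendsto_log_atTop.eventually_ge_atTop 1,
      hφtop.eventually_ge_atTop (Real.exp 1)] with t hMt hlt hφe
    have ht1 : (1:ℝ) ≤ t := le_trans hM1 hMt
    have hφpos : 0 < φ t := lt_of_lt_of_le (Real.exp_pos 1) hφe
    have hlogφ : 1 ≤ Real.log (φ t) := by
      rw [← Real.log_exp 1]
      exact Real.log_le_log (Real.exp_pos 1) hφe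
    have hle : Real.log (φ t) ≤ Real.log (L t * Real.log t) :=
      Real.log_le_log hφpos (hup t ht1)
    rw [le_div_iff₀ (by linarith : (0:ℝ) < Real.log (φ t))]
    linarith
  -- Part (ii): eventually ratio ≤ 1/κ
  have ev2 : ∀ κ : ℝ, 0 < κ → κ < 1 →
      ∀ᶠ t in atTop, Real.log (L t * Real.log t) / Real.log (φ t) ≤ 1/κ := by
    intro κ hκ0 hκ1
    set θ : ℝ := 2 * κ / (1 + κ) with hθdef
    have hθ0 : 0 < θ := by positivity
    have hθ1 : θ < 1 := by rw [hθdef, div_lt_one (by linarith)]; linarith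
    have h1θ : 0 < 1 - θ := by linarith
    clear_value θ
    filter_upwards [eventually_gt_atTop 0,
      tendsto_log_atTop.eventually_ge_atTop (2 * s₁ / θ),
      tendsto_log_atTop.eventually_ge_atTop (2 * Cφ / (1 - θ)),
      tendsto_log_atTop.eventually_ge_atTop 1,
      (tendsto_log_atTop.comp tendsto_log_atTop).eventually_ge_atTop
        ((Real.log 2 - Real.log (1 - θ)) / (1 - κ)),
      (tendsto_log_atTop.comp tendsto_log_atTop).eventually_ge_atTop 1]
      with t ht0 hc1 hc2 hs1 hc3 hll1
    simp only [Function.comp] at hc3 hll1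
    set s : ℝ := Real.log t with hsdef
    set x : ℝ := Real.exp (θ * s) with hxdef
    clear_value s x
    have hθs : 2 * s₁ ≤ θ * s := by
      rw [div_le_iff₀ hθ0] at hc1
      linarith
    have hlogx : Real.log x = θ * s := by rw [hxdef]; exact Real.log_exp _
    have hlogM_s₁ : Real.log M < s₁ := by simp only [hs₁def]; linarith
    have hxM : M ≤ x := by
      calc M = Real.exp (Real.log M) := (Real.exp_log hM0).symm
        _ ≤ Real.exp (θ * s) := Real.exp_le_exp.2 (by linarith)
        _ = x := hxdef.symm
    have hs0 : (0:ℝ) ≤ s := by linarith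
    have hxt : x ≤ t := by
      have : θ * s ≤ s := by
        have := mul_le_mul_of_nonneg_right hθ1.le hs0
        linarith
      calc x = Real.exp (θ * s) := hxdef
        _ ≤ Real.exp s := Real.exp_le_exp.2 this
        _ = t := by rw [hsdef, Real.exp_log ht0]
    have hMt : M ≤ t := le_trans hxM hxt
    have hLx1 : (1:ℝ) ≤ L x := hML x hxM
    have hLt1 : (1:ℝ) ≤ L t := hML t hMt
    -- key inequality: log L t ≤ (1/κ) log L x
    have hkey' : Real.log (L t) ≤ (1/κ) * Real.log (L x) := by
      have hθs' : 2 * s₁ ≤ 2 * κ / (1 + κ) * s := by rw [← hθdef]; exact hθs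
      have h := hkey κ hκ0 hκ1 s hθs'
      simp only [hgdef] at h
      rwa [hsdef, Real.exp_log ht0, ← hsdef, ← hθdef, ← hxdef] at h
    have hkey'' : κ * Real.log (L t) ≤ Real.log (L x) := by
      have h := mul_le_mul_of_nonneg_left hkey' hκ0.le
      calc κ * Real.log (L t) ≤ κ * ((1/κ) * Real.log (L x)) := h
        _ = Real.log (L x) := by field_simp
    -- lower bound on φ
    have h5 : L x * ((1 - θ) * s) - Cφ ≤ φ t := by
      have := hφlow t x hxM hxt
      rw [hlogx, ← hsdef] at this
      calc L x * ((1 - θ) * s) - Cφ = L x * (s - θ * s) - Cφ := by ring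
        _ ≤ φ t := this
    have h6 : (1:ℝ) * ((1 - θ) * s) ≤ L x * ((1 - θ) * s) :=
      mul_le_mul_of_nonneg_right hLx1 (mul_nonneg h1θ.le hs0)
    have hCφ' : Cφ ≤ L x * ((1 - θ) * s) / 2 := by
      rw [div_le_iff₀ h1θ] at hc2
      linarith [h6]
    have hP : 0 < L x * ((1 - θ) * s) / 2 := by
      have h7 : 0 < (1 - θ) * s := mul_pos h1θ (by linarith)
      linarith
    have hφge : L x * ((1 - θ) * s) / 2 ≤ φ t := by linarith
    have hφpos : 0 < φ t := lt_of_lt_of_le hP hφge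
    have hlogφge : Real.log (L x) + (Real.log (1 - θ) + Real.log s) - Real.log 2
        ≤ Real.log (φ t) := by
      have h := Real.log_le_log hP hφge
      rw [div_eq_mul_inv, Real.log_mul (by positivity) (by positivity),
        Real.log_mul (by positivity) (by positivity),
        Real.log_mul h1θ.ne' (by positivity), Real.log_inv] at h
      linarith
    -- combine
    have hllκ : Real.log 2 - Real.log (1 - θ) ≤ (1 - κ) * Real.log s := by
      have : (Real.log 2 - Real.log (1 - θ)) / (1 - κ) ≤ Real.log s := hc3
      rw [div_le_iff₀ (by linarith : (0:ℝ) < 1 - κ)] at this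
      linarith
    have hGnn : 0 ≤ Real.log (L t) := Real.log_nonneg hLt1
    have hllg : 1 ≤ Real.log s := hll1
    have hD : κ * (Real.log (L t) + Real.log s) ≤ Real.log (φ t) := by
      linarith [hkey'', hlogφge, hllκ]
    have hNpos : 0 < Real.log (L t) + Real.log s := by linarith
    have hDpos : 0 < Real.log (φ t) :=
      lt_of_lt_of_le (mul_pos hκ0 hNpos) hD
    have hNmul : Real.log (L t * s) = Real.log (L t) + Real.log s := by
      rw [Real.log_mul (by linarith) (ne_of_gt (by linarith))]
    rw [hNmul, div_le_div_iff₀ hDpos hκ0, one_mul, mul_comm]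
    exact hD
  -- final assembly
  rw [Metric.tendsto_nhds]
  intro ε hε
  have hε2 : (0:ℝ) < 1 + ε/2 := by linarith
  set κ : ℝ := (1 + ε/2)⁻¹ with hκdef
  have hκ0 : 0 < κ := by positivity
  have hκ1 : κ < 1 := by
    rw [hκdef, inv_lt_one_iff₀]
    right; linarith
  have hκinv : 1/κ = 1 + ε/2 := by
    rw [hκdef, one_div, inv_inv]
  filter_upwards [ev1, ev2 κ hκ0 hκ1] with t h1 h2
  rw [Real.dist_eq, abs_of_nonneg (by linarith : (0:ℝ) ≤
    Real.log (L t * Real.log t) / Real.log (φ t) - 1)]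
  rw [hκinv] at h2
  linarith
end

section
/- Let L : ℝ → ℝ be differentiable, increasing to infinity, slowly varying, with x·L'(x)/L(x) eventually decreasing, and let φ(t) = ∫_1^t L(u)/u du. Then φ(t) ≤ L(t)·log t for all t ≥ e, and L(t)·log t ≤ φ(t)·(1 + log L(t)) for t large. -/
open Filter Real

set_option maxHeartbeats 1000000 in
theorem stmt1 (L : ℝ → ℝ)
    (hdiff : DifferentiableOn ℝ L (Set.Ici 1))
    (hmono : MonotoneOn L (Set.Ici 1))
    (htop : Tendsto L atTop atTop)
    (hsv : SlowlyVarying L)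
    (hdec : ∃ x₀ : ℝ, AntitoneOn (fun x => x * deriv L x / L x) (Set.Ici x₀))
    (φ : ℝ → ℝ) (hφ : ∀ t, φ t = ∫ u in (1:ℝ)..t, L u / u) :
    (∀ t, Real.exp 1 ≤ t → φ t ≤ L t * Real.log t) ∧
      (∀ᶠ t in atTop, L t * Real.log t ≤ φ t * (1 + Real.log (L t))) := by
  have he1 : (1:ℝ) < Real.exp 1 := by
    have := Real.add_one_le_exp 1; linarith
  have hLc : ContinuousOn L (Set.Ici 1) := hdiff.continuousOn
  have hfc : ContinuousOn (fun u => L u / u) (Set.Ici 1) := by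
    apply hLc.div (continuousOn_id)
    intro x hx; exact ne_of_gt (lt_of_lt_of_le one_pos hx)
  have hInt : ∀ a b : ℝ, 1 ≤ a → 1 ≤ b →
      IntervalIntegrable (fun u => L u / u) MeasureTheory.volume a b := by
    intro a b ha hb
    exact (hfc.mono (fun x hx => le_trans (le_min ha hb) hx.1)).intervalIntegrable
  -- Part 1
  have part1 : ∀ t, Real.exp 1 ≤ t → φ t ≤ L t * Real.log t := by
    intro t ht
    have ht1 : (1:ℝ) ≤ t := le_of_lt (lt_of_lt_of_le he1 ht)
    rw [hφ]
    have h2 : (∫ u in (1:ℝ)..t, L u / u) ≤ ∫ u in (1:ℝ)..t, L t / u := by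
      apply intervalIntegral.integral_mono_on ht1 (hInt 1 t le_rfl ht1)
      · apply ContinuousOn.intervalIntegrable
        apply continuousOn_const.div continuousOn_id
        intro x hx
        rw [Set.uIcc_of_le ht1] at hx
        exact ne_of_gt (lt_of_lt_of_le one_pos hx.1)
      · intro x hx
        have hx0 : (0:ℝ) < x := lt_of_lt_of_le one_pos hx.1
        gcongr
        exact hmono hx.1 (le_trans hx.1 hx.2) hx.2
    calc (∫ u in (1:ℝ)..t, L u / u) ≤ ∫ u in (1:ℝ)..t, L t / u := h2
      _ = L t * Real.log t := by
          simp_rw [div_eq_mul_inv]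
          rw [intervalIntegral.integral_const_mul, integral_inv (by
            intro h; rw [Set.uIcc_of_le ht1] at h; exact absurd h.1 (by norm_num)), div_one]
  refine ⟨part1, ?_⟩
  -- Setup
  obtain ⟨x₀', hanti'⟩ := hdec
  obtain ⟨x₁, hx₁⟩ := eventually_atTop.mp (htop.eventually_ge_atTop (Real.exp 1))
  set x₀ : ℝ := max x₀' (max x₁ (Real.exp 1)) with hx₀def
  have hx₀e : Real.exp 1 ≤ x₀ := le_trans (le_max_right _ _) (le_max_right _ _)
  have hx₀1 : 1 < x₀ := lt_of_lt_of_le he1 hx₀e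
  have hposE : ∀ y, x₀ ≤ y → Real.exp 1 ≤ L y := by
    intro y hy
    exact hx₁ y (le_trans (le_trans (le_max_left _ _) (le_max_right _ _)) hy)
  have hpos : ∀ y, x₀ ≤ y → 0 < L y :=
    fun y hy => lt_of_lt_of_le (lt_trans one_pos he1) (hposE y hy)
  have hanti : AntitoneOn (fun x => x * deriv L x / L x) (Set.Ici x₀) :=
    hanti'.mono (Set.Ici_subset_Ici.mpr (le_max_left _ _))
  have hlLx₀ : 1 ≤ Real.log (L x₀) := by
    calc (1:ℝ) = Real.log (Real.exp 1) := (Real.log_exp 1).symm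
      _ ≤ Real.log (L x₀) := Real.log_le_log (Real.exp_pos 1) (hposE x₀ le_rfl)
  have hlx₀ : 1 ≤ Real.log x₀ := by
    calc (1:ℝ) = Real.log (Real.exp 1) := (Real.log_exp 1).symm
      _ ≤ Real.log x₀ := Real.log_le_log (Real.exp_pos 1) hx₀e
  set δ : ℝ := Real.log (L x₀) / (2 * Real.log x₀) with hδdef
  set c₀ : ℝ := Real.log (L x₀) / 2 with hc₀def
  have hδ0 : 0 < δ := by
    apply div_pos (by linarith) (by linarith)
  have hc₀0 : 0 < c₀ := by
    apply div_pos (by linarith) (by norm_num)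
  have hδx : δ * Real.log x₀ = c₀ := by
    rw [hδdef, hc₀def]
    field_simp
  -- key monotonicity lemma
  have hkey : ∀ a b : ℝ, x₀ ≤ a → a ≤ b →
      Real.log (L a) - (b * deriv L b / L b) * Real.log a ≤
        Real.log (L b) - (b * deriv L b / L b) * Real.log b := by
    intro a b ha hab
    set m := b * deriv L b / L b with hm
    have hD : ∀ y ∈ Set.Icc a b, (1:ℝ) < y := fun y hy => lt_of_lt_of_le hx₀1 (le_trans ha hy.1)
    have hmem : ∀ y ∈ Set.Icc a b, x₀ ≤ y := fun y hy => le_trans ha hy.1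
    have hder : ∀ y ∈ Set.Ioo a b, HasDerivAt (fun z => Real.log (L z) - m * Real.log z)
        ((L y)⁻¹ * deriv L y - m * y⁻¹) y := by
      intro y hy
      have hy1 : (1:ℝ) < y := hD y (Set.mem_Icc_of_Ioo hy)
      have hy0 : y ≠ 0 := by linarith
      have hLy : 0 < L y := hpos y (hmem y (Set.mem_Icc_of_Ioo hy))
      have hLd : HasDerivAt L (deriv L y) y :=
        (hdiff.differentiableAt (Ici_mem_nhds hy1)).hasDerivAt
      exact ((Real.hasDerivAt_log hLy.ne').comp y hLd).sub ((Real.hasDerivAt_log hy0).const_mul m)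
    have hmono2 : MonotoneOn (fun z => Real.log (L z) - m * Real.log z) (Set.Icc a b) := by
      apply monotoneOn_of_deriv_nonneg (convex_Icc a b)
      · apply ContinuousOn.sub
        · apply ContinuousOn.log
          · exact (hdiff.continuousOn).mono (fun y hy => le_of_lt (hD y hy))
          · exact fun y hy => (hpos y (hmem y hy)).ne'
        · exact continuousOn_const.mul (Real.continuousOn_log.mono
            (fun y hy => ne_of_gt (lt_trans one_pos (hD y hy))))
      · rw [interior_Icc]
        exact fun y hy => (hder y hy).differentiableAt.differentiableWithinAt
      · rw [interior_Icc]
        intro y hy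
        rw [(hder y hy).deriv]
        have hy1 : (1:ℝ) < y := hD y (Set.mem_Icc_of_Ioo hy)
        have hLy : 0 < L y := hpos y (hmem y (Set.mem_Icc_of_Ioo hy))
        have hby : x₀ ≤ b := le_trans ha hab
        have hε : m ≤ y * deriv L y / L y :=
          hanti (hmem y (Set.mem_Icc_of_Ioo hy)) hby (le_of_lt hy.2)
        have hy0 : (0:ℝ) < y := lt_trans one_pos hy1
        have step : m * y⁻¹ ≤ (y * deriv L y / L y) * y⁻¹ := by gcongr
        have heq : (y * deriv L y / L y) * y⁻¹ = (L y)⁻¹ * deriv L y := by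
          field_simp
        linarith [step, heq ▸ step]
    have := hmono2 (Set.mem_Icc.mpr ⟨le_refl a, hab⟩) (Set.mem_Icc.mpr ⟨hab, le_refl b⟩) hab
    simpa using this
  -- nonnegative derivative of L
  have hd0 : ∀ t : ℝ, 1 < t → 0 ≤ deriv L t := by
    intro t ht
    have hLd : HasDerivAt L (deriv L t) t :=
      (hdiff.differentiableAt (Ici_mem_nhds ht)).hasDerivAt
    have hs : Tendsto (slope L t) (nhdsWithin t (Set.Ioi t)) (nhds (deriv L t)) :=
      (hasDerivAt_iff_tendsto_slope.mp hLd).mono_left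
        (nhdsWithin_mono t (fun y hy => ne_of_gt hy))
    refine ge_of_tendsto hs ?_
    filter_upwards [self_mem_nhdsWithin] with y (hy : t < y)
    have h1 : L t ≤ L y := hmono (le_of_lt ht) (le_of_lt (lt_trans ht hy)) (le_of_lt hy)
    have hyt : 0 < y - t := sub_pos.mpr hy
    rw [slope_def_field, div_eq_mul_inv]
    have : (0:ℝ) ≤ L y - L t := by linarith
    positivity
  -- eventually small epsilon
  have hε : ∀ᶠ t in atTop, t * deriv L t / L t ≤ δ := by
    have h2 : Tendsto (fun x => Real.log (L (2 * x) / L x)) atTop (nhds 0) := by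
      have hT := hsv 2 two_pos
      have hc : ContinuousAt Real.log 1 := Real.continuousAt_log one_ne_zero
      simpa [Function.comp_def] using hc.tendsto.comp hT
    have hev : ∀ᶠ x in atTop, Real.log (L (2 * x) / L x) < δ * Real.log 2 := by
      apply h2.eventually_lt_const
      have : (0:ℝ) < Real.log 2 := Real.log_pos one_lt_two
      positivity
    have hx : ∀ᶠ x in atTop, (2:ℝ) * x * deriv L (2 * x) / L (2 * x) ≤ δ := by
      filter_upwards [hev, eventually_ge_atTop x₀, eventually_gt_atTop (0:ℝ)] with x h1 h2' h3
      have hxx : x ≤ 2 * x := by linarith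
      have hk := hkey x (2 * x) h2' hxx
      have hL1 : 0 < L x := hpos x h2'
      have hL2 : 0 < L (2 * x) := hpos (2 * x) (le_trans h2' hxx)
      rw [Real.log_div hL2.ne' hL1.ne'] at h1
      have hlog2 : Real.log (2 * x) = Real.log 2 + Real.log x := Real.log_mul two_ne_zero h3.ne'
      set m := 2 * x * deriv L (2 * x) / L (2 * x) with hm
      rw [hlog2, mul_add] at hk
      have hm2 : m * Real.log 2 < δ * Real.log 2 := by linarith
      have hl2 : (0:ℝ) < Real.log 2 := Real.log_pos one_lt_two
      exact le_of_lt (lt_of_mul_lt_mul_right hm2 hl2.le)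
    have hhalf : Tendsto (fun t : ℝ => t / 2) atTop atTop :=
      tendsto_id.atTop_div_const two_pos
    filter_upwards [hhalf.eventually hx] with t ht
    have h22 : (2:ℝ) * (t / 2) = t := by ring
    rwa [h22] at ht
  -- eventually nonnegative φ
  have hφ0 : ∀ᶠ t in atTop, 0 ≤ φ t := by
    filter_upwards [eventually_ge_atTop (max x₀ (Real.exp (Real.log x₀ - φ x₀)))] with t ht
    have htx : x₀ ≤ t := le_trans (le_max_left _ _) ht
    have ht1 : (1:ℝ) ≤ t := le_trans (le_of_lt hx₀1) htx
    have hsplit : φ x₀ + (∫ u in x₀..t, L u / u) = φ t := by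
      rw [hφ, hφ]
      exact intervalIntegral.integral_add_adjacent_intervals
        (hInt 1 x₀ le_rfl (le_of_lt hx₀1)) (hInt x₀ t (le_of_lt hx₀1) ht1)
    have hmono3 : (∫ u in x₀..t, (1:ℝ) / u) ≤ ∫ u in x₀..t, L u / u := by
      apply intervalIntegral.integral_mono_on htx
      · apply ContinuousOn.intervalIntegrable
        apply continuousOn_const.div continuousOn_id
        intro y hy
        rw [Set.uIcc_of_le htx] at hy
        exact ne_of_gt (lt_of_lt_of_le (lt_trans one_pos hx₀1) hy.1)
      · exact hInt x₀ t (le_of_lt hx₀1) ht1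
      · intro y hy
        have hy0 : 0 < y := lt_of_lt_of_le (lt_trans one_pos hx₀1) hy.1
        gcongr
        exact le_trans (le_of_lt he1) (hposE y hy.1)
    have hval : (∫ u in x₀..t, (1:ℝ) / u) = Real.log t - Real.log x₀ := by
      rw [integral_one_div (by
        intro h; rw [Set.uIcc_of_le htx] at h
        exact absurd h.1 (by push_neg; exact lt_trans one_pos hx₀1)),
        Real.log_div (by positivity) (by positivity)]
    have hlog : Real.log x₀ - φ x₀ ≤ Real.log t := by
      have hh := le_trans (le_max_right _ _) ht
      calc Real.log x₀ - φ x₀ = Real.log (Real.exp (Real.log x₀ - φ x₀)) := (Real.log_exp _).symm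
        _ ≤ Real.log t := Real.log_le_log (Real.exp_pos _) hh
    linarith [hsplit, hmono3, hval ▸ hmono3]
  -- choose T₀
  obtain ⟨T₀', hT₀'⟩ := eventually_atTop.mp (hε.and hφ0)
  set T₀ : ℝ := max T₀' x₀ with hT₀def
  have hT₀x₀ : x₀ ≤ T₀ := le_max_right _ _
  have hT₀1 : 1 < T₀ := lt_of_lt_of_le hx₀1 hT₀x₀
  -- derivative of φ
  have hφd : ∀ t : ℝ, 1 < t → HasDerivAt φ (L t / t) t := by
    intro t ht
    have hmain : HasDerivAt (fun s => ∫ u in (1:ℝ)..s, L u / u) (L t / t) t := by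
      exact intervalIntegral.integral_hasDerivAt_right (hInt 1 t le_rfl ht.le)
        (ContinuousOn.stronglyMeasurableAtFilter isOpen_Ioi
          (hfc.mono Set.Ioi_subset_Ici_self) t ht)
        (hfc.continuousAt (Ici_mem_nhds ht))
    rw [funext hφ]
    exact hmain
  -- derivative of the auxiliary function Ψ with nonnegativity on [T₀, ∞)
  have hDer : ∀ t : ℝ, T₀ ≤ t → ∃ d : ℝ,
      HasDerivAt (fun s => φ s * (1 + Real.log (L s)) - L s * Real.log s - c₀ * Real.log s) d t
        ∧ 0 ≤ d := by
    intro t ht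
    have htx₀ : x₀ ≤ t := le_trans hT₀x₀ ht
    have ht1 : (1:ℝ) < t := lt_of_lt_of_le hT₀1 ht
    have ht0 : (0:ℝ) < t := lt_trans one_pos ht1
    have hLt : 0 < L t := hpos t htx₀
    have hLd : HasDerivAt L (deriv L t) t :=
      (hdiff.differentiableAt (Ici_mem_nhds ht1)).hasDerivAt
    have hlogLd : HasDerivAt (fun y => Real.log (L y)) ((L t)⁻¹ * deriv L t) t :=
      (Real.hasDerivAt_log hLt.ne').comp t hLd
    have hlt : HasDerivAt Real.log t⁻¹ t := Real.hasDerivAt_log ht0.ne'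
    have h1 : HasDerivAt (fun s => φ s * (1 + Real.log (L s)))
        (L t / t * (1 + Real.log (L t)) + φ t * ((L t)⁻¹ * deriv L t)) t := by
      have : HasDerivAt (fun s => φ s * (1 + Real.log (L s)))
          (L t / t * (1 + Real.log (L t)) + φ t * (0 + (L t)⁻¹ * deriv L t)) t :=
        (hφd t ht1).mul ((hasDerivAt_const t (1:ℝ)).add hlogLd)
      convert this using 1
      ring
    have h2 : HasDerivAt (fun s => L s * Real.log s)
        (deriv L t * Real.log t + L t * t⁻¹) t := hLd.mul hlt
    have h3 : HasDerivAt (fun s => c₀ * Real.log s) (c₀ * t⁻¹) t := hlt.const_mul c₀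
    refine ⟨_, (h1.sub h2).sub h3, ?_⟩
    -- nonnegativity
    obtain ⟨hεt, hφt⟩ := hT₀' t (le_trans (le_max_left _ _) ht)
    have hεnn : 0 ≤ t * deriv L t / L t := by
      have := hd0 t ht1
      positivity
    have hk := hkey x₀ t le_rfl htx₀
    have hc : c₀ + (t * deriv L t / L t) * Real.log t ≤ Real.log (L t) := by
      have h5 : (t * deriv L t / L t) * Real.log x₀ ≤ δ * Real.log x₀ := by
        apply mul_le_mul_of_nonneg_right hεt (by linarith)
      rw [hδx] at h5
      linarith [hk]
    have hl1 : 1 ≤ L t := le_trans (le_of_lt he1) (hposE t htx₀)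
    have hp1 : φ t ≤ L t * Real.log t := part1 t (le_trans hx₀e htx₀)
    -- arithmetic
    set l := L t with hl
    set d := deriv L t with hd
    set p := φ t with hp
    set lt := Real.log t with hltdef
    set ll := Real.log l with hlldef
    have hl0 : (0:ℝ) < l := hLt
    have key2 : c₀ * l + t * d * lt ≤ l * ll := by
      have hmm := mul_le_mul_of_nonneg_right hc (le_of_lt hl0)
      calc c₀ * l + t * d * lt = (c₀ + (t * d / l) * lt) * l := by field_simp
        _ ≤ ll * l := hmm
        _ = l * ll := by ring
    have hppos : (0:ℝ) < t * l := mul_pos ht0 hl0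
    have hdnn : 0 ≤ d := hd0 t ht1
    rw [← mul_nonneg_iff_of_pos_left hppos]
    have hexp : t * l * (L t / t * (1 + Real.log (L t)) + φ t * ((L t)⁻¹ * deriv L t)
          - (deriv L t * Real.log t + L t * t⁻¹) - c₀ * t⁻¹)
        = l * l * ll + t * d * p - t * d * l * lt - c₀ * l + (l * l - l * l) := by
      rw [← hl, ← hd, ← hp, ← hltdef, ← hlldef]
      field_simp
      ring
    rw [hexp]
    have k1 : 0 ≤ t * d * p := mul_nonneg (mul_nonneg (le_of_lt ht0) hdnn) hφt
    have k2 : (c₀ * l + t * d * lt) * l ≤ l * ll * l :=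
      mul_le_mul_of_nonneg_right key2 (le_of_lt hl0)
    have k3 : 0 ≤ c₀ * l * (l - 1) :=
      mul_nonneg (mul_nonneg (le_of_lt hc₀0) (le_of_lt hl0)) (sub_nonneg.mpr hl1)
    nlinarith [k1, k2, k3]
  -- Ψ is monotone on [T₀, ∞)
  have hΨmono : MonotoneOn
      (fun s => φ s * (1 + Real.log (L s)) - L s * Real.log s - c₀ * Real.log s)
      (Set.Ici T₀) := by
    apply monotoneOn_of_deriv_nonneg (convex_Ici T₀)
    · intro x hx
      obtain ⟨dd, hdd, _⟩ := hDer x hx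
      exact hdd.continuousAt.continuousWithinAt
    · rw [interior_Ici]
      intro x hx
      obtain ⟨dd, hdd, _⟩ := hDer x (le_of_lt hx)
      exact hdd.differentiableAt.differentiableWithinAt
    · rw [interior_Ici]
      intro x hx
      obtain ⟨dd, hdd, hdd0⟩ := hDer x (le_of_lt hx)
      rw [hdd.deriv]
      exact hdd0
  -- conclusion
  set A : ℝ := (L T₀ * Real.log T₀ - φ T₀ * (1 + Real.log (L T₀))) / c₀ with hAdef
  filter_upwards [eventually_ge_atTop (max T₀ (Real.exp (Real.log T₀ + A)))] with t ht
  have htT₀ : T₀ ≤ t := le_trans (le_max_left _ _) ht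
  have hΨ := hΨmono (Set.mem_Ici.mpr (le_refl T₀)) (Set.mem_Ici.mpr htT₀) htT₀
  simp only at hΨ
  have hlogt : Real.log T₀ + A ≤ Real.log t := by
    have hh := le_trans (le_max_right _ _) ht
    calc Real.log T₀ + A = Real.log (Real.exp (Real.log T₀ + A)) := (Real.log_exp _).symm
      _ ≤ Real.log t := Real.log_le_log (Real.exp_pos _) hh
  have hcA : c₀ * A = L T₀ * Real.log T₀ - φ T₀ * (1 + Real.log (L T₀)) := by
    rw [hAdef]
    field_simp
  have hmul := mul_le_mul_of_nonneg_left hlogt (le_of_lt hc₀0)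
  rw [mul_add, hcA] at hmul
  linarith [hΨ, hmul]
end

section
/- Let p > 0 and f(x) = (p+1)·x·(log log x)/(log x)^p for large x. Then any (asymptotic) inverse f^{-1} satisfies f^{-1}(y) ~ y·(log y)^p /((p+1)·log log y) as y → ∞, i.e., f applied to y·(log y)^p/((p+1) log log y) is asymptotically equal to y. -/
open Filter Real

theorem stmt7 (p : ℝ) (hp : 0 < p) (f : ℝ → ℝ)
    (hf : ∀ᶠ x in atTop,
      f x = (p + 1) * x * Real.log (Real.log x) / (Real.log x) ^ p) :
    Tendsto
      (fun y => f (y * (Real.log y) ^ p / ((p + 1) * Real.log (Real.log y))) / y)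
      atTop (nhds 1) := by
  have hp1 : (0:ℝ) < p + 1 := by linarith
  set g : ℝ → ℝ := fun y => y * (Real.log y) ^ p / ((p + 1) * Real.log (Real.log y)) with hgdef
  have hl : Tendsto Real.log atTop atTop := Real.tendsto_log_atTop
  have hll : Tendsto (fun y => Real.log (Real.log y)) atTop atTop := hl.comp hl
  have hq : Tendsto (fun t : ℝ => Real.log t / t) atTop (nhds 0) :=
    Real.isLittleO_log_id_atTop.tendsto_div_nhds_zero
  have h2 : Tendsto (fun y => Real.log (Real.log y) / Real.log y) atTop (nhds 0) := hq.comp hl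
  have h3 : Tendsto (fun y => Real.log (Real.log (Real.log y)) / Real.log (Real.log y))
      atTop (nhds 0) := hq.comp hll
  have hD : Tendsto (fun y => (p + 1) * Real.log (Real.log y) / (Real.log y) ^ p)
      atTop (nhds 0) := by
    have := ((isLittleO_log_rpow_atTop hp).const_mul_left (p + 1)).tendsto_div_nhds_zero
    exact this.comp hl
  -- base eventual facts
  have hbase : ∀ᶠ y in atTop, 0 < y ∧ 1 < Real.log y ∧ 1 < Real.log (Real.log y) ∧
      (p + 1) * Real.log (Real.log y) < (Real.log y) ^ p := by
    have e1 : ∀ᶠ y : ℝ in atTop, 0 < y := eventually_gt_atTop 0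
    have e2 : ∀ᶠ y in atTop, 1 < Real.log y := hl.eventually_gt_atTop 1
    have e3 : ∀ᶠ y in atTop, 1 < Real.log (Real.log y) := hll.eventually_gt_atTop 1
    have e4 : ∀ᶠ y in atTop, (p + 1) * Real.log (Real.log y) / (Real.log y) ^ p < 1 :=
      hD.eventually (eventually_lt_nhds zero_lt_one)
    filter_upwards [e1, e2, e3, e4] with y h1 h2' h3' h4'
    refine ⟨h1, h2', h3', ?_⟩
    have hpos : (0:ℝ) < (Real.log y) ^ p := Real.rpow_pos_of_pos (by linarith) p
    exact (div_lt_one hpos).mp h4'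
  -- g tends to atTop
  have hgy : ∀ᶠ y in atTop, y ≤ g y := by
    filter_upwards [hbase] with y ⟨h1, h2', h3', h4'⟩
    rw [hgdef]
    have hden : 0 < (p + 1) * Real.log (Real.log y) := by positivity
    rw [le_div_iff₀ hden]
    calc y * ((p + 1) * Real.log (Real.log y)) ≤ y * (Real.log y) ^ p := by
          exact mul_le_mul_of_nonneg_left h4'.le h1.le
      _ = y * (Real.log y) ^ p := rfl
  have hgtop : Tendsto g atTop atTop := tendsto_atTop_mono' atTop hgy tendsto_id
  -- log of g
  have hlogg : ∀ᶠ y in atTop, Real.log (g y) =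
      Real.log y + p * Real.log (Real.log y)
        - (Real.log (p + 1) + Real.log (Real.log (Real.log y))) := by
    filter_upwards [hbase] with y ⟨h1, h2', h3', h4'⟩
    have hly : 0 < Real.log y := by linarith
    have hlly : 0 < Real.log (Real.log y) := by linarith
    have hnum : y * (Real.log y) ^ p ≠ 0 := by positivity
    rw [hgdef]
    rw [Real.log_div hnum (by positivity), Real.log_mul h1.ne' (by positivity),
      Real.log_mul hp1.ne' hlly.ne', Real.log_rpow hly]
  set L : ℝ → ℝ := fun y => Real.log (g y) / Real.log y with hLdef
  have hL : Tendsto L atTop (nhds 1) := by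
    have heq : ∀ᶠ y in atTop, L y =
        1 + p * (Real.log (Real.log y) / Real.log y) - Real.log (p + 1) / Real.log y
          - (Real.log (Real.log (Real.log y)) / Real.log (Real.log y))
              * (Real.log (Real.log y) / Real.log y) := by
      filter_upwards [hbase, hlogg] with y ⟨h1, h2', h3', h4'⟩ hlg
      have hly : Real.log y ≠ 0 := by linarith
      have hlly : Real.log (Real.log y) ≠ 0 := by linarith
      rw [hLdef]; simp only [hlg]; field_simp; ring
    have hlim : Tendsto (fun y =>
        1 + p * (Real.log (Real.log y) / Real.log y) - Real.log (p + 1) / Real.log y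
          - (Real.log (Real.log (Real.log y)) / Real.log (Real.log y))
              * (Real.log (Real.log y) / Real.log y)) atTop
        (nhds (1 + p * 0 - 0 - 0 * 0)) := by
      exact ((tendsto_const_nhds.add (h2.const_mul p)).sub
        (tendsto_const_nhds.div_atTop hl)).sub (h3.mul h2)
    simpa using hlim.congr' (heq.mono fun y h => h.symm)
  -- ratio of logs
  have R1 : Tendsto (fun y => Real.log y / Real.log (g y)) atTop (nhds 1) := by
    have := hL.inv₀ one_ne_zero
    simp only [hLdef, inv_div, inv_one] at this
    exact this
  -- L eventually positive and log g positive
  have hLpos : ∀ᶠ y in atTop, 0 < L y :=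
    hL.eventually (eventually_gt_nhds zero_lt_one)
  have hlogL : Tendsto (fun y => Real.log (L y)) atTop (nhds 0) := by
    have : Tendsto (fun y => Real.log (L y)) atTop (nhds (Real.log 1)) :=
      ((Real.continuousAt_log one_ne_zero).tendsto).comp hL
    simpa using this
  -- loglog of g
  have hllg : ∀ᶠ y in atTop, Real.log (Real.log (g y)) = Real.log (L y) + Real.log (Real.log y) := by
    filter_upwards [hbase, hLpos] with y ⟨h1, h2', h3', h4'⟩ hLp
    have hly : 0 < Real.log y := by linarith
    have : Real.log (g y) = L y * Real.log y := by
      rw [hLdef]; field_simp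
    rw [this, Real.log_mul hLp.ne' hly.ne']
  have R2 : Tendsto (fun y => Real.log (Real.log (g y)) / Real.log (Real.log y))
      atTop (nhds 1) := by
    have heq : ∀ᶠ y in atTop, Real.log (Real.log (g y)) / Real.log (Real.log y) =
        Real.log (L y) / Real.log (Real.log y) + 1 := by
      filter_upwards [hbase, hllg] with y ⟨h1, h2', h3', h4'⟩ h
      have hlly : Real.log (Real.log y) ≠ 0 := by linarith
      rw [h, add_div, div_self hlly]
    have hlim : Tendsto (fun y => Real.log (L y) / Real.log (Real.log y) + 1) atTop
        (nhds (0 + 1)) := (hlogL.div_atTop hll).add tendsto_const_nhds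
    simpa using hlim.congr' (heq.mono fun y h => h.symm)
  -- final rewrite
  have hfg : ∀ᶠ y in atTop, f (g y) / y =
      (Real.log y / Real.log (g y)) ^ p
        * (Real.log (Real.log (g y)) / Real.log (Real.log y)) := by
    have hfgv : ∀ᶠ y in atTop, f (g y) =
        (p + 1) * g y * Real.log (Real.log (g y)) / (Real.log (g y)) ^ p :=
      hgtop.eventually hf
    have hlggpos : ∀ᶠ y in atTop, 1 < Real.log (g y) := (hl.comp hgtop).eventually_gt_atTop 1
    filter_upwards [hbase, hfgv, hlggpos] with y ⟨h1, h2', h3', h4'⟩ hv hlgg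
    have hly : 0 < Real.log y := by linarith
    have hlgg0 : 0 < Real.log (g y) := by linarith
    rw [hv, div_rpow hly.le hlgg0.le]
    have hlyp : ((Real.log y) : ℝ) ^ p ≠ 0 := (Real.rpow_pos_of_pos hly p).ne'
    have hlggp : (Real.log (g y)) ^ p ≠ 0 := (Real.rpow_pos_of_pos hlgg0 p).ne'
    have hlly : Real.log (Real.log y) ≠ 0 := by linarith
    rw [hgdef]
    field_simp
  have hfinal : Tendsto (fun y =>
      (Real.log y / Real.log (g y)) ^ p
        * (Real.log (Real.log (g y)) / Real.log (Real.log y))) atTop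
      (nhds ((1:ℝ) ^ p * 1)) :=
    (R1.rpow_const (Or.inl one_ne_zero)).mul R2
  rw [Real.one_rpow, one_mul] at hfinal
  exact hfinal.congr' (hfg.mono fun y h => h.symm)
end

section
/- Let X₁, …, X_n be independent symmetric real random variables with partial sum S_n = X₁ + ⋯ + X_n. Then for any x, y > 0: P(|S_n| > 2x + y) ≤ Σ_{k=1}^n P(|X_k| > y) + 4·(P(|S_n| > x))². -/
open MeasureTheory ProbabilityTheory Set

namespace Stmt10Aux

variable {Ω : Type*} [MeasurableSpace Ω] {P : Measure Ω} [IsProbabilityMeasure P]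
    {n : ℕ} {X : Fin n → Ω → ℝ}

/-- partial sum of the first `j` coordinates -/
def ps (j : ℕ) (v : Fin n → ℝ) : ℝ :=
  ∑ i ∈ Finset.univ.filter (fun i : Fin n => (i : ℕ) < j), v i

/-- sum of coordinates `≥ j` -/
def rs (j : ℕ) (v : Fin n → ℝ) : ℝ :=
  ∑ i ∈ Finset.univ.filter (fun i : Fin n => ¬ ((i : ℕ) < j)), v i

lemma measurable_ps (j : ℕ) : Measurable (ps (n := n) j) :=
  Finset.measurable_sum _ fun i _ => measurable_pi_apply i

lemma measurable_rs (j : ℕ) : Measurable (rs (n := n) j) :=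
  Finset.measurable_sum _ fun i _ => measurable_pi_apply i

lemma ps_zero (v : Fin n → ℝ) : ps 0 v = 0 := by simp [ps]

lemma ps_add_rs (j : ℕ) (v : Fin n → ℝ) : ps j v + rs j v = ∑ i, v i :=
  Finset.sum_filter_add_sum_filter_not _ _ _

lemma ps_succ (k : Fin n) (v : Fin n → ℝ) : ps ((k : ℕ) + 1) v = ps (k : ℕ) v + v k := by
  have h : Finset.univ.filter (fun i : Fin n => (i : ℕ) < (k : ℕ) + 1)
      = insert k (Finset.univ.filter (fun i : Fin n => (i : ℕ) < (k : ℕ))) := by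
    ext i
    simp only [Finset.mem_filter, Finset.mem_univ, true_and, Finset.mem_insert, Fin.ext_iff]
    omega
  rw [ps, h, Finset.sum_insert (by simp), ps, add_comm]

lemma ps_top (v : Fin n → ℝ) : ps n v = ∑ i, v i := by
  rw [ps]
  congr 1
  ext i
  simp [i.isLt]

lemma ps_congr {j : ℕ} {v w : Fin n → ℝ} (h : ∀ i : Fin n, (i : ℕ) < j → v i = w i) :
    ps j v = ps j w :=
  Finset.sum_congr rfl fun i hi => h i (by simpa using hi)

lemma rs_congr {j : ℕ} {v w : Fin n → ℝ} (h : ∀ i : Fin n, ¬ ((i : ℕ) < j) → v i = w i) :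
    rs j v = rs j w :=
  Finset.sum_congr rfl fun i hi => h i (by simpa using hi)

/-- sign-flip invariance of the joint law -/
lemma flip_map (hmeas : ∀ k, Measurable (X k))
    (hindep : iIndepFun X P)
    (hsymm : ∀ k, Measure.map (X k) P = Measure.map (fun ω => -(X k ω)) P)
    (s : Finset (Fin n)) :
    Measure.map (fun ω i => if i ∈ s then -(X i ω) else X i ω) P
      = Measure.map (fun ω i => X i ω) P := by
  set Y : Fin n → Ω → ℝ := fun i ω => if i ∈ s then -(X i ω) else X i ω with hY
  have hYmeas : ∀ i, Measurable (Y i) := by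
    intro i
    by_cases h : i ∈ s <;> simp only [hY, h, if_true, if_false]
    · exact (hmeas i).neg
    · exact hmeas i
  have hYindep : iIndepFun Y P := by
    have := hindep.comp (fun i (r : ℝ) => if i ∈ s then -r else r)
      (fun i => by by_cases h : i ∈ s <;> simp only [h, if_true, if_false]
                   exacts [measurable_neg, measurable_id])
    convert this using 1
    rfl
  have hYlaw : ∀ i, Measure.map (Y i) P = Measure.map (X i) P := by
    intro i
    by_cases h : i ∈ s <;> simp only [hY, h, if_true, if_false]
    · exact (hsymm i).symm
  have hVmeas : Measurable (fun ω (i : Fin n) => X i ω) :=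
    measurable_pi_lambda _ fun i => hmeas i
  have hWmeas : Measurable (fun ω (i : Fin n) => Y i ω) :=
    measurable_pi_lambda _ fun i => hYmeas i
  have : IsProbabilityMeasure (Measure.map (fun ω (i : Fin n) => Y i ω) P) :=
    Measure.isProbabilityMeasure_map hWmeas.aemeasurable
  refine ext_of_generate_finite _ generateFrom_pi.symm isPiSystem_pi ?_ ?_
  · rintro _ ⟨t, ht, rfl⟩
    have ht' : ∀ i, MeasurableSet (t i) := fun i => ht i (mem_univ i)
    rw [Measure.map_apply hWmeas (MeasurableSet.univ_pi ht'),
      Measure.map_apply hVmeas (MeasurableSet.univ_pi ht')]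
    have hpre : ∀ (Z : Fin n → Ω → ℝ),
        (fun ω (i : Fin n) => Z i ω) ⁻¹' (Set.pi univ t) = ⋂ i ∈ Finset.univ, Z i ⁻¹' t i := by
      intro Z
      ext ω
      simp [Set.mem_pi]
    rw [hpre Y, hpre X, hYindep.measure_inter_preimage_eq_mul Finset.univ (fun i _ => ht' i),
      hindep.measure_inter_preimage_eq_mul Finset.univ (fun i _ => ht' i)]
    refine Finset.prod_congr rfl fun i _ => ?_
    rw [← Measure.map_apply (hYmeas i) (ht' i), ← Measure.map_apply (hmeas i) (ht' i), hYlaw i]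
  · have : IsProbabilityMeasure (Measure.map (fun ω (i : Fin n) => X i ω) P) :=
      Measure.isProbabilityMeasure_map hVmeas.aemeasurable
    simp

end Stmt10Aux

open Stmt10Aux

theorem stmt10 {Ω : Type*} [MeasurableSpace Ω] (P : Measure Ω) [IsProbabilityMeasure P]
    (n : ℕ) (X : Fin n → Ω → ℝ) (hmeas : ∀ k, Measurable (X k))
    (hindep : iIndepFun X P)
    (hsymm : ∀ k, Measure.map (X k) P = Measure.map (fun ω => -(X k ω)) P)
    (x y : ℝ) (hx : 0 < x) (hy : 0 < y) :
    P {ω | 2 * x + y < |∑ k, X k ω|}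
      ≤ (∑ k, P {ω | y < |X k ω|}) + 4 * (P {ω | x < |∑ k, X k ω|}) ^ 2 := by
  classical
  set V : Ω → (Fin n → ℝ) := fun ω i => X i ω with hVdef
  have hVmeas : Measurable V := measurable_pi_lambda _ fun i => hmeas i
  set T : Set (Fin n → ℝ) := {v | x < |∑ i, v i|} with hTdef
  have hTmeas : MeasurableSet T :=
    measurableSet_lt measurable_const
      ((Finset.measurable_sum _ fun i _ => measurable_pi_apply i).abs)
  set A : Fin n → Set (Fin n → ℝ) :=
    fun k => {v | x < |ps ((k : ℕ) + 1) v| ∧ ∀ j ≤ (k : ℕ), |ps j v| ≤ x} with hAdef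
  have hAmeas : ∀ k, MeasurableSet (A k) := by
    intro k
    have : A k = {v | x < |ps ((k : ℕ) + 1) v|}
        ∩ ⋂ j, ⋂ (_ : j ≤ (k : ℕ)), {v | |ps j v| ≤ x} := by
      ext v
      simp [hAdef]
    rw [this]
    exact (measurableSet_lt measurable_const (measurable_ps _).abs).inter
      (MeasurableSet.iInter fun j => MeasurableSet.iInter fun _ =>
        measurableSet_le (measurable_ps _).abs measurable_const)
  set B : Fin n → Set (Fin n → ℝ) := fun k => {v | x < |rs ((k : ℕ) + 1) v|} with hBdef
  have hBmeas : ∀ k, MeasurableSet (B k) := fun k =>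
    measurableSet_lt measurable_const (measurable_rs _).abs
  -- pairwise disjointness of the A's
  have hdisjA : ∀ k l : Fin n, k ≠ l → Disjoint (A k) (A l) := by
    have key : ∀ k l : Fin n, (k : ℕ) < (l : ℕ) → Disjoint (A k) (A l) := by
      intro k l hkl
      rw [Set.disjoint_left]
      rintro v ⟨hv1, _⟩ ⟨_, hv2'⟩
      exact absurd (hv2' ((k : ℕ) + 1) (by omega)) (not_le.2 hv1)
    intro k l hkl
    rcases lt_or_gt_of_ne (fun h : (k : ℕ) = (l : ℕ) => hkl (Fin.ext h)) with h | h
    · exact key k l h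
    · exact (key l k h).symm
  -- coverage
  have hcover : ∀ v : Fin n → ℝ, x < |ps (n := n) n v| → ∃ k : Fin n, v ∈ A k := by
    intro v hv
    have hne : ∃ m, x < |ps (n := n) m v| := ⟨n, hv⟩
    set m := Nat.find hne with hm
    have hspec : x < |ps (n := n) m v| := Nat.find_spec hne
    have hmin : ∀ j < m, ¬ x < |ps (n := n) j v| := fun j hj => Nat.find_min hne hj
    have hm1 : 1 ≤ m := by
      rcases Nat.eq_zero_or_pos m with h0 | h0
      · rw [h0] at hspec
        rw [ps_zero] at hspec
        simp at hspec
        linarith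
      · exact h0
    have hmn : m ≤ n := Nat.find_min' hne hv
    have hmlt : m - 1 < n := by omega
    refine ⟨⟨m - 1, hmlt⟩, ?_, ?_⟩
    · simpa [Nat.sub_add_cancel hm1] using hspec
    · intro j hj
      simp only at hj
      exact not_lt.1 (hmin j (by omega))
  -- flip corollary
  have hflipP : ∀ (s : Finset (Fin n)) (C : Set (Fin n → ℝ)), MeasurableSet C →
      P ((fun ω i => if i ∈ s then -(X i ω) else X i ω) ⁻¹' C) = P (V ⁻¹' C) := by
    intro s C hC
    have hWmeas : Measurable (fun ω (i : Fin n) => if i ∈ s then -(X i ω) else X i ω) := by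
      refine measurable_pi_lambda _ fun i => ?_
      by_cases h : i ∈ s <;> simp only [h, if_true, if_false]
      · exact (hmeas i).neg
      · exact hmeas i
    rw [← Measure.map_apply hWmeas hC, ← Measure.map_apply hVmeas hC,
      flip_map hmeas hindep hsymm s]
  -- key inclusion
  have key1 : {ω | 2 * x + y < |∑ k, X k ω|}
      ⊆ (⋃ k, {ω | y < |X k ω|}) ∪ ⋃ k, V ⁻¹' (A k ∩ B k) := by
    intro ω hω
    simp only [mem_setOf_eq] at hω
    by_cases hb : ∃ k, y < |X k ω|
    · exact Or.inl (mem_iUnion.2 hb)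
    · push_neg at hb
      right
      have hVsum : ∑ i, V ω i = ∑ i, X i ω := rfl
      have hx' : x < |ps (n := n) n (V ω)| := by
        rw [ps_top, hVsum]; linarith
      obtain ⟨k, hk1, hk2⟩ := hcover _ hx'
      refine mem_iUnion.2 ⟨k, ⟨hk1, hk2⟩, ?_⟩
      show x < |rs ((k : ℕ) + 1) (V ω)|
      have h1 : ps ((k : ℕ) + 1) (V ω) + rs ((k : ℕ) + 1) (V ω) = ∑ i, X i ω := by
        rw [ps_add_rs, hVsum]
      have h2 : |ps ((k : ℕ) + 1) (V ω)| ≤ x + y := by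
        rw [ps_succ]
        calc |ps (k : ℕ) (V ω) + V ω k| ≤ |ps (k : ℕ) (V ω)| + |V ω k| := abs_add_le _ _
          _ ≤ x + y := add_le_add (hk2 _ le_rfl) (hb k)
      have h3 := abs_add_le (ps ((k : ℕ) + 1) (V ω)) (rs ((k : ℕ) + 1) (V ω))
      rw [h1] at h3
      linarith
  -- independence factorization
  have hfactor : ∀ k : Fin n, P (V ⁻¹' (A k ∩ B k)) = P (V ⁻¹' A k) * P (V ⁻¹' B k) := by
    intro k
    set S : Finset (Fin n) := Finset.univ.filter (fun i : Fin n => (i : ℕ) < (k : ℕ) + 1) with hS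
    set Tf : Finset (Fin n) :=
      Finset.univ.filter (fun i : Fin n => ¬ ((i : ℕ) < (k : ℕ) + 1)) with hTf
    have hST : Disjoint S Tf := by
      rw [Finset.disjoint_left]
      intro i hi hi'
      simp only [hS, hTf, Finset.mem_filter, Finset.mem_univ, true_and] at hi hi'
      exact hi' hi
    have hIF := hindep.indepFun_finset S Tf hST hmeas
    set e1 : (S → ℝ) → (Fin n → ℝ) := fun u i => if h : i ∈ S then u ⟨i, h⟩ else 0 with he1d
    set e2 : (Tf → ℝ) → (Fin n → ℝ) := fun u i => if h : i ∈ Tf then u ⟨i, h⟩ else 0 with he2d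
    have he1 : Measurable e1 := by
      refine measurable_pi_lambda _ fun i => ?_
      by_cases h : i ∈ S
      · simp only [he1d, dif_pos h]; exact measurable_pi_apply _
      · simp only [he1d, dif_neg h]; exact measurable_const
    have he2 : Measurable e2 := by
      refine measurable_pi_lambda _ fun i => ?_
      by_cases h : i ∈ Tf
      · simp only [he2d, dif_pos h]; exact measurable_pi_apply _
      · simp only [he2d, dif_neg h]; exact measurable_const
    have hIF2 := hIF.comp he1 he2
    have hA' : (e1 ∘ fun a (i : S) => X i a) ⁻¹' (A k) = V ⁻¹' (A k) := by
      ext ω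
      have hps : ∀ j ≤ (k : ℕ) + 1,
          ps j ((e1 ∘ fun a (i : S) => X i a) ω) = ps j (V ω) := by
        intro j hj
        apply ps_congr
        intro i hi
        have hiS : i ∈ S := by
          simp only [hS, Finset.mem_filter, Finset.mem_univ, true_and]; omega
        simp only [Function.comp_apply, he1d, dif_pos hiS]; rfl
      simp only [mem_preimage, hAdef, mem_setOf_eq]
      rw [hps _ le_rfl]
      constructor
      · rintro ⟨h1, h2⟩
        exact ⟨h1, fun j hj => by rw [← hps j (by omega)]; exact h2 j hj⟩
      · rintro ⟨h1, h2⟩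
        exact ⟨h1, fun j hj => by rw [hps j (by omega)]; exact h2 j hj⟩
    have hB' : (e2 ∘ fun a (i : Tf) => X i a) ⁻¹' (B k) = V ⁻¹' (B k) := by
      ext ω
      have hrs : rs ((k : ℕ) + 1) ((e2 ∘ fun a (i : Tf) => X i a) ω)
          = rs ((k : ℕ) + 1) (V ω) := by
        apply rs_congr
        intro i hi
        have hiT : i ∈ Tf := by
          simp only [hTf, Finset.mem_filter, Finset.mem_univ, true_and]; exact hi
        simp only [Function.comp_apply, he2d, dif_pos hiT]; rfl
      simp only [mem_preimage, hBdef, mem_setOf_eq, hrs]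
    calc P (V ⁻¹' (A k ∩ B k))
        = P ((e1 ∘ fun a (i : S) => X i a) ⁻¹' (A k)
            ∩ (e2 ∘ fun a (i : Tf) => X i a) ⁻¹' (B k)) := by
          rw [hA', hB', preimage_inter]
      _ = P ((e1 ∘ fun a (i : S) => X i a) ⁻¹' (A k))
            * P ((e2 ∘ fun a (i : Tf) => X i a) ⁻¹' (B k)) :=
          hIF2.measure_inter_preimage_eq_mul _ _ (hAmeas k) (hBmeas k)
      _ = P (V ⁻¹' A k) * P (V ⁻¹' B k) := by rw [hA', hB']
  -- reflection for B: P(V ∈ {x < |rs - ps|}) = P(V ∈ T)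
  have hreflB : ∀ k : Fin n,
      P (V ⁻¹' {v | x < |rs ((k : ℕ) + 1) v - ps ((k : ℕ) + 1) v|}) = P (V ⁻¹' T) := by
    intro k
    set s : Finset (Fin n) := Finset.univ.filter (fun i : Fin n => (i : ℕ) < (k : ℕ) + 1) with hs
    have h := hflipP s T hTmeas
    rw [← h]
    congr 1
    ext ω
    simp only [mem_preimage, hTdef, mem_setOf_eq]
    have hsum : ∑ i, (if i ∈ s then -(X i ω) else X i ω)
        = rs ((k : ℕ) + 1) (V ω) - ps ((k : ℕ) + 1) (V ω) := by
      have hsplit := Finset.sum_filter_add_sum_filter_not Finset.univ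
        (fun i : Fin n => (i : ℕ) < (k : ℕ) + 1)
        (fun i => if i ∈ s then -(X i ω) else X i ω)
      have h1 : ∑ i ∈ Finset.univ.filter (fun i : Fin n => (i : ℕ) < (k : ℕ) + 1),
          (if i ∈ s then -(X i ω) else X i ω) = -(ps ((k : ℕ) + 1) (V ω)) := by
        rw [ps, ← Finset.sum_neg_distrib]
        refine Finset.sum_congr rfl fun i hi => ?_
        rw [if_pos (by rwa [hs])]
      have h2 : ∑ i ∈ Finset.univ.filter (fun i : Fin n => ¬ ((i : ℕ) < (k : ℕ) + 1)),
          (if i ∈ s then -(X i ω) else X i ω) = rs ((k : ℕ) + 1) (V ω) := by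
        rw [rs]
        refine Finset.sum_congr rfl fun i hi => ?_
        have hi' : i ∉ s := by
          simp only [hs, Finset.mem_filter, Finset.mem_univ, true_and] at hi ⊢
          exact hi
        rw [if_neg hi']
      rw [← hsplit, h1, h2]
      ring
    rw [hsum]
  -- reflection for Lévy: P(V ∈ A k ∩ {x < |ps - rs|}) = P(V ∈ A k ∩ T)
  have hreflA : ∀ k : Fin n,
      P (V ⁻¹' (A k ∩ {v | x < |ps ((k : ℕ) + 1) v - rs ((k : ℕ) + 1) v|}))
        = P (V ⁻¹' (A k ∩ T)) := by
    intro k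
    set s : Finset (Fin n) :=
      Finset.univ.filter (fun i : Fin n => ¬ ((i : ℕ) < (k : ℕ) + 1)) with hs
    have h := hflipP s (A k ∩ T) ((hAmeas k).inter hTmeas)
    rw [← h]
    congr 1
    ext ω
    have hps : ∀ j ≤ (k : ℕ) + 1,
        ps j (fun i => if i ∈ s then -(X i ω) else X i ω) = ps j (V ω) := by
      intro j hj
      apply ps_congr
      intro i hi
      have hi' : i ∉ s := by
        simp only [hs, Finset.mem_filter, Finset.mem_univ, true_and, not_not]
        omega
      rw [if_neg hi']
    have hsum : ∑ i, (if i ∈ s then -(X i ω) else X i ω)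
        = ps ((k : ℕ) + 1) (V ω) - rs ((k : ℕ) + 1) (V ω) := by
      have hsplit := Finset.sum_filter_add_sum_filter_not Finset.univ
        (fun i : Fin n => (i : ℕ) < (k : ℕ) + 1)
        (fun i => if i ∈ s then -(X i ω) else X i ω)
      have h1 : ∑ i ∈ Finset.univ.filter (fun i : Fin n => (i : ℕ) < (k : ℕ) + 1),
          (if i ∈ s then -(X i ω) else X i ω) = ps ((k : ℕ) + 1) (V ω) := by
        rw [ps]
        refine Finset.sum_congr rfl fun i hi => ?_
        have hi' : i ∉ s := by
          simp only [hs, Finset.mem_filter, Finset.mem_univ, true_and, not_not]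
          simpa using hi
        rw [if_neg hi']
      have h2 : ∑ i ∈ Finset.univ.filter (fun i : Fin n => ¬ ((i : ℕ) < (k : ℕ) + 1)),
          (if i ∈ s then -(X i ω) else X i ω) = -(rs ((k : ℕ) + 1) (V ω)) := by
        rw [rs, ← Finset.sum_neg_distrib]
        refine Finset.sum_congr rfl fun i hi => ?_
        rw [if_pos (by rwa [hs])]
      rw [← hsplit, h1, h2]
      ring
    simp only [mem_preimage, mem_inter_iff, hAdef, hTdef, mem_setOf_eq]
    rw [hsum, hps _ le_rfl]
    constructor
    · rintro ⟨⟨h1, h2⟩, h3⟩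
      exact ⟨⟨h1, fun j hj => by rw [hps j (by omega)]; exact h2 j hj⟩, h3⟩
    · rintro ⟨⟨h1, h2⟩, h3⟩
      exact ⟨⟨h1, fun j hj => by rw [← hps j (by omega)]; exact h2 j hj⟩, h3⟩
  -- bound on B
  have hBbound : ∀ k : Fin n, P (V ⁻¹' B k) ≤ 2 * P (V ⁻¹' T) := by
    intro k
    have hsub : B k ⊆ T ∪ {v | x < |rs ((k : ℕ) + 1) v - ps ((k : ℕ) + 1) v|} := by
      intro v hv
      simp only [hBdef, mem_setOf_eq] at hv
      by_contra hc
      simp only [mem_union, hTdef, mem_setOf_eq, not_or, not_lt] at hc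
      obtain ⟨hc1, hc2⟩ := hc
      have hps := ps_add_rs ((k : ℕ) + 1) v
      have h2 : (2 : ℝ) * rs ((k : ℕ) + 1) v
          = (∑ i, v i) + (rs ((k : ℕ) + 1) v - ps ((k : ℕ) + 1) v) := by
        rw [← hps]; ring
      have h3 : |(2 : ℝ) * rs ((k : ℕ) + 1) v| ≤ 2 * x := by
        rw [h2]
        calc |(∑ i, v i) + (rs ((k : ℕ) + 1) v - ps ((k : ℕ) + 1) v)|
            ≤ |∑ i, v i| + |rs ((k : ℕ) + 1) v - ps ((k : ℕ) + 1) v| := abs_add_le _ _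
          _ ≤ 2 * x := by linarith
      rw [abs_mul, abs_two] at h3
      linarith
    calc P (V ⁻¹' B k)
        ≤ P (V ⁻¹' T ∪ V ⁻¹' {v | x < |rs ((k : ℕ) + 1) v - ps ((k : ℕ) + 1) v|}) := by
          refine measure_mono ?_
          rw [← preimage_union]
          exact preimage_mono hsub
      _ ≤ P (V ⁻¹' T) + P (V ⁻¹' {v | x < |rs ((k : ℕ) + 1) v - ps ((k : ℕ) + 1) v|}) :=
          measure_union_le _ _
      _ = 2 * P (V ⁻¹' T) := by rw [hreflB k]; ring
  -- Lévy bound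
  have hlevy : ∑ k, P (V ⁻¹' A k) ≤ 2 * P (V ⁻¹' T) := by
    have hk : ∀ k : Fin n, P (V ⁻¹' A k) ≤ 2 * P (V ⁻¹' (A k ∩ T)) := by
      intro k
      have hsub : A k ⊆ (A k ∩ T)
          ∪ (A k ∩ {v | x < |ps ((k : ℕ) + 1) v - rs ((k : ℕ) + 1) v|}) := by
        intro v hv
        have h1 : x < |ps ((k : ℕ) + 1) v| := hv.1
        by_contra hc
        simp only [mem_union, mem_inter_iff, hTdef, mem_setOf_eq, not_or, not_and, not_lt] at hc
        obtain ⟨hc1, hc2⟩ := hc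
        have hc1' := hc1 hv
        have hc2' := hc2 hv
        have hps := ps_add_rs ((k : ℕ) + 1) v
        have h2 : (2 : ℝ) * ps ((k : ℕ) + 1) v
            = (∑ i, v i) + (ps ((k : ℕ) + 1) v - rs ((k : ℕ) + 1) v) := by
          rw [← hps]; ring
        have h3 : |(2 : ℝ) * ps ((k : ℕ) + 1) v| ≤ 2 * x := by
          rw [h2]
          calc |(∑ i, v i) + (ps ((k : ℕ) + 1) v - rs ((k : ℕ) + 1) v)|
              ≤ |∑ i, v i| + |ps ((k : ℕ) + 1) v - rs ((k : ℕ) + 1) v| := abs_add_le _ _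
            _ ≤ 2 * x := by linarith
        rw [abs_mul, abs_two] at h3
        linarith
      calc P (V ⁻¹' A k)
          ≤ P (V ⁻¹' (A k ∩ T)
              ∪ V ⁻¹' (A k ∩ {v | x < |ps ((k : ℕ) + 1) v - rs ((k : ℕ) + 1) v|})) := by
            refine measure_mono ?_
            rw [← preimage_union]
            exact preimage_mono hsub
        _ ≤ P (V ⁻¹' (A k ∩ T))
              + P (V ⁻¹' (A k ∩ {v | x < |ps ((k : ℕ) + 1) v - rs ((k : ℕ) + 1) v|})) :=
            measure_union_le _ _
        _ = 2 * P (V ⁻¹' (A k ∩ T)) := by rw [hreflA k]; ring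
    have hdisj' : Pairwise (Function.onFun Disjoint fun k : Fin n => V ⁻¹' (A k ∩ T)) := by
      intro k l hkl
      exact Disjoint.preimage V
        (((hdisjA k l hkl).mono inter_subset_left inter_subset_left))
    have hmeas' : ∀ k : Fin n, MeasurableSet (V ⁻¹' (A k ∩ T)) :=
      fun k => hVmeas ((hAmeas k).inter hTmeas)
    calc ∑ k, P (V ⁻¹' A k)
        ≤ ∑ k, 2 * P (V ⁻¹' (A k ∩ T)) := Finset.sum_le_sum fun k _ => hk k
      _ = 2 * ∑ k, P (V ⁻¹' (A k ∩ T)) := by rw [Finset.mul_sum]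
      _ = 2 * P (⋃ k, V ⁻¹' (A k ∩ T)) := by
          rw [measure_iUnion hdisj' hmeas', tsum_fintype]
      _ ≤ 2 * P (V ⁻¹' T) := by
          gcongr
          exact iUnion_subset fun k => preimage_mono inter_subset_right
  -- assemble
  have hsetT : V ⁻¹' T = {ω | x < |∑ k, X k ω|} := rfl
  have step1 : P {ω | 2 * x + y < |∑ k, X k ω|}
      ≤ (∑ k, P {ω | y < |X k ω|}) + ∑ k, P (V ⁻¹' (A k ∩ B k)) := by
    refine (measure_mono key1).trans ((measure_union_le _ _).trans (add_le_add ?_ ?_))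
    · exact measure_iUnion_fintype_le _ _
    · exact measure_iUnion_fintype_le _ _
  have step2 : ∑ k, P (V ⁻¹' (A k ∩ B k)) ≤ 4 * (P (V ⁻¹' T)) ^ 2 := by
    calc ∑ k, P (V ⁻¹' (A k ∩ B k))
        = ∑ k, P (V ⁻¹' A k) * P (V ⁻¹' B k) := Finset.sum_congr rfl fun k _ => hfactor k
      _ ≤ ∑ k, P (V ⁻¹' A k) * (2 * P (V ⁻¹' T)) :=
          Finset.sum_le_sum fun k _ => mul_le_mul_right (hBbound k) _
      _ = (∑ k, P (V ⁻¹' A k)) * (2 * P (V ⁻¹' T)) := by rw [Finset.sum_mul]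
      _ ≤ (2 * P (V ⁻¹' T)) * (2 * P (V ⁻¹' T)) := mul_le_mul_left hlevy _
      _ = 4 * (P (V ⁻¹' T)) ^ 2 := by ring
  refine step1.trans (add_le_add_right ?_ _)
  rw [← hsetT]
  exact step2
end

section
/- Let X₁, …, X_n be i.i.d. symmetric real random variables with partial sum S_n. Then there exist universal constants κ₁, κ₂ > 0 such that for all x > 0: P(|S_n| > 9x) ≤ κ₁·n·P(|X₁| > x) + κ₂·(P(|S_n| > x))⁴. -/
set_option linter.unusedSectionVars false
open MeasureTheory ProbabilityTheory Finset

lemma sum_ite_range {M : Type*} [AddCommMonoid M] (f : ℕ → M) {k m : ℕ} (h : k ≤ m) :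
    ∑ i ∈ Finset.range m, (if i < k then f i else 0) = ∑ i ∈ Finset.range k, f i := by
  rw [← Finset.sum_subset (Finset.range_subset_range.mpr h)
      (fun x _ hxk => if_neg (fun hlt => hxk (Finset.mem_range.2 hlt)))]
  exact Finset.sum_congr rfl fun i hi => if_pos (Finset.mem_range.1 hi)

lemma hsum_ite (f : ℕ → ℝ) {k n : ℕ} (h : k ≤ n) :
    ∑ i : Fin n, (if (i : ℕ) < k then f i.val else 0) = ∑ i ∈ Finset.range k, f i := by
  rw [Fin.sum_univ_eq_sum_range (fun i => if i < k then f i else 0) n]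
  exact sum_ite_range f h

lemma flip_sum_ge (f : ℕ → ℝ) {j n : ℕ} (h : j ≤ n) :
    ∑ i : Fin n, (if j ≤ (i : ℕ) then -f i.val else f i.val)
      = 2 * ∑ k ∈ Finset.range j, f k - ∑ k ∈ Finset.range n, f k := by
  have key : ∀ i : Fin n, (if j ≤ (i : ℕ) then -f i.val else f i.val)
      = 2 * (if (i : ℕ) < j then f i.val else 0) - f i.val := by
    intro i
    rcases lt_or_ge (i : ℕ) j with h' | h'
    · rw [if_neg (not_le.2 h'), if_pos h']; ring
    · rw [if_pos h', if_neg (not_lt.2 h')]; ring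
  rw [Finset.sum_congr rfl (fun i _ => key i), Finset.sum_sub_distrib, ← Finset.mul_sum,
    hsum_ite f h, Fin.sum_univ_eq_sum_range]

lemma flip_sum_lt (f : ℕ → ℝ) {j n : ℕ} (h : j ≤ n) :
    ∑ i : Fin n, (if (i : ℕ) < j then -f i.val else f i.val)
      = ∑ k ∈ Finset.range n, f k - 2 * ∑ k ∈ Finset.range j, f k := by
  have key : ∀ i : Fin n, (if (i : ℕ) < j then -f i.val else f i.val)
      = f i.val - 2 * (if (i : ℕ) < j then f i.val else 0) := by
    intro i
    rcases lt_or_ge (i : ℕ) j with h' | h'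
    · rw [if_pos h', if_pos h']; ring
    · rw [if_neg (not_lt.2 h'), if_neg (not_lt.2 h')]; ring
  rw [Finset.sum_congr rfl (fun i _ => key i), Finset.sum_sub_distrib, ← Finset.mul_sum,
    hsum_ite f h, Fin.sum_univ_eq_sum_range]

lemma half_trick {t u v : ℝ} (h : t < |(u + v) / 2|) : t < |u| ∨ t < |v| := by
  by_contra hc
  push_neg at hc
  have h1 : |u + v| ≤ |u| + |v| := abs_add_le u v
  have h2 : |(u + v) / 2| = |u + v| / 2 := by rw [abs_div]; norm_num
  rw [h2] at h
  linarith [hc.1, hc.2]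


lemma inner_unflip (f : ℕ → ℝ) {k j n : ℕ} (hk : k ≤ j + 1) :
    (∑ i : Fin n, if (i : ℕ) < k then (if j + 1 ≤ (i : ℕ) then -f i.val else f i.val) else 0)
      = ∑ i : Fin n, if (i : ℕ) < k then f i.val else 0 := by
  refine Finset.sum_congr rfl fun i _ => ?_
  rcases lt_or_ge (i : ℕ) k with h | h
  · rw [if_pos h, if_pos h, if_neg (by omega)]
  · rw [if_neg (not_lt.2 h), if_neg (not_lt.2 h)]

lemma jointLaw {Ω : Type} [MeasurableSpace Ω] (P : Measure Ω) [IsProbabilityMeasure P]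
    (Y : ℕ → Ω → ℝ) (hm : ∀ k, Measurable (Y k))
    (hI : iIndepFun Y P) (n : ℕ) :
    Measure.map (fun ω (i : Fin n) => Y i ω) P = Measure.pi (fun i : Fin n => P.map (Y i)) := by
  refine (Measure.pi_eq fun s hs => ?_).symm
  rw [Measure.map_apply (measurable_pi_lambda (fun ω (i : Fin n) => Y i ω) fun i => hm i.val) (MeasurableSet.univ_pi hs : MeasurableSet (Set.univ.pi s))]
  classical
  set sets : ℕ → Set ℝ := fun k => if h : k < n then s ⟨k, h⟩ else Set.univ with hsets
  have hmeas : ∀ k, k ∈ Finset.range n → MeasurableSet (sets k) := by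
    intro k hk
    simp only [hsets]
    rw [dif_pos (Finset.mem_range.1 hk)]
    exact hs _
  have hmul := hI.measure_inter_preimage_eq_mul (Finset.range n) hmeas
  have hpre : (fun ω (i : Fin n) => Y i ω) ⁻¹' (Set.pi Set.univ s)
      = ⋂ k ∈ Finset.range n, Y k ⁻¹' sets k := by
    ext ω
    simp only [Set.mem_preimage, Set.mem_pi, Set.mem_univ, forall_true_left, Set.mem_iInter,
      Finset.mem_range, hsets]
    constructor
    · intro h k hk
      rw [dif_pos hk]
      exact h ⟨k, hk⟩
    · intro h i
      have := h i.val i.isLt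
      rwa [dif_pos i.isLt] at this
  rw [hpre, hmul]
  rw [← Fin.prod_univ_eq_prod_range (fun k => P (Y k ⁻¹' sets k)) n]
  refine Finset.prod_congr rfl fun i _ => ?_
  rw [Measure.map_apply (hm i) (hs i)]
  congr 1
  simp only [hsets]
  rw [dif_pos i.isLt]

lemma flipLaw {Ω : Type} [MeasurableSpace Ω] (P : Measure Ω) [IsProbabilityMeasure P]
    (X : ℕ → Ω → ℝ) (hm : ∀ k, Measurable (X k))
    (hI : iIndepFun X P)
    (hident : ∀ k, Measure.map (X k) P = Measure.map (X 0) P)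
    (hsymm : ∀ k, Measure.map (X k) P = Measure.map (fun ω => -(X k ω)) P)
    (ε : ℕ → Bool) (n : ℕ) {B : Set (Fin n → ℝ)} (hB : MeasurableSet B) :
    P {ω | (fun i : Fin n => if ε i then -(X i ω) else X i ω) ∈ B}
      = P {ω | (fun i : Fin n => X i ω) ∈ B} := by
  set Y : ℕ → Ω → ℝ := fun k ω => if ε k then -(X k ω) else X k ω with hY
  set g : ℕ → ℝ → ℝ := fun k r => if ε k then -r else r with hg
  have hgm : ∀ k, Measurable (g k) := by
    intro k
    simp only [hg]
    cases ε k
    · simpa using measurable_id'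
    · simpa using measurable_neg
  have hYm : ∀ k, Measurable (Y k) := fun k => (hgm k).comp (hm k)
  have hYI : iIndepFun Y P := by
    have := hI.comp g hgm
    convert this using 2
    rfl
  have hYid : ∀ k, P.map (Y k) = P.map (X 0) := by
    intro k
    have : Y k = if ε k then (fun ω => -(X k ω)) else X k := by
      funext ω; simp only [hY]; cases ε k <;> simp
    rw [this]
    cases hε : ε k <;> simp [hε]
    · exact hident k
    · rw [← hsymm k]; exact hident k
  have h1 : P {ω | (fun i : Fin n => Y i ω) ∈ B}
      = (Measure.map (fun ω (i : Fin n) => Y i ω) P) B := by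
    rw [Measure.map_apply (measurable_pi_lambda (fun ω (i : Fin n) => Y i ω) fun i => hYm i.val) hB]
    rfl
  have h2 : P {ω | (fun i : Fin n => X i ω) ∈ B}
      = (Measure.map (fun ω (i : Fin n) => X i ω) P) B := by
    rw [Measure.map_apply (measurable_pi_lambda (fun ω (i : Fin n) => X i ω) fun i => hm i.val) hB]
    rfl
  rw [h1, h2, jointLaw P Y hYm hYI n, jointLaw P X hm hI n]
  have : (fun i : Fin n => P.map (Y i.val)) = fun i : Fin n => P.map (X i.val) := by
    funext i
    rw [hYid]
    exact (hident _).symm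
  rw [this]

section HJ

variable {Ω : Type} [MeasurableSpace Ω] (P : Measure Ω) [IsProbabilityMeasure P]
  (X : ℕ → Ω → ℝ)

-- partial sum
local notation "S" => fun j ω => ∑ k ∈ Finset.range j, X k ω

variable (hm : ∀ k, Measurable (X k))
  (hI : iIndepFun X P)
  (hident : ∀ k, Measure.map (X k) P = Measure.map (X 0) P)
  (hsymm : ∀ k, Measure.map (X k) P = Measure.map (fun ω => -(X k ω)) P)

include hm hI hident hsymm in
/-- Reflection: `P(|S_n - S_j| > t) ≤ 2 P(|S_n| > t)` for `j ≤ n`. -/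
lemma refl_a {j n : ℕ} (hjn : j ≤ n) (t : ℝ) :
    P {ω | t < |S n ω - S j ω|} ≤ 2 * P {ω | t < |S n ω|} := by
  have hSm : ∀ j : ℕ, Measurable (S j) := fun j => Finset.measurable_sum _ fun k _ => hm k
  set B : Set (Fin n → ℝ) := {v | t < |∑ i, v i|} with hB
  have hBm : MeasurableSet B :=
    measurableSet_lt measurable_const ((Finset.measurable_sum _ fun i _ =>
      measurable_pi_apply i).abs)
  have hflip := flipLaw P X hm hI hident hsymm (fun k => decide (k < j)) n hBm
  have e1 : {ω | (fun i : Fin n => if (decide ((i : ℕ) < j)) then -(X i ω) else X i ω) ∈ B}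
      = {ω | t < |S n ω - 2 * S j ω|} := by
    ext ω
    simp only [Set.mem_setOf_eq, hB, decide_eq_true_eq]
    rw [flip_sum_lt (fun k => X k ω) hjn]
  have e2 : {ω | (fun i : Fin n => X i ω) ∈ B} = {ω | t < |S n ω|} := by
    ext ω
    simp only [Set.mem_setOf_eq, hB]
    rw [Fin.sum_univ_eq_sum_range (fun k => X k ω)]
  rw [e1, e2] at hflip
  have hsub : {ω | t < |S n ω - S j ω|}
      ⊆ {ω | t < |S n ω|} ∪ {ω | t < |S n ω - 2 * S j ω|} := by
    intro ω hω
    simp only [Set.mem_setOf_eq] at hω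
    have : S n ω - S j ω = ((S n ω) + (S n ω - 2 * S j ω)) / 2 := by ring
    rw [this] at hω
    exact half_trick hω
  calc P {ω | t < |S n ω - S j ω|}
      ≤ P ({ω | t < |S n ω|} ∪ {ω | t < |S n ω - 2 * S j ω|}) := measure_mono hsub
    _ ≤ P {ω | t < |S n ω|} + P {ω | t < |S n ω - 2 * S j ω|} := measure_union_le _ _
    _ = 2 * P {ω | t < |S n ω|} := by rw [hflip]; ring

/-- The stopping event: first exceedance at time `j+1`. -/
def Aset (X : ℕ → Ω → ℝ) (t : ℝ) (j : ℕ) : Set Ω :=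
  {ω | t < |∑ k ∈ Finset.range (j + 1), X k ω|} ∩
    ⋂ k, ⋂ (_ : k ≤ j), {ω | |∑ i ∈ Finset.range k, X i ω| ≤ t}

lemma mem_Aset {X : ℕ → Ω → ℝ} {t : ℝ} {j : ℕ} {ω : Ω} :
    ω ∈ Aset X t j ↔ (t < |∑ k ∈ Finset.range (j + 1), X k ω|
      ∧ ∀ k ≤ j, |∑ i ∈ Finset.range k, X i ω| ≤ t) := by
  simp [Aset, Set.mem_iInter]

lemma Aset_measurable {X : ℕ → Ω → ℝ} (hm : ∀ k, Measurable (X k)) (t : ℝ) (j : ℕ) :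
    MeasurableSet (Aset X t j) := by
  have hSm : ∀ j : ℕ, Measurable (fun ω => ∑ k ∈ Finset.range j, X k ω) :=
    fun j => Finset.measurable_sum _ fun k _ => hm k
  exact (measurableSet_lt measurable_const ((hSm _).abs)).inter
    (MeasurableSet.iInter fun k => MeasurableSet.iInter fun _ =>
      measurableSet_le ((hSm _).abs) measurable_const)

include hm hI hident hsymm in
/-- Lévy-type reflection: `P(A_j) ≤ 2 P(A_j ∩ {|S_n| > t})`. -/
lemma refl_b {j n : ℕ} (hjn : j < n) (t : ℝ) :
    P (Aset X t j) ≤ 2 * P (Aset X t j ∩ {ω | t < |S n ω|}) := by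
  classical
  set σ : ℕ → (Fin n → ℝ) → ℝ := fun k v => ∑ i : Fin n, if (i : ℕ) < k then v i else 0 with hσ
  have hσm : ∀ k, Measurable (σ k) := by
    intro k
    refine Finset.measurable_sum _ fun i _ => ?_
    split_ifs
    · exact measurable_pi_apply i
    · exact measurable_const
  set B : Set (Fin n → ℝ) := ({v | t < |σ (j + 1) v|} ∩
      ⋂ k, ⋂ (_ : k ≤ j), {v | |σ k v| ≤ t}) ∩ {v | t < |∑ i, v i|} with hB
  have hBm : MeasurableSet B := by
    refine MeasurableSet.inter (MeasurableSet.inter ?_ ?_) ?_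
    · exact measurableSet_lt measurable_const ((hσm _).abs)
    · exact MeasurableSet.iInter fun k => MeasurableSet.iInter fun _ =>
        measurableSet_le ((hσm _).abs) measurable_const
    · exact measurableSet_lt measurable_const ((Finset.measurable_sum _ fun i _ =>
        measurable_pi_apply i).abs)
  have hflip := flipLaw P X hm hI hident hsymm (fun k => decide (j + 1 ≤ k)) n hBm
  have hσX : ∀ (k : ℕ), k ≤ n → ∀ ω, σ k (fun i : Fin n => X i ω)
      = ∑ i ∈ Finset.range k, X i ω := by
    intro k hk ω
    simp only [hσ]
    exact hsum_ite (fun i => X i ω) hk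
  have e2 : {ω | (fun i : Fin n => X i ω) ∈ B} = Aset X t j ∩ {ω | t < |S n ω|} := by
    ext ω
    simp only [hB, Set.mem_inter_iff, Set.mem_setOf_eq, Set.mem_iInter, mem_Aset]
    rw [hσX (j + 1) hjn ω, Fin.sum_univ_eq_sum_range (fun k => X k ω)]
    constructor
    · rintro ⟨⟨h1, h2⟩, h3⟩
      exact ⟨⟨h1, fun k hk => by have := h2 k hk; rwa [hσX k (by omega) ω] at this⟩, h3⟩
    · rintro ⟨⟨h1, h2⟩, h3⟩
      exact ⟨⟨h1, fun k hk => by rw [hσX k (by omega) ω]; exact h2 k hk⟩, h3⟩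
  have e1 : {ω | (fun i : Fin n => if (decide (j + 1 ≤ (i : ℕ))) then -(X i ω) else X i ω) ∈ B}
      = Aset X t j ∩ {ω | t < |2 * S (j + 1) ω - S n ω|} := by
    ext ω
    simp only [hB, Set.mem_inter_iff, Set.mem_setOf_eq, Set.mem_iInter, mem_Aset,
      decide_eq_true_eq, hσ]
    rw [flip_sum_ge (fun k => X k ω) (by omega : j + 1 ≤ n)]
    constructor
    · rintro ⟨⟨h1, h2⟩, h3⟩
      refine ⟨⟨?_, fun k hk => ?_⟩, h3⟩
      · rwa [inner_unflip (fun k => X k ω) (le_refl (j + 1)),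
          hsum_ite (fun i => X i ω) hjn] at h1
      · have := h2 k hk
        rwa [inner_unflip (fun k => X k ω) (by omega : k ≤ j + 1),
          hsum_ite (fun i => X i ω) (by omega : k ≤ n)] at this
    · rintro ⟨⟨h1, h2⟩, h3⟩
      refine ⟨⟨?_, fun k hk => ?_⟩, h3⟩
      · rwa [inner_unflip (fun k => X k ω) (le_refl (j + 1)),
          hsum_ite (fun i => X i ω) hjn]
      · rw [inner_unflip (fun k => X k ω) (by omega : k ≤ j + 1),
          hsum_ite (fun i => X i ω) (by omega : k ≤ n)]
        exact h2 k hk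
  rw [e1, e2] at hflip
  have hsub : Aset X t j ⊆ (Aset X t j ∩ {ω | t < |S n ω|})
      ∪ (Aset X t j ∩ {ω | t < |2 * S (j + 1) ω - S n ω|}) := by
    intro ω hω
    have h1 := (mem_Aset.1 hω).1
    have : (∑ k ∈ Finset.range (j + 1), X k ω)
        = ((S n ω) + (2 * S (j + 1) ω - S n ω)) / 2 := by ring
    rw [this] at h1
    rcases half_trick h1 with h | h
    · exact Or.inl ⟨hω, h⟩
    · exact Or.inr ⟨hω, h⟩
  calc P (Aset X t j)
      ≤ P ((Aset X t j ∩ {ω | t < |S n ω|})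
          ∪ (Aset X t j ∩ {ω | t < |2 * S (j + 1) ω - S n ω|})) := measure_mono hsub
    _ ≤ P (Aset X t j ∩ {ω | t < |S n ω|})
          + P (Aset X t j ∩ {ω | t < |2 * S (j + 1) ω - S n ω|}) := measure_union_le _ _
    _ = 2 * P (Aset X t j ∩ {ω | t < |S n ω|}) := by rw [hflip]; ring

include hm hI in
/-- Independence of the stopping event and the tail sum. -/
lemma indep_step {j n : ℕ} (hjn : j < n) (t : ℝ) :
    P (Aset X t j ∩ {ω | t < |∑ k ∈ Finset.Ico (j + 1) n, X k ω|})
      = P (Aset X t j) * P {ω | t < |∑ k ∈ Finset.Ico (j + 1) n, X k ω|} := by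
  classical
  have hdisj : Disjoint (Finset.range (j + 1)) (Finset.Ico (j + 1) n) := by
    simp only [Finset.disjoint_left, Finset.mem_range, Finset.mem_Ico]
    omega
  have hIF := hI.indepFun_finset (Finset.range (j + 1)) (Finset.Ico (j + 1) n) hdisj hm
  set τ : ℕ → ((Finset.range (j + 1) : Finset ℕ) → ℝ) → ℝ :=
    fun k v => ∑ i ∈ (Finset.range (j + 1)).attach, if (i : ℕ) < k then v i else 0 with hτ
  have hτm : ∀ k, Measurable (τ k) := by
    intro k
    refine Finset.measurable_sum _ fun i _ => ?_
    split_ifs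
    · exact measurable_pi_apply i
    · exact measurable_const
  have hτX : ∀ (k : ℕ), k ≤ j + 1 → ∀ ω,
      τ k (fun i : (Finset.range (j + 1) : Finset ℕ) => X i ω)
        = ∑ i ∈ Finset.range k, X i ω := by
    intro k hk ω
    simp only [hτ]
    rw [Finset.sum_attach (Finset.range (j + 1)) (fun i => if i < k then X i ω else 0)]
    exact sum_ite_range (fun i => X i ω) hk
  set B₁ : Set ((Finset.range (j + 1) : Finset ℕ) → ℝ) := {v | t < |τ (j + 1) v|} ∩
      ⋂ k, ⋂ (_ : k ≤ j), {v | |τ k v| ≤ t} with hB₁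
  have hB₁m : MeasurableSet B₁ :=
    (measurableSet_lt measurable_const ((hτm _).abs)).inter
      (MeasurableSet.iInter fun k => MeasurableSet.iInter fun _ =>
        measurableSet_le ((hτm _).abs) measurable_const)
  set B₂ : Set ((Finset.Ico (j + 1) n : Finset ℕ) → ℝ) := {w | t < |∑ i, w i|} with hB₂
  have hB₂m : MeasurableSet B₂ :=
    measurableSet_lt measurable_const ((Finset.measurable_sum _ fun i _ =>
      measurable_pi_apply i).abs)
  have key := hIF.measure_inter_preimage_eq_mul B₁ B₂ hB₁m hB₂m
  have e1 : (fun a (i : (Finset.range (j + 1) : Finset ℕ)) => X i a) ⁻¹' B₁ = Aset X t j := by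
    ext ω
    simp only [Set.mem_preimage, hB₁, Set.mem_inter_iff, Set.mem_setOf_eq, Set.mem_iInter,
      mem_Aset]
    rw [hτX (j + 1) le_rfl ω]
    constructor
    · rintro ⟨h1, h2⟩
      exact ⟨h1, fun k hk => by have := h2 k hk; rwa [hτX k (by omega) ω] at this⟩
    · rintro ⟨h1, h2⟩
      exact ⟨h1, fun k hk => by rw [hτX k (by omega) ω]; exact h2 k hk⟩
  have e2 : (fun a (i : (Finset.Ico (j + 1) n : Finset ℕ)) => X i a) ⁻¹' B₂
      = {ω | t < |∑ k ∈ Finset.Ico (j + 1) n, X k ω|} := by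
    ext ω
    simp only [Set.mem_preimage, hB₂, Set.mem_setOf_eq, Finset.univ_eq_attach]
    rw [Finset.sum_attach (Finset.Ico (j + 1) n) (fun i => X i ω)]
  rw [e1, e2] at key
  exact key

lemma Aset_cover {X : ℕ → Ω → ℝ} {n : ℕ} {t : ℝ} (ht : 0 ≤ t) :
    {ω | t < |∑ k ∈ Finset.range n, X k ω|} ⊆ ⋃ j ∈ Finset.range n, Aset X t j := by
  intro ω hω
  simp only [Set.mem_setOf_eq] at hω
  have hex : ∃ m, t < |∑ k ∈ Finset.range m, X k ω| := ⟨n, hω⟩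
  classical
  set m := Nat.find hex with hmdef
  have hmP : t < |∑ k ∈ Finset.range m, X k ω| := Nat.find_spec hex
  have hmin : ∀ k < m, ¬ t < |∑ i ∈ Finset.range k, X i ω| := fun k hk => Nat.find_min hex hk
  have hmn : m ≤ n := Nat.find_le hω
  have hm0 : m ≠ 0 := by
    intro h0
    rw [h0] at hmP
    simpa using lt_of_le_of_lt ht hmP
  obtain ⟨j, hmj⟩ : ∃ j, m = j + 1 := ⟨m - 1, by omega⟩
  rw [hmj] at hmP hmn hmin
  refine Set.mem_biUnion (Finset.mem_range.2 (by omega : j < n)) ?_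
  rw [mem_Aset]
  exact ⟨hmP, fun k hk => not_lt.1 (hmin k (by omega))⟩

lemma Aset_disjoint {X : ℕ → Ω → ℝ} {t : ℝ} {i j : ℕ} (hij : i ≠ j) :
    Disjoint (Aset X t i) (Aset X t j) := by
  wlog h : i < j generalizing i j
  · exact (this hij.symm (by omega)).symm
  rw [Set.disjoint_left]
  intro ω hi hj
  have h1 := (mem_Aset.1 hi).1
  have h2 := (mem_Aset.1 hj).2 (i + 1) (by omega)
  exact absurd h1 (not_lt.2 h2)

include hm hident in
lemma ident_tail (k : ℕ) (t : ℝ) : P {ω | t < |X k ω|} = P {ω | t < |X 0 ω|} := by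
  have hA : MeasurableSet {r : ℝ | t < |r|} :=
    measurableSet_lt measurable_const measurable_abs
  have h1 : P {ω | t < |X k ω|} = (P.map (X k)) {r : ℝ | t < |r|} := by
    rw [Measure.map_apply (hm k) hA]; rfl
  have h2 : P {ω | t < |X 0 ω|} = (P.map (X 0)) {r : ℝ | t < |r|} := by
    rw [Measure.map_apply (hm 0) hA]; rfl
  rw [h1, h2, hident k]

include hm hI hident hsymm in
/-- Hoffmann–Jørgensen single step. -/
lemma core_step (n : ℕ) {t : ℝ} (ht : 0 < t) :
    P {ω | 3 * t < |S n ω|} ≤ n * P {ω | t < |X 0 ω|}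
      + (2 * P {ω | t < |S n ω|}) * (2 * P {ω | t < |S n ω|}) := by
  classical
  have hSm : ∀ j : ℕ, Measurable (S j) := fun j => Finset.measurable_sum _ fun k _ => hm k
  set E : Set Ω := {ω | t < |S n ω|} with hE
  have hEm : MeasurableSet E := measurableSet_lt measurable_const ((hSm n).abs)
  set D : ℕ → Set Ω := fun j => {ω | t < |∑ k ∈ Finset.Ico (j + 1) n, X k ω|} with hD
  have hsub : {ω | 3 * t < |S n ω|}
      ⊆ (⋃ k ∈ Finset.range n, {ω | t < |X k ω|})
        ∪ ⋃ j ∈ Finset.range n, (Aset X t j ∩ D j) := by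
    intro ω hω
    simp only [Set.mem_setOf_eq] at hω
    by_cases hbig : ∃ k ∈ Finset.range n, t < |X k ω|
    · obtain ⟨k, hk, hkt⟩ := hbig
      exact Or.inl (Set.mem_biUnion hk hkt)
    · push_neg at hbig
      have hωE : ω ∈ {ω | t < |S n ω|} := by
        simp only [Set.mem_setOf_eq]
        have : t < 3 * t := by linarith
        linarith
      obtain ⟨j, hj, hωA⟩ := Set.mem_iUnion₂.1 (Aset_cover ht.le hωE)
      have hjn : j < n := Finset.mem_range.1 hj
      refine Or.inr (Set.mem_biUnion hj ⟨hωA, ?_⟩)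
      simp only [hD, Set.mem_setOf_eq]
      rw [Finset.sum_Ico_eq_sub (fun k => X k ω) (by omega : j + 1 ≤ n)]
      have h1 : |∑ i ∈ Finset.range j, X i ω| ≤ t := (mem_Aset.1 hωA).2 j le_rfl
      have h2 : |X j ω| ≤ t := hbig j hj
      have h3 : (∑ k ∈ Finset.range (j + 1), X k ω)
          = (∑ i ∈ Finset.range j, X i ω) + X j ω := Finset.sum_range_succ _ _
      have h4 : |∑ k ∈ Finset.range (j + 1), X k ω| ≤ 2 * t := by
        rw [h3]
        calc |(∑ i ∈ Finset.range j, X i ω) + X j ω|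
            ≤ |∑ i ∈ Finset.range j, X i ω| + |X j ω| := abs_add_le _ _
          _ ≤ 2 * t := by linarith
      have h5 := abs_sub_abs_le_abs_sub (∑ k ∈ Finset.range n, X k ω)
        (∑ k ∈ Finset.range (j + 1), X k ω)
      linarith
  have hdisj' : Set.PairwiseDisjoint ↑(Finset.range n) (fun j => Aset X t j ∩ E) :=
    fun i _ j _ hij => ((Aset_disjoint hij).mono Set.inter_subset_left Set.inter_subset_left)
  have hAE : ∀ j ∈ Finset.range n, MeasurableSet (Aset X t j ∩ E) :=
    fun j _ => (Aset_measurable hm t j).inter hEm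
  have hAsum : ∑ j ∈ Finset.range n, P (Aset X t j) ≤ 2 * P E := by
    calc ∑ j ∈ Finset.range n, P (Aset X t j)
        ≤ ∑ j ∈ Finset.range n, 2 * P (Aset X t j ∩ E) :=
          Finset.sum_le_sum fun j hj => refl_b P X hm hI hident hsymm (Finset.mem_range.1 hj) t
      _ = 2 * ∑ j ∈ Finset.range n, P (Aset X t j ∩ E) := by rw [Finset.mul_sum]
      _ = 2 * P (⋃ j ∈ Finset.range n, (Aset X t j ∩ E)) := by
          rw [measure_biUnion_finset hdisj' hAE]
      _ ≤ 2 * P E := mul_le_mul_right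
          (measure_mono (Set.iUnion₂_subset fun j _ => Set.inter_subset_right)) 2
  have hDle : ∀ j ∈ Finset.range n, P (D j) ≤ 2 * P E := by
    intro j hj
    have hjn : j < n := Finset.mem_range.1 hj
    have hDeq : D j = {ω | t < |S n ω - S (j + 1) ω|} := by
      ext ω
      simp only [hD, Set.mem_setOf_eq]
      rw [Finset.sum_Ico_eq_sub (fun k => X k ω) (by omega : j + 1 ≤ n)]
    rw [hDeq, hE]
    exact refl_a P X hm hI hident hsymm (by omega : j + 1 ≤ n) t
  have hU1 : P (⋃ k ∈ Finset.range n, {ω | t < |X k ω|}) ≤ n * P {ω | t < |X 0 ω|} := by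
    refine (measure_biUnion_finset_le _ _).trans ?_
    rw [Finset.sum_congr rfl fun k _ => ident_tail P X hm hident k t, Finset.sum_const,
      Finset.card_range, nsmul_eq_mul]
  have hU2 : P (⋃ j ∈ Finset.range n, (Aset X t j ∩ D j)) ≤ (2 * P E) * (2 * P E) := by
    refine (measure_biUnion_finset_le _ _).trans ?_
    calc ∑ j ∈ Finset.range n, P (Aset X t j ∩ D j)
        = ∑ j ∈ Finset.range n, P (Aset X t j) * P (D j) :=
          Finset.sum_congr rfl fun j hj =>
            indep_step P X hm hI (Finset.mem_range.1 hj) t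
      _ ≤ ∑ j ∈ Finset.range n, P (Aset X t j) * (2 * P E) :=
          Finset.sum_le_sum fun j hj => mul_le_mul_right (hDle j hj) _
      _ = (∑ j ∈ Finset.range n, P (Aset X t j)) * (2 * P E) := by rw [Finset.sum_mul]
      _ ≤ (2 * P E) * (2 * P E) := mul_le_mul_left hAsum _
  calc P {ω | 3 * t < |S n ω|}
      ≤ P ((⋃ k ∈ Finset.range n, {ω | t < |X k ω|})
          ∪ ⋃ j ∈ Finset.range n, (Aset X t j ∩ D j)) := measure_mono hsub
    _ ≤ P (⋃ k ∈ Finset.range n, {ω | t < |X k ω|})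
          + P (⋃ j ∈ Finset.range n, (Aset X t j ∩ D j)) := measure_union_le _ _
    _ ≤ n * P {ω | t < |X 0 ω|} + (2 * P E) * (2 * P E) := add_le_add hU1 hU2

theorem stmt11 :
    ∃ κ₁ κ₂ : ℝ, 0 < κ₁ ∧ 0 < κ₂ ∧
      ∀ (Ω : Type) (_ : MeasurableSpace Ω) (P : Measure Ω), IsProbabilityMeasure P →
        ∀ (X : ℕ → Ω → ℝ), (∀ k, Measurable (X k)) →
          iIndepFun X P →
          (∀ k, Measure.map (X k) P = Measure.map (X 0) P) →
          (∀ k, Measure.map (X k) P = Measure.map (fun ω => -(X k ω)) P) →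
          ∀ (n : ℕ) (x : ℝ), 0 < x →
            (P {ω | 9 * x < |∑ k ∈ Finset.range n, X k ω|}).toReal
              ≤ κ₁ * n * (P {ω | x < |X 0 ω|}).toReal
                + κ₂ * ((P {ω | x < |∑ k ∈ Finset.range n, X k ω|}).toReal) ^ 4 := by
  refine ⟨8, 128, by norm_num, by norm_num, ?_⟩
  intro Ω mΩ P hP X hm hI hident hsymm n x hx
  haveI := hP
  set a : ENNReal := P {ω | x < |X 0 ω|} with ha
  set b : ENNReal := P {ω | x < |∑ k ∈ Finset.range n, X k ω|} with hb
  -- step at level 3x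
  have h9 : {ω | 9 * x < |∑ k ∈ Finset.range n, X k ω|}
      = {ω | 3 * (3 * x) < |∑ k ∈ Finset.range n, X k ω|} := by
    have : (9 : ℝ) * x = 3 * (3 * x) := by ring
    rw [this]
  have step3 := core_step P X hm hI hident hsymm n (by linarith : (0:ℝ) < 3 * x)
  have step1 := core_step P X hm hI hident hsymm n hx
  have hq3 : P {ω | 3 * x < |X 0 ω|} ≤ a := by
    rw [ha]
    refine measure_mono fun ω hω => ?_
    simp only [Set.mem_setOf_eq] at hω ⊢
    linarith
  have hmain : P {ω | 9 * x < |∑ k ∈ Finset.range n, X k ω|}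
      ≤ (n : ENNReal) * a + (2 * ((n : ENNReal) * a + (2 * b) * (2 * b)))
          * (2 * ((n : ENNReal) * a + (2 * b) * (2 * b))) := by
    rw [h9]
    refine step3.trans ?_
    have hp3 : P {ω | 3 * x < |∑ k ∈ Finset.range n, X k ω|}
        ≤ (n : ENNReal) * a + (2 * b) * (2 * b) := step1
    have h2p3 : 2 * P {ω | 3 * x < |∑ k ∈ Finset.range n, X k ω|}
        ≤ 2 * ((n : ENNReal) * a + (2 * b) * (2 * b)) := mul_le_mul_right hp3 2
    exact add_le_add (mul_le_mul_right hq3 _) (mul_le_mul' h2p3 h2p3)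
  have hane : a ≠ ⊤ := measure_ne_top P _
  have hbne : b ≠ ⊤ := measure_ne_top P _
  have hnane : (n : ENNReal) * a ≠ ⊤ := ENNReal.mul_ne_top (ENNReal.natCast_ne_top n) hane
  have hinner : (n : ENNReal) * a + (2 * b) * (2 * b) ≠ ⊤ :=
    ENNReal.add_ne_top.2 ⟨hnane, ENNReal.mul_ne_top
      (ENNReal.mul_ne_top ENNReal.ofNat_ne_top hbne)
      (ENNReal.mul_ne_top ENNReal.ofNat_ne_top hbne)⟩
  have houter : (2 * ((n : ENNReal) * a + (2 * b) * (2 * b))) ≠ ⊤ :=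
    ENNReal.mul_ne_top ENNReal.ofNat_ne_top hinner
  have hRne : (n : ENNReal) * a + (2 * ((n : ENNReal) * a + (2 * b) * (2 * b)))
      * (2 * ((n : ENNReal) * a + (2 * b) * (2 * b))) ≠ ⊤ :=
    ENNReal.add_ne_top.2 ⟨hnane, ENNReal.mul_ne_top houter houter⟩
  have hreal := ENNReal.toReal_mono hRne hmain
  set A : ℝ := (n : ℝ) * a.toReal with hA
  set B : ℝ := b.toReal with hB
  have hAeq : ((n : ENNReal) * a).toReal = A := by
    rw [ENNReal.toReal_mul, ENNReal.toReal_natCast]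
  have hinnerR : (((n : ENNReal) * a + (2 * b) * (2 * b))).toReal = A + (2 * B) * (2 * B) := by
    rw [ENNReal.toReal_add hnane (ENNReal.mul_ne_top
      (ENNReal.mul_ne_top ENNReal.ofNat_ne_top hbne)
      (ENNReal.mul_ne_top ENNReal.ofNat_ne_top hbne)), hAeq]
    simp [ENNReal.toReal_mul, hB]
  have houterR : (2 * ((n : ENNReal) * a + (2 * b) * (2 * b))).toReal
      = 2 * (A + (2 * B) * (2 * B)) := by
    rw [ENNReal.toReal_mul, hinnerR]
    norm_num
  have hRtoReal : ((n : ENNReal) * a + (2 * ((n : ENNReal) * a + (2 * b) * (2 * b)))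
      * (2 * ((n : ENNReal) * a + (2 * b) * (2 * b)))).toReal
      = A + (2 * (A + (2 * B) * (2 * B))) * (2 * (A + (2 * B) * (2 * B))) := by
    rw [ENNReal.toReal_add hnane (ENNReal.mul_ne_top houter houter), hAeq,
      ENNReal.toReal_mul, houterR]
  rw [hRtoReal] at hreal
  have hL1 : (P {ω | 9 * x < |∑ k ∈ Finset.range n, X k ω|}).toReal ≤ 1 := by
    refine ENNReal.toReal_le_of_le_ofReal zero_le_one ?_
    simpa using prob_le_one
  have hA0 : 0 ≤ A := mul_nonneg (Nat.cast_nonneg n) ENNReal.toReal_nonneg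
  have hB0 : 0 ≤ B := ENNReal.toReal_nonneg
  rw [show (8 : ℝ) * n * (P {ω | x < |X 0 ω|}).toReal = 8 * A by rw [hA, ha]; ring,
    show (128 : ℝ) * ((P {ω | x < |∑ k ∈ Finset.range n, X k ω|}).toReal) ^ 4
      = 128 * B ^ 4 by rw [hB, hb]]
  by_cases hcase : 1 ≤ 8 * A
  · have : (0:ℝ) ≤ 128 * B ^ 4 := by positivity
    linarith
  · push_neg at hcase
    have hAsmall : A < 1 / 8 := by linarith
    have h1 : A * A ≤ A * (1 / 8) := mul_le_mul_of_nonneg_left hAsmall.le hA0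
    nlinarith [sq_nonneg (4 * A - 4 * B ^ 2), sq_nonneg B, sq_nonneg (B ^ 2), hreal]

end HJ
end

section
/- Let L be slowly varying, increasing to ∞, with φ(y) = ∫_1^y L(u)/u du and ψ = φ^{-1}. For c > 0 define n_k = ψ(ck). Then n_{k+1}/n_k → 1 and L(n_{k+1})/L(n_k) → 1 as k → ∞. -/
open Filter Real Set

theorem stmt13 (L : ℝ → ℝ)
    (hdiff : DifferentiableOn ℝ L (Set.Ici 1))
    (hmono : MonotoneOn L (Set.Ici 1))
    (htop : Tendsto L atTop atTop)
    (hsv : SlowlyVarying L)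
    (hdec : ∃ x₀ : ℝ, AntitoneOn (fun x => x * deriv L x / L x) (Set.Ici x₀))
    (φ ψ : ℝ → ℝ) (hφ : ∀ t, φ t = ∫ u in (1:ℝ)..t, L u / u)
    (hφmono : StrictMonoOn φ (Set.Ici 1))
    (hφtop : Tendsto φ atTop atTop)
    (hψ : ∀ y ∈ Set.Ici (1:ℝ), ψ (φ y) = y)
    (hψ' : ∀ x ∈ Set.Ici (0:ℝ), φ (ψ x) = x)
    (c : ℝ) (hc : 0 < c) :
    Tendsto (fun k : ℕ => ψ (c * (k + 1)) / ψ (c * k)) atTop (nhds 1) ∧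
      Tendsto (fun k : ℕ => L (ψ (c * (k + 1))) / L (ψ (c * k))) atTop (nhds 1) := by
  clear hdec
  have hLcont : ContinuousOn L (Set.Ici 1) := hdiff.continuousOn
  -- integrability of L u / u on [a,b] ⊆ [1,∞)
  have hInt : ∀ a b : ℝ, 1 ≤ a → a ≤ b →
      IntervalIntegrable (fun u => L u / u) MeasureTheory.volume a b := by
    intro a b ha hab
    apply ContinuousOn.intervalIntegrable
    apply ContinuousOn.div
    · exact hLcont.mono (fun x hx => by
        rw [Set.uIcc_of_le hab] at hx; exact ha.trans hx.1)
    · exact continuousOn_id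
    · intro x hx
      rw [Set.uIcc_of_le hab] at hx
      have : (0:ℝ) < x := lt_of_lt_of_le one_pos (ha.trans hx.1)
      exact ne_of_gt this
  have hφsub : ∀ a b : ℝ, 1 ≤ a → a ≤ b → φ b - φ a = ∫ u in a..b, L u / u := by
    intro a b ha hab
    rw [hφ a, hφ b,
      ← intervalIntegral.integral_add_adjacent_intervals (hInt 1 a le_rfl ha) (hInt a b ha hab)]
    ring
  have hφ1 : φ 1 = 0 := by rw [hφ]; simp
  -- ψ x ≥ 1 for x ≥ 0
  have hψ1 : ∀ x : ℝ, 0 ≤ x → 1 ≤ ψ x := by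
    intro x hx
    obtain ⟨t, ht1, ht2⟩ := ((hφtop.eventually_ge_atTop x).and (eventually_ge_atTop 1)).exists
    have hcont : ContinuousOn φ (Set.uIcc 1 t) := by
      refine ContinuousOn.congr ?_ (fun s _ => hφ s)
      exact intervalIntegral.continuousOn_primitive_interval'
        (hInt 1 t le_rfl ht2) left_mem_uIcc
    have hx' : x ∈ Set.Icc (φ 1) (φ t) := ⟨hφ1 ▸ hx, ht1⟩
    rw [Set.uIcc_of_le ht2] at hcont
    obtain ⟨y, hy, hyx⟩ := intermediate_value_Icc ht2 hcont hx'
    have : ψ x = y := by rw [← hyx, hψ y hy.1]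
    rw [this]; exact hy.1
  -- ψ monotone on [0,∞)
  have hψmono : ∀ x y : ℝ, 0 ≤ x → x ≤ y → ψ x ≤ ψ y := by
    intro x y hx hxy
    by_contra h
    push_neg at h
    have := hφmono (hψ1 y (hx.trans hxy)) (hψ1 x hx) h
    rw [hψ' x hx, hψ' y (hx.trans hxy)] at this
    linarith
  -- ψ → ∞
  have hψtop : Tendsto ψ atTop atTop := by
    rw [tendsto_atTop_atTop]
    intro M
    refine ⟨max 0 (φ (max M 1)), fun x hx => ?_⟩
    have h0 : (0:ℝ) ≤ φ (max M 1) := by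
      rw [← hφ1]
      exact hφmono.monotoneOn (le_refl (1:ℝ)) (le_max_right M 1) (le_max_right M 1)
    calc M ≤ max M 1 := le_max_left _ _
      _ = ψ (φ (max M 1)) := (hψ _ (le_max_right M 1)).symm
      _ ≤ ψ x := hψmono _ _ h0 (le_trans (le_max_right _ _) hx)
  set f : ℕ → ℝ := fun k => ψ (c * k) with hf
  have hb : ∀ k : ℕ, ψ (c * ((k:ℝ) + 1)) = f (k + 1) := by
    intro k; simp only [hf]; push_cast; ring_nf
  have hck : ∀ k : ℕ, (0:ℝ) ≤ c * k := fun k => by positivity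
  have hf1 : ∀ k : ℕ, 1 ≤ f k := fun k => hψ1 _ (hck k)
  have hfpos : ∀ k : ℕ, 0 < f k := fun k => lt_of_lt_of_le one_pos (hf1 k)
  have hfle : ∀ k : ℕ, f k ≤ f (k + 1) := by
    intro k
    apply hψmono _ _ (hck k)
    push_cast; nlinarith
  have hftop : Tendsto f atTop atTop := by
    apply hψtop.comp
    exact Tendsto.const_mul_atTop hc tendsto_natCast_atTop_atTop
  have hLtop : Tendsto (fun k => L (f k)) atTop atTop := htop.comp hftop
  -- key inequality
  have key : ∀ k : ℕ, L (f k) * Real.log (f (k + 1) / f k) ≤ c := by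
    intro k
    have hceq : c = ∫ u in (f k)..(f (k + 1)), L u / u := by
      have h := hφsub (f k) (f (k + 1)) (hf1 k) (hfle k)
      simp only [hf] at h
      rw [hψ' _ (hck k), hψ' _ (hck (k + 1))] at h
      rw [← h]; push_cast; ring
    have hconst : L (f k) * Real.log (f (k + 1) / f k)
        = ∫ u in (f k)..(f (k + 1)), L (f k) / u := by
      have : (fun u => L (f k) / u) = fun u : ℝ => L (f k) * (1 / u) := by
        funext u; ring
      rw [this, intervalIntegral.integral_const_mul,
        integral_one_div_of_pos (hfpos k) (hfpos (k + 1))]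
    have hintc : IntervalIntegrable (fun u => L (f k) / u) MeasureTheory.volume
        (f k) (f (k + 1)) := by
      apply ContinuousOn.intervalIntegrable
      apply ContinuousOn.div continuousOn_const continuousOn_id
      intro x hx
      rw [Set.uIcc_of_le (hfle k)] at hx
      exact ne_of_gt (lt_of_lt_of_le (hfpos k) hx.1)
    rw [hconst, hceq]
    apply intervalIntegral.integral_mono_on (hfle k) hintc (hInt _ _ (hf1 k) (hfle k))
    intro u hu
    have hupos : 0 < u := lt_of_lt_of_le (hfpos k) hu.1
    have hLle : L (f k) ≤ L u := hmono (hf1 k) (le_trans (hf1 k) hu.1) hu.1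
    exact div_le_div_of_nonneg_right hLle hupos.le |>.trans_eq rfl
  have hlognn : ∀ k : ℕ, 0 ≤ Real.log (f (k + 1) / f k) := by
    intro k
    apply Real.log_nonneg
    rw [le_div_iff₀ (hfpos k)]; linarith [hfle k]
  -- log of ratio tends to 0
  have hlog0 : Tendsto (fun k : ℕ => Real.log (f (k + 1) / f k)) atTop (nhds 0) := by
    have hub : Tendsto (fun k : ℕ => c / L (f k)) atTop (nhds 0) :=
      Tendsto.div_atTop tendsto_const_nhds hLtop
    apply tendsto_of_tendsto_of_tendsto_of_le_of_le' tendsto_const_nhds hub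
    · exact Eventually.of_forall hlognn
    · filter_upwards [hLtop.eventually_gt_atTop 0] with k hk
      rw [le_div_iff₀ hk]
      linarith [key k, mul_comm (L (f k)) (Real.log (f (k + 1) / f k))]
  have hrat : Tendsto (fun k : ℕ => f (k + 1) / f k) atTop (nhds 1) := by
    have := (Real.continuous_exp.tendsto 0).comp hlog0
    rw [Real.exp_zero] at this
    apply this.congr
    intro k
    exact Real.exp_log (div_pos (hfpos (k + 1)) (hfpos k))
  constructor
  · apply hrat.congr
    intro k
    rw [hb k]
  · -- second part via squeeze
    have htwo : Tendsto (fun k : ℕ => L (2 * f k) / L (f k)) atTop (nhds 1) :=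
      (hsv 2 two_pos).comp hftop
    have hLrat : Tendsto (fun k : ℕ => L (f (k + 1)) / L (f k)) atTop (nhds 1) := by
      apply tendsto_of_tendsto_of_tendsto_of_le_of_le' tendsto_const_nhds htwo
      · filter_upwards [hLtop.eventually_gt_atTop 0] with k hk
        rw [le_div_iff₀ hk]
        have := hmono (hf1 k) (le_trans (hf1 k) (hfle k)) (hfle k)
        linarith
      · filter_upwards [hLtop.eventually_gt_atTop 0,
          hrat.eventually_lt_const (by norm_num : (1:ℝ) < 2)] with k hk hk2
        have h2 : f (k + 1) ≤ 2 * f k := by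
          rw [div_lt_iff₀ (hfpos k)] at hk2
          linarith
        have hLle : L (f (k + 1)) ≤ L (2 * f k) :=
          hmono (le_trans (hf1 k) (hfle k)) (by simp only [Set.mem_Ici]; linarith [hf1 k]) h2
        exact div_le_div_of_nonneg_right hLle hk.le |>.trans_eq rfl
    apply hLrat.congr
    intro k
    rw [hb k]
end

section
/- Let L be slowly varying, increasing to ∞, with φ(y) = ∫_1^y L(u)/u du and ψ = φ^{-1}, and let c > 1. Define n_k = ψ(ck). Then n_{k+1} > n_k + n_k/L(n_k) for all sufficiently large k; that is, the windows (n_k, n_k + n_k/L(n_k)] are eventually pairwise disjoint. -/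
open Filter Real Set

theorem stmt14 (L : ℝ → ℝ)
    (hdiff : DifferentiableOn ℝ L (Set.Ici 1))
    (hmono : MonotoneOn L (Set.Ici 1))
    (htop : Tendsto L atTop atTop)
    (hsv : SlowlyVarying L)
    (hdec : ∃ x₀ : ℝ, AntitoneOn (fun x => x * deriv L x / L x) (Set.Ici x₀))
    (φ ψ : ℝ → ℝ) (hφ : ∀ t, φ t = ∫ u in (1:ℝ)..t, L u / u)
    (hφmono : StrictMonoOn φ (Set.Ici 1))
    (hφtop : Tendsto φ atTop atTop)
    (hψ : ∀ y ∈ Set.Ici (1:ℝ), ψ (φ y) = y)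
    (hψ' : ∀ x ∈ Set.Ici (0:ℝ), φ (ψ x) = x)
    (c : ℝ) (hc : 1 < c) :
    ∀ᶠ k : ℕ in atTop,
      ψ (c * k) + ψ (c * k) / L (ψ (c * k)) < ψ (c * (k + 1)) := by
  have hLcont : ContinuousOn L (Set.Ici 1) := hdiff.continuousOn
  have hfc : ContinuousOn (fun u => L u / u) (Set.Ici 1) :=
    hLcont.div continuousOn_id (fun x hx => (lt_of_lt_of_le zero_lt_one hx).ne')
  have hφ1 : φ 1 = 0 := by rw [hφ]; simp
  have hint : ∀ a b : ℝ, 1 ≤ a → 1 ≤ b →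
      IntervalIntegrable (fun u => L u / u) MeasureTheory.volume a b := by
    intro a b ha hb
    apply (hfc.mono ?_).intervalIntegrable
    intro x hx
    rcases Set.mem_uIcc.mp hx with ⟨h, _⟩ | ⟨h, _⟩
    · exact le_trans ha h
    · exact le_trans hb h
  have hφsub : ∀ a b : ℝ, 1 ≤ a → 1 ≤ b →
      φ b - φ a = ∫ u in a..b, L u / u := by
    intro a b ha hb
    rw [hφ, hφ]
    exact intervalIntegral.integral_interval_sub_left (hint 1 b le_rfl hb) (hint 1 a le_rfl ha)
  -- ψ x ≥ 1 for x ≥ 0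
  have hψ1 : ∀ x : ℝ, 0 ≤ x → 1 ≤ ψ x := by
    intro x hx
    obtain ⟨b, hb⟩ := (hφtop.eventually_ge_atTop x).and (eventually_ge_atTop (1:ℝ)) |>.exists
    have hcont : ContinuousOn φ (Set.Icc 1 b) := by
      have : ContinuousOn (fun t => ∫ u in (1:ℝ)..t, L u / u) (Set.uIcc 1 b) := by
        apply intervalIntegral.continuousOn_primitive_interval
        rw [Set.uIcc_of_le hb.2, integrableOn_Icc_iff_integrableOn_Ioc]
        exact (hint 1 b le_rfl hb.2).1
      refine ContinuousOn.congr ?_ (fun t _ => hφ t)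
      rwa [Set.uIcc_of_le hb.2] at this
    have hmem : x ∈ Set.Icc (φ 1) (φ b) := ⟨hφ1 ▸ hx, hb.1⟩
    obtain ⟨y, hy, hyx⟩ := intermediate_value_Icc hb.2 hcont hmem
    have : ψ x = y := by rw [← hyx, hψ y (Set.mem_Ici.mpr hy.1)]
    rw [this]; exact hy.1
  -- ψ tends to infinity
  have hψtop : Tendsto ψ atTop atTop := by
    rw [tendsto_atTop]
    intro M
    have hM' : (1:ℝ) ≤ max M 1 := le_max_right _ _
    filter_upwards [eventually_ge_atTop (max 0 (φ (max M 1)))] with x hx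
    have hx0 : (0:ℝ) ≤ x := le_trans (le_max_left _ _) hx
    have hxφ : φ (max M 1) ≤ x := le_trans (le_max_right _ _) hx
    by_contra h
    push_neg at h
    have h1 : ψ x < max M 1 := lt_of_lt_of_le h (le_max_left _ _)
    have := hφmono (Set.mem_Ici.mpr (hψ1 x hx0)) (Set.mem_Ici.mpr hM') h1
    rw [hψ' x (Set.mem_Ici.mpr hx0)] at this
    linarith
  have hkey : Tendsto (fun k : ℕ => ψ (c * k)) atTop atTop := by
    apply hψtop.comp
    apply Tendsto.const_mul_atTop (by linarith : (0:ℝ) < c)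
    exact tendsto_natCast_atTop_atTop
  -- eventual bound on L(2x)/L(x)
  have hc2 : Tendsto (fun x => L (2 * x) / L x) atTop (nhds 1) := hsv 2 two_pos
  have hevL : ∀ᶠ x in atTop, L (2 * x) < c * L x ∧ 1 ≤ L x := by
    filter_upwards [hc2.eventually (gt_mem_nhds hc), htop.eventually_ge_atTop 1] with x h1 h2
    have hpos : (0:ℝ) < L x := lt_of_lt_of_le zero_lt_one h2
    exact ⟨(div_lt_iff₀ hpos).mp h1, h2⟩
  filter_upwards [hkey.eventually hevL, eventually_ge_atTop 0] with k hL _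
  set n := ψ (c * k) with hn
  obtain ⟨hL2, hL1⟩ := hL
  have hck0 : (0:ℝ) ≤ c * k := mul_nonneg (by linarith) (Nat.cast_nonneg k)
  have hck10 : (0:ℝ) ≤ c * (k + 1) := mul_nonneg (by linarith) (by positivity)
  have hn1 : 1 ≤ n := hψ1 _ hck0
  have hφn : φ n = c * k := hψ' _ (Set.mem_Ici.mpr hck0)
  set N := ψ (c * (k + 1)) with hN
  have hN1 : 1 ≤ N := hψ1 _ hck10
  have hφN : φ N = c * (k + 1) := hψ' _ (Set.mem_Ici.mpr hck10)
  have hLpos : (0:ℝ) < L n := lt_of_lt_of_le zero_lt_one hL1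
  have hnpos : (0:ℝ) < n := lt_of_lt_of_le zero_lt_one hn1
  set δ := n / L n with hδ
  have hδpos : 0 < δ := div_pos hnpos hLpos
  have hδn : δ ≤ n := div_le_self (le_of_lt hnpos) hL1
  set m := n + δ with hm
  have hm1 : 1 ≤ m := by linarith
  have hm2n : m ≤ 2 * n := by linarith
  have h2n1 : (1:ℝ) ≤ 2 * n := by linarith
  -- integral bound
  have hib : ∫ u in n..m, L u / u ≤ δ * (L (2 * n) / n) := by
    have hmono' : ∀ x ∈ Set.Icc n m, L x / x ≤ L (2 * n) / n := by
      intro x hx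
      have hx1 : 1 ≤ x := le_trans hn1 hx.1
      have hLx : L x ≤ L (2 * n) :=
        hmono (Set.mem_Ici.mpr hx1) (Set.mem_Ici.mpr h2n1) (le_trans hx.2 hm2n)
      have hL2n0 : (0:ℝ) ≤ L (2 * n) := by
        have := hmono (Set.mem_Ici.mpr hn1) (Set.mem_Ici.mpr h2n1) (by linarith)
        linarith
      exact div_le_div₀ hL2n0 hLx hnpos hx.1
    calc ∫ u in n..m, L u / u ≤ ∫ _u in n..m, L (2 * n) / n := by
          apply intervalIntegral.integral_mono_on (by linarith) (hint n m hn1 hm1)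
            intervalIntegrable_const hmono'
      _ = δ * (L (2 * n) / n) := by
          rw [intervalIntegral.integral_const, smul_eq_mul]
          congr 1; linarith
  have hbnd : δ * (L (2 * n) / n) < c := by
    rw [hδ]
    have : n / L n * (L (2 * n) / n) = L (2 * n) / L n := by
      field_simp
    rw [this]
    exact (div_lt_iff₀ hLpos).mpr (by linarith)
  have hφm : φ m < c * (↑k + 1) := by
    have := hφsub n m hn1 hm1
    have h1 : φ m = φ n + ∫ u in n..m, L u / u := by linarith
    rw [h1, hφn]
    have : (c : ℝ) * (↑k + 1) = c * k + c := by ring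
    rw [this]
    linarith
  -- conclude m < N
  by_contra h
  push_neg at h
  have : φ N ≤ φ m := hφmono.monotoneOn (Set.mem_Ici.mpr hN1) (Set.mem_Ici.mpr hm1) h
  rw [hφN] at this
  linarith
end

section
/- Let L be slowly varying and increasing to ∞ with φ(y) = ∫_1^y L(u)/u du and ψ = φ^{-1}. For c > 0 and n_k = ψ(ck), define d_n = log L(n) + log log n. Then d_{n_k}/log k → 1 as k → ∞. -/
open Filter Real Set

private lemma intLB {L : ℝ → ℝ} (hmono : MonotoneOn L (Set.Ici 1))
    (hcont : ContinuousOn L (Set.Ici 1)) {a b : ℝ} (ha : 1 ≤ a) (hab : a ≤ b) :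
    L a * (Real.log b - Real.log a) ≤ ∫ u in a..b, L u / u := by
  have ha0 : (0:ℝ) < a := lt_of_lt_of_le one_pos ha
  have hb0 : (0:ℝ) < b := lt_of_lt_of_le ha0 hab
  have hIcc : Set.Icc a b ⊆ Set.Ici 1 := fun x hx => le_trans ha hx.1
  have hne : ∀ x ∈ Set.Icc a b, x ≠ 0 := fun x hx => (lt_of_lt_of_le ha0 hx.1).ne'
  have hint2 : IntervalIntegrable (fun u => L u / u) MeasureTheory.volume a b := by
    apply ContinuousOn.intervalIntegrable
    rw [Set.uIcc_of_le hab]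
    exact (hcont.mono hIcc).div continuousOn_id hne
  have hint1 : IntervalIntegrable (fun u => L a / u) MeasureTheory.volume a b := by
    apply ContinuousOn.intervalIntegrable
    rw [Set.uIcc_of_le hab]
    exact continuousOn_const.div continuousOn_id hne
  have hmono' : (∫ u in a..b, L a / u) ≤ ∫ u in a..b, L u / u := by
    refine intervalIntegral.integral_mono_on hab hint1 hint2 (fun x hx => ?_)
    have hx0 : (0:ℝ) < x := lt_of_lt_of_le ha0 hx.1
    have : L a ≤ L x := hmono (Set.mem_Ici.2 ha) (hIcc hx) hx.1
    gcongr
  have hcalc : (∫ u in a..b, L a / u) = L a * (Real.log b - Real.log a) := by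
    have : (∫ u in a..b, L a / u) = L a * ∫ u in a..b, 1 / u := by
      rw [← intervalIntegral.integral_const_mul]
      simp [div_eq_mul_inv, mul_one_div]
    rw [this, integral_one_div_of_pos ha0 hb0, Real.log_div hb0.ne' ha0.ne']
  linarith

private lemma intUB {L : ℝ → ℝ} (hmono : MonotoneOn L (Set.Ici 1))
    (hcont : ContinuousOn L (Set.Ici 1)) {a b : ℝ} (ha : 1 ≤ a) (hab : a ≤ b) :
    (∫ u in a..b, L u / u) ≤ L b * (Real.log b - Real.log a) := by
  have ha0 : (0:ℝ) < a := lt_of_lt_of_le one_pos ha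
  have hb0 : (0:ℝ) < b := lt_of_lt_of_le ha0 hab
  have hIcc : Set.Icc a b ⊆ Set.Ici 1 := fun x hx => le_trans ha hx.1
  have hne : ∀ x ∈ Set.Icc a b, x ≠ 0 := fun x hx => (lt_of_lt_of_le ha0 hx.1).ne'
  have hint2 : IntervalIntegrable (fun u => L u / u) MeasureTheory.volume a b := by
    apply ContinuousOn.intervalIntegrable
    rw [Set.uIcc_of_le hab]
    exact (hcont.mono hIcc).div continuousOn_id hne
  have hint1 : IntervalIntegrable (fun u => L b / u) MeasureTheory.volume a b := by
    apply ContinuousOn.intervalIntegrable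
    rw [Set.uIcc_of_le hab]
    exact continuousOn_const.div continuousOn_id hne
  have hmono' : (∫ u in a..b, L u / u) ≤ ∫ u in a..b, L b / u := by
    refine intervalIntegral.integral_mono_on hab hint2 hint1 (fun x hx => ?_)
    have hx0 : (0:ℝ) < x := lt_of_lt_of_le ha0 hx.1
    have : L x ≤ L b := hmono (hIcc hx) (Set.mem_Ici.2 (le_trans ha hab)) hx.2
    gcongr
  have hcalc : (∫ u in a..b, L b / u) = L b * (Real.log b - Real.log a) := by
    have : (∫ u in a..b, L b / u) = L b * ∫ u in a..b, 1 / u := by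
      rw [← intervalIntegral.integral_const_mul]
      simp [div_eq_mul_inv, mul_one_div]
    rw [this, integral_one_div_of_pos ha0 hb0, Real.log_div hb0.ne' ha0.ne']
  linarith

private lemma phidiff {L φ : ℝ → ℝ} (hcont : ContinuousOn L (Set.Ici 1))
    (hφ : ∀ t, φ t = ∫ u in (1:ℝ)..t, L u / u) {a b : ℝ} (ha : 1 ≤ a) (hab : a ≤ b) :
    φ b - φ a = ∫ u in a..b, L u / u := by
  have hint : ∀ p q : ℝ, 1 ≤ p → p ≤ q →
      IntervalIntegrable (fun u => L u / u) MeasureTheory.volume p q := by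
    intro p q hp hpq
    have hp0 : (0:ℝ) < p := lt_of_lt_of_le one_pos hp
    apply ContinuousOn.intervalIntegrable
    rw [Set.uIcc_of_le hpq]
    exact (hcont.mono (fun x hx => le_trans hp hx.1)).div continuousOn_id
      (fun x hx => (lt_of_lt_of_le hp0 hx.1).ne')
  have := intervalIntegral.integral_add_adjacent_intervals (hint 1 a le_rfl ha)
    (hint a b (le_trans le_rfl ha) hab)
  rw [hφ, hφ]
  linarith

private lemma mvtlog {L : ℝ → ℝ} (hdiff : DifferentiableOn ℝ L (Set.Ici 1))
    {s t : ℝ} (hst : s < t) (hs1 : 1 < Real.exp s)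
    (hLpos : ∀ u, s ≤ u → 0 < L (Real.exp u)) :
    ∃ ξ ∈ Set.Ioo s t,
      Real.exp ξ * deriv L (Real.exp ξ) / L (Real.exp ξ) =
        (Real.log (L (Real.exp t)) - Real.log (L (Real.exp s))) / (t - s) := by
  have hD : ∀ u, s ≤ u → HasDerivAt (fun x => Real.log (L (Real.exp x)))
      (Real.exp u * deriv L (Real.exp u) / L (Real.exp u)) u := by
    intro u hu
    have h1u : 1 < Real.exp u := lt_of_lt_of_le hs1 (Real.exp_le_exp.2 hu)
    have hLd : HasDerivAt L (deriv L (Real.exp u)) (Real.exp u) :=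
      (hdiff.differentiableAt (Ici_mem_nhds h1u)).hasDerivAt
    have hcomp : HasDerivAt (fun x => L (Real.exp x))
        (deriv L (Real.exp u) * Real.exp u) u :=
      hLd.comp u (Real.hasDerivAt_exp u)
    have := hcomp.log (hLpos u hu).ne'
    convert this using 1
    ring
  obtain ⟨ξ, hξ, heq⟩ := exists_hasDerivAt_eq_slope (fun x => Real.log (L (Real.exp x)))
    (fun u => Real.exp u * deriv L (Real.exp u) / L (Real.exp u)) hst
    (fun u hu => (hD u hu.1).continuousAt.continuousWithinAt)
    (fun u hu => hD u hu.1.le)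
  exact ⟨ξ, hξ, heq⟩

set_option maxHeartbeats 1000000 in
theorem stmt15 (L : ℝ → ℝ)
    (hdiff : DifferentiableOn ℝ L (Set.Ici 1))
    (hmono : MonotoneOn L (Set.Ici 1))
    (htop : Tendsto L atTop atTop)
    (hsv : SlowlyVarying L)
    (hdec : ∃ x₀ : ℝ, AntitoneOn (fun x => x * deriv L x / L x) (Set.Ici x₀))
    (φ ψ : ℝ → ℝ) (hφ : ∀ t, φ t = ∫ u in (1:ℝ)..t, L u / u)
    (hφmono : StrictMonoOn φ (Set.Ici 1))
    (hφtop : Tendsto φ atTop atTop)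
    (hψ : ∀ y ∈ Set.Ici (1:ℝ), ψ (φ y) = y)
    (hψ' : ∀ x ∈ Set.Ici (0:ℝ), φ (ψ x) = x)
    (c : ℝ) (hc : 0 < c) :
    Tendsto (fun k : ℕ => ψ (c * (k + 1)) / ψ (c * k)) atTop (nhds 1) ∧
    Tendsto
      (fun k : ℕ =>
        (Real.log (L (ψ (c * k))) + Real.log (Real.log (ψ (c * k)))) / Real.log k)
      atTop (nhds 1) := by
  have hLc : ContinuousOn L (Set.Ici 1) := hdiff.continuousOn
  obtain ⟨x₁', hx₁'⟩ := eventually_atTop.mp (htop.eventually_ge_atTop 1)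
  have hφ1 : φ 1 = 0 := by rw [hφ]; simp
  -- continuity of φ on [1, y]
  have hφcont : ∀ y : ℝ, 1 ≤ y → ContinuousOn φ (Set.Icc 1 y) := by
    intro y hy
    have hI : Set.uIcc (1:ℝ) y = Set.Icc 1 y := Set.uIcc_of_le hy
    have hintOn : MeasureTheory.IntegrableOn (fun u => L u / u) (Set.uIcc 1 y)
        MeasureTheory.volume := by
      rw [hI]
      apply ContinuousOn.integrableOn_Icc
      exact (hLc.mono fun x hx => hx.1).div continuousOn_id
        (fun x hx => (lt_of_lt_of_le one_pos hx.1).ne')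
    have h := intervalIntegral.continuousOn_primitive_interval hintOn
    rw [hI] at h
    exact h.congr (fun x _ => hφ x)
  have hψ1 : ∀ x : ℝ, 0 ≤ x → 1 ≤ ψ x := by
    intro x hx
    obtain ⟨y', hy'⟩ := eventually_atTop.mp (hφtop.eventually_ge_atTop x)
    have hy1 : (1:ℝ) ≤ max 1 y' := le_max_left _ _
    have hyx : x ≤ φ (max 1 y') := hy' _ (le_max_right _ _)
    have hmem : x ∈ Set.Icc (φ 1) (φ (max 1 y')) := ⟨by rw [hφ1]; exact hx, hyx⟩
    obtain ⟨w, hw, hwx⟩ := intermediate_value_Icc hy1 (hφcont _ hy1) hmem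
    have h := hψ w hw.1
    rw [hwx] at h
    rw [h]
    exact hw.1
  have hψle : ∀ x x' : ℝ, 0 ≤ x → x ≤ x' → ψ x ≤ ψ x' := by
    intro x x' hx hxx'
    by_contra h
    push_neg at h
    have h1 : φ (ψ x') < φ (ψ x) :=
      hφmono (hψ1 x' (le_trans hx hxx')) (hψ1 x hx) h
    rw [hψ' x hx, hψ' x' (le_trans hx hxx')] at h1
    linarith
  have hNtop : Tendsto (fun k : ℕ => ψ (c * k)) atTop atTop := by
    rw [tendsto_atTop]
    intro M
    have hck : Tendsto (fun k : ℕ => c * k) atTop atTop :=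
      (tendsto_natCast_atTop_atTop (R := ℝ)).const_mul_atTop hc
    filter_upwards [hck.eventually_ge_atTop (φ (max M 1))] with k hk
    have hck0 : (0:ℝ) ≤ c * k := mul_nonneg hc.le (Nat.cast_nonneg k)
    by_contra h
    push_neg at h
    have hlt : ψ (c * k) < max M 1 := lt_of_lt_of_le h (le_max_left M 1)
    have h2 : φ (ψ (c * k)) < φ (max M 1) :=
      hφmono (hψ1 _ hck0) (le_max_right M 1) hlt
    rw [hψ' _ hck0] at h2
    linarith
  have hck0 : ∀ k : ℕ, (0:ℝ) ≤ c * k := fun k => mul_nonneg hc.le (Nat.cast_nonneg k)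
  have hck0' : ∀ k : ℕ, (0:ℝ) ≤ c * (k + 1) := fun k => by positivity
  constructor
  · -- Part 1
    have hLN : Tendsto (fun k : ℕ => L (ψ (c * k))) atTop atTop := htop.comp hNtop
    have hupper : Tendsto (fun k : ℕ => Real.exp (c / L (ψ (c * k)))) atTop (nhds 1) := by
      have h0 : Tendsto (fun k : ℕ => c / L (ψ (c * k))) atTop (nhds 0) :=
        tendsto_const_nhds.div_atTop hLN
      have h1 := (Real.continuous_exp.tendsto 0).comp h0
      rwa [Real.exp_zero] at h1
    refine tendsto_of_tendsto_of_tendsto_of_le_of_le' tendsto_const_nhds hupper ?_ ?_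
    · filter_upwards with k
      have ha1 : 1 ≤ ψ (c * k) := hψ1 _ (hck0 k)
      have hab : ψ (c * k) ≤ ψ (c * (k + 1)) := hψle _ _ (hck0 k)
        (mul_le_mul_of_nonneg_left (by linarith : (k:ℝ) ≤ (k:ℝ) + 1) hc.le)
      rw [le_div_iff₀ (by linarith : (0:ℝ) < ψ (c * k)), one_mul]
      exact hab
    · filter_upwards [hLN.eventually_ge_atTop 1] with k hk
      have ha1 : 1 ≤ ψ (c * k) := hψ1 _ (hck0 k)
      have hab : ψ (c * k) ≤ ψ (c * (k + 1)) := hψle _ _ (hck0 k)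
        (mul_le_mul_of_nonneg_left (by linarith : (k:ℝ) ≤ (k:ℝ) + 1) hc.le)
      have hb1 : 1 ≤ ψ (c * (k + 1)) := le_trans ha1 hab
      have hdφ : φ (ψ (c * (k + 1))) - φ (ψ (c * k)) = c := by
        rw [hψ' _ (hck0' k), hψ' _ (hck0 k)]; ring
      have hLB := intLB hmono hLc ha1 hab
      rw [← phidiff hLc hφ ha1 hab, hdφ] at hLB
      have hLpos : (0:ℝ) < L (ψ (c * k)) := by linarith
      have hlog : Real.log (ψ (c * (k + 1))) - Real.log (ψ (c * k)) ≤ c / L (ψ (c * k)) := by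
        rw [le_div_iff₀ hLpos, mul_comm]
        exact hLB
      have heq : ψ (c * (k + 1)) / ψ (c * k)
          = Real.exp (Real.log (ψ (c * (k + 1))) - Real.log (ψ (c * k))) := by
        rw [Real.exp_sub, Real.exp_log (by linarith), Real.exp_log (by linarith)]
      rw [heq]
      exact Real.exp_le_exp.2 hlog
  · -- Part 2
    have hUB : ∀ᶠ y in atTop, Real.log (φ y) ≤ Real.log (L y) + Real.log (Real.log y) := by
      filter_upwards [eventually_ge_atTop (max x₁' (Real.exp 1)), eventually_gt_atTop 1]
        with y hy hy1
      have hLy : 1 ≤ L y := hx₁' y (le_trans (le_max_left _ _) hy)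
      have hlogy : 1 ≤ Real.log y := by
        have h := Real.log_le_log (Real.exp_pos 1) (le_trans (le_max_right _ _) hy)
        rwa [Real.log_exp] at h
      have hφpos : 0 < φ y := by
        rw [← hφ1]
        exact hφmono (Set.mem_Ici.2 le_rfl) (Set.mem_Ici.2 hy1.le) hy1
      have hφub : φ y ≤ L y * Real.log y := by
        have h := intUB hmono hLc le_rfl hy1.le
        rw [← hφ y] at h
        simpa [Real.log_one] using h
      have h := Real.log_le_log hφpos hφub
      rwa [Real.log_mul (by linarith) (by linarith)] at h
    have hKEY : ∀ b : ℝ, 1 < b → ∀ᶠ y in atTop,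
        Real.log (L y) + Real.log (Real.log y) ≤ b * Real.log (φ y) := by
      intro b hb
      obtain ⟨x₀, hg⟩ := hdec
      set ε := min (1/4 : ℝ) ((b - 1) / 8) with hεdef
      have hε0 : 0 < ε := lt_min (by norm_num) (by linarith)
      have hε4 : ε ≤ 1/4 := min_le_left _ _
      have hεb : ε ≤ (b - 1) / 8 := min_le_right _ _
      have h2ε : (0:ℝ) < 1 - 2 * ε := by linarith
      set δ := ε / (1 - 2 * ε) with hδdef
      have hδ0 : 0 ≤ δ := div_nonneg hε0.le h2ε.le
      have hδ2ε : δ ≤ 2 * ε := by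
        rw [hδdef, div_le_iff₀ h2ε]
        nlinarith [mul_nonneg hε0.le (show (0:ℝ) ≤ 1 - 4 * ε by linarith)]
      have hδb : δ ≤ (b - 1) / 4 := by linarith
      set x₁ := max x₀ (max x₁' 2) with hx₁def
      have hx₁2 : (2:ℝ) ≤ x₁ := le_trans (le_max_right _ _) (le_max_right _ _)
      have hx₁0 : x₀ ≤ x₁ := le_max_left _ _
      have hLx₁ : ∀ x, x₁ ≤ x → 1 ≤ L x := fun x hx =>
        hx₁' x (le_trans (le_trans (le_max_left _ _) (le_max_right _ _)) hx)
      set C₁ := Real.log (L x₁) with hC₁def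
      have hC₁ : 0 ≤ C₁ := Real.log_nonneg (hLx₁ x₁ le_rfl)
      set K := (1 + δ) * (-Real.log ε) with hKdef
      have hK0 : 0 ≤ K := by
        have h := Real.log_nonpos hε0.le (by linarith : ε ≤ 1)
        rw [hKdef]
        exact mul_nonneg (by linarith) (by linarith)
      have e1 : ∀ᶠ y in atTop, Real.log x₁ + 1 ≤ ε * Real.log y :=
        (Real.tendsto_log_atTop.const_mul_atTop hε0).eventually_ge_atTop _
      have e2 : ∀ᶠ y in atTop, 1 ≤ Real.log y := Real.tendsto_log_atTop.eventually_ge_atTop 1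
      have e3 : ∀ᶠ y in atTop, max 1 (2 * K / (b - 1)) ≤ Real.log (φ y) :=
        (Real.tendsto_log_atTop.comp hφtop).eventually_ge_atTop _
      filter_upwards [e1, e2, e3, eventually_gt_atTop 1] with y h1 h2 h3 h4
      set P := Real.log y with hPdef
      have hP1 : 1 ≤ P := h2
      have hy0 : (0:ℝ) < y := lt_trans one_pos h4
      have hlogx₁ : 0 < Real.log x₁ := Real.log_pos (by linarith)
      have hεP1 : 1 ≤ ε * P := by linarith
      have hsub : (1 - ε) * P = P - ε * P := by ring
      have hsub2 : (1 - 2 * ε) * P = P - 2 * (ε * P) := by ring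
      have hεP4 : ε * P ≤ 1 / 4 * P := mul_le_mul_of_nonneg_right hε4 (by linarith)
      set z := Real.exp ((1 - ε) * P) with hzdef
      have hz0 : (0:ℝ) < z := Real.exp_pos _
      have hlogz : Real.log z = (1 - ε) * P := Real.log_exp _
      have hεhalf : ε * P ≤ (1 - ε) * P := by linarith
      have hx₁z : x₁ < z := by
        have hlt : Real.log x₁ < (1 - ε) * P := by linarith
        calc x₁ = Real.exp (Real.log x₁) := (Real.exp_log (by linarith)).symm
          _ < z := by rw [hzdef]; exact Real.exp_lt_exp.2 hlt
      have hz1 : (1:ℝ) ≤ z := by linarith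
      have hzy : z < y := by
        have hlt : (1 - ε) * P < P := by linarith
        calc z < Real.exp P := by rw [hzdef]; exact Real.exp_lt_exp.2 hlt
          _ = y := Real.exp_log hy0
      have hLz1 : 1 ≤ L z := hLx₁ z hx₁z.le
      have hLy1 : 1 ≤ L y := hLx₁ y (by linarith)
      set A := Real.log (L z) with hAdef
      set B := Real.log (L y) with hBdef
      have hCA : C₁ ≤ A := by
        rw [hC₁def, hAdef]
        exact Real.log_le_log (by linarith [hLx₁ x₁ le_rfl])
          (hmono (Set.mem_Ici.2 (by linarith)) (Set.mem_Ici.2 hz1) hx₁z.le)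
      -- MVT on [(1-ε)P, P]
      obtain ⟨ξ, hξ, hξeq⟩ := mvtlog hdiff (show (1 - ε) * P < P by linarith)
        (by rw [← hzdef]; linarith)
        (fun u hu => by
          have hzu : z ≤ Real.exp u := by rw [hzdef]; exact Real.exp_le_exp.2 hu
          linarith [hLx₁ _ (le_trans hx₁z.le hzu)])
      rw [show Real.exp P = y from Real.exp_log hy0, ← hzdef] at hξeq
      have hzξ : z ≤ Real.exp ξ := by
        rw [hzdef]; exact (Real.exp_le_exp.2 hξ.1.le)
      have hgz1 : Real.exp ξ * deriv L (Real.exp ξ) / L (Real.exp ξ) ≤ z * deriv L z / L z := by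
        have h := hg (Set.mem_Ici.2 (le_trans hx₁0 hx₁z.le))
          (Set.mem_Ici.2 (le_trans (le_trans hx₁0 hx₁z.le) hzξ)) hzξ
        simpa using h
      have hεPne : P - (1 - ε) * P ≠ 0 := by
        have : (0:ℝ) < P - (1 - ε) * P := by linarith
        exact this.ne'
      have hBA : B - A ≤ (z * deriv L z / L z) * (ε * P) := by
        have h6 : B - A = (Real.exp ξ * deriv L (Real.exp ξ) / L (Real.exp ξ)) *
            (P - (1 - ε) * P) := by
          rw [hξeq, div_mul_cancel₀ _ hεPne]
        have h7 : (Real.exp ξ * deriv L (Real.exp ξ) / L (Real.exp ξ)) * (P - (1 - ε) * P)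
            ≤ (z * deriv L z / L z) * (P - (1 - ε) * P) :=
          mul_le_mul_of_nonneg_right hgz1 (by linarith)
        have h8 : (z * deriv L z / L z) * (P - (1 - ε) * P)
            = (z * deriv L z / L z) * (ε * P) := by ring_nf
        linarith [h6, h7, h8.symm.le, h8.le]
      -- MVT on [log x₁, (1-ε)P]
      have hQpos : 0 < (1 - ε) * P - Real.log x₁ := by linarith
      obtain ⟨ξ', hξ', hξ'eq⟩ := mvtlog hdiff (show Real.log x₁ < (1 - ε) * P by linarith)
        (by rw [Real.exp_log (by linarith : (0:ℝ) < x₁)]; linarith)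
        (fun u hu => by
          have hxu : x₁ ≤ Real.exp u := by
            calc x₁ = Real.exp (Real.log x₁) := (Real.exp_log (by linarith)).symm
              _ ≤ Real.exp u := Real.exp_le_exp.2 hu
          linarith [hLx₁ _ hxu])
      rw [← hzdef, Real.exp_log (by linarith : (0:ℝ) < x₁)] at hξ'eq
      have hξ'z : Real.exp ξ' ≤ z := by
        rw [hzdef]; exact Real.exp_le_exp.2 hξ'.2.le
      have hξ'x₁ : x₁ ≤ Real.exp ξ' := by
        calc x₁ = Real.exp (Real.log x₁) := (Real.exp_log (by linarith)).symm
          _ ≤ Real.exp ξ' := Real.exp_le_exp.2 hξ'.1.le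
      have hgz2 : z * deriv L z / L z ≤ Real.exp ξ' * deriv L (Real.exp ξ') / L (Real.exp ξ') := by
        have h := hg (Set.mem_Ici.2 (le_trans hx₁0 hξ'x₁))
          (Set.mem_Ici.2 (le_trans hx₁0 hx₁z.le)) hξ'z
        simpa using h
      have hQne : (1 - ε) * P - Real.log x₁ ≠ 0 := hQpos.ne'
      have hAC : A - C₁ = (Real.exp ξ' * deriv L (Real.exp ξ') / L (Real.exp ξ')) *
          ((1 - ε) * P - Real.log x₁) := by
        rw [hξ'eq, div_mul_cancel₀ _ hQne]
      have h9 : (z * deriv L z / L z) * ((1 - ε) * P - Real.log x₁) ≤ A - C₁ := by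
        rw [hAC]
        exact mul_le_mul_of_nonneg_right hgz2 hQpos.le
      have h10 : z * deriv L z / L z ≤ (A - C₁) / ((1 - ε) * P - Real.log x₁) :=
        (le_div_iff₀ hQpos).2 h9
      have hACnn : 0 ≤ A - C₁ := by linarith
      have hQges : (1 - 2 * ε) * P ≤ (1 - ε) * P - Real.log x₁ := by linarith
      have h2εP : 0 < (1 - 2 * ε) * P := by linarith
      have h11 : (A - C₁) / ((1 - ε) * P - Real.log x₁) ≤ (A - C₁) / ((1 - 2 * ε) * P) := by
        gcongr
      have h12 : B - A ≤ δ * (A - C₁) := by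
        have hchain : (z * deriv L z / L z) * (ε * P)
            ≤ ((A - C₁) / ((1 - 2 * ε) * P)) * (ε * P) :=
          mul_le_mul_of_nonneg_right (le_trans h10 h11) (by linarith)
        have heq2 : ((A - C₁) / ((1 - 2 * ε) * P)) * (ε * P) = δ * (A - C₁) := by
          rw [hδdef]
          field_simp
        linarith [hBA, hchain, heq2.le]
      -- lower bound on φ y
      have hφz : 0 < φ z := by
        rw [← hφ1]
        exact hφmono (Set.mem_Ici.2 le_rfl) (Set.mem_Ici.2 hz1) (by linarith)
      have hintlb := intLB hmono hLc hz1 hzy.le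
      have hpd := phidiff hLc hφ hz1 hzy.le
      have hlydiff : Real.log y - Real.log z = ε * P := by rw [hlogz, ← hPdef]; ring
      have hφy : L z * (ε * P) < φ y := by
        rw [hlydiff] at hintlb
        linarith
      have hF : A + (Real.log ε + Real.log P) ≤ Real.log (φ y) := by
        have h0 : (0:ℝ) < L z * (ε * P) := mul_pos (by linarith) (by linarith)
        have h := Real.log_le_log h0 hφy.le
        rw [Real.log_mul (by linarith) (by positivity),
          Real.log_mul hε0.ne' (by linarith : P ≠ 0)] at h
        linarith
      set F := Real.log (φ y) with hFdef
      have hF1 : 1 ≤ F := le_trans (le_max_left _ _) h3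
      have hFK : 2 * K / (b - 1) ≤ F := le_trans (le_max_right _ _) h3
      have hlogP : 0 ≤ Real.log P := Real.log_nonneg hP1
      have hBfin : B ≤ (1 + δ) * A - δ * C₁ := by
        have hexp12 : (1 + δ) * A - δ * C₁ = A + δ * (A - C₁) := by ring
        linarith
      have hAF : A ≤ F - Real.log ε - Real.log P := by linarith
      have hKF : K ≤ (b - 1) / 2 * F := by
        rw [div_le_iff₀ (by linarith : (0:ℝ) < b - 1)] at hFK
        have : (b - 1) / 2 * F = F * (b - 1) / 2 := by ring
        linarith
      have hmul1 : (1 + δ) * A ≤ (1 + δ) * (F - Real.log ε - Real.log P) :=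
        mul_le_mul_of_nonneg_left hAF (by linarith)
      have hmul2 : 0 ≤ δ * Real.log P := mul_nonneg hδ0 hlogP
      have hmul3 : 0 ≤ δ * C₁ := mul_nonneg hδ0 hC₁
      have hBP : B + Real.log P ≤ (1 + δ) * F + K := by
        have hexp : (1 + δ) * (F - Real.log ε - Real.log P) - δ * C₁ + Real.log P
            = (1 + δ) * F + K - δ * Real.log P - δ * C₁ := by rw [hKdef]; ring
        linarith
      have hmul4 : (1 + δ) * F ≤ (1 + (b - 1) / 4) * F :=
        mul_le_mul_of_nonneg_right (by linarith) (by linarith)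
      have hfin : (1 + (b - 1) / 4) * F + (b - 1) / 2 * F ≤ b * F := by
        have h0 := mul_nonneg (show (0:ℝ) ≤ (b - 1) / 4 by linarith)
          (show (0:ℝ) ≤ F by linarith)
        have hexp : b * F - ((1 + (b - 1) / 4) * F + (b - 1) / 2 * F) = (b - 1) / 4 * F := by
          ring
        linarith
      linarith
    -- assemble part 2
    have hlogk : Tendsto (fun k : ℕ => Real.log (k : ℝ)) atTop atTop :=
      Real.tendsto_log_atTop.comp tendsto_natCast_atTop_atTop
    have hlck : Tendsto (fun k : ℕ => Real.log (c * k) / Real.log k) atTop (nhds 1) := by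
      have h2 : Tendsto (fun k : ℕ => Real.log c / Real.log (k : ℝ)) atTop (nhds 0) :=
        tendsto_const_nhds.div_atTop hlogk
      have h3 : Tendsto (fun k : ℕ => 1 + Real.log c / Real.log (k : ℝ)) atTop (nhds 1) := by
        simpa using tendsto_const_nhds.add h2
      refine h3.congr' ?_
      filter_upwards [eventually_ge_atTop 1, hlogk.eventually_gt_atTop 0] with k hk hlk
      have hk0 : (k : ℝ) ≠ 0 := by positivity
      rw [Real.log_mul hc.ne' hk0]
      field_simp
      ring
    have hDbound : ∀ b : ℝ, 1 < b → ∀ᶠ k : ℕ in atTop,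
        Real.log (c * k) ≤ Real.log (L (ψ (c * k))) + Real.log (Real.log (ψ (c * k))) ∧
        Real.log (L (ψ (c * k))) + Real.log (Real.log (ψ (c * k))) ≤ b * Real.log (c * k) := by
      intro b hb
      filter_upwards [hNtop.eventually hUB, hNtop.eventually (hKEY b hb)] with k hk1 hk2
      have hrw : φ (ψ (c * k)) = c * k := hψ' _ (hck0 k)
      rw [hrw] at hk1 hk2
      exact ⟨hk1, hk2⟩
    refine tendsto_order.2 ⟨?_, ?_⟩
    · intro a ha
      filter_upwards [hDbound 2 one_lt_two, hlck.eventually (eventually_gt_nhds ha),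
        hlogk.eventually_gt_atTop 0] with k hk hlck' hlk
      calc a < Real.log (c * k) / Real.log k := hlck'
        _ ≤ (Real.log (L (ψ (c * k))) + Real.log (Real.log (ψ (c * k)))) / Real.log k := by
          gcongr
          exact hk.1
    · intro b' hb'
      have hb : 1 < (1 + b') / 2 := by linarith
      have hlt : (1 + b') / 2 < b' := by linarith
      have htends : Tendsto (fun k : ℕ => (1 + b') / 2 * (Real.log (c * k) / Real.log k))
          atTop (nhds ((1 + b') / 2)) := by
        simpa using hlck.const_mul ((1 + b') / 2)
      filter_upwards [hDbound _ hb, htends.eventually (eventually_lt_nhds hlt),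
        hlogk.eventually_gt_atTop 0] with k hk h2 hlk
      have hle : (Real.log (L (ψ (c * k))) + Real.log (Real.log (ψ (c * k)))) / Real.log k
          ≤ (1 + b') / 2 * (Real.log (c * k) / Real.log k) := by
        rw [mul_div_assoc']
        gcongr
        exact hk.2
      linarith
end

section
/- Let X be a nonnegative random variable, L slowly varying and increasing to ∞ with φ(y) = ∫_1^y L(u)/u du, ψ = φ^{-1}, c > 1, n_k = ψ(ck), and f an increasing function with asymptotic inverse f^{(-1)}. If E f^{(-1)}(X²) < ∞, then Σ_{k} (n_k/L(n_k))·P(X > η·√(f(n_k))) < ∞ for every η > 0. -/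
open MeasureTheory ProbabilityTheory Filter Real
open scoped ENNReal

lemma slowvar_le_self (L : ℝ → ℝ) (hmono : MonotoneOn L (Set.Ici 1))
    (htop : Tendsto L atTop atTop) (hsv : SlowlyVarying L) :
    ∀ᶠ x in atTop, L x ≤ x := by
  have h32 : ∀ᶠ x in atTop, L (2 * x) / L x ≤ 3/2 :=
    (hsv 2 two_pos).eventually (eventually_le_nhds (by norm_num))
  have hpos : ∀ᶠ x in atTop, 0 < L x := htop.eventually_gt_atTop 0
  obtain ⟨x₁, hx₁⟩ := (((h32.and hpos).and (eventually_ge_atTop 1)).and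
    (eventually_ge_atTop 0)).exists_forall_of_atTop
  have hx₁1 : (1:ℝ) ≤ x₁ := by
    have := (hx₁ x₁ le_rfl).1.2
    linarith [(hx₁ x₁ le_rfl).2]
  have hx₁pos : (0:ℝ) < x₁ := by linarith
  have hLx₁pos : 0 < L x₁ := (hx₁ x₁ le_rfl).1.1.2
  have key : ∀ m : ℕ, L (2^m * x₁) ≤ (3/2)^m * L x₁ := by
    intro m
    induction m with
    | zero => simp
    | succ m ih =>
      have h2m : x₁ ≤ 2^m * x₁ := le_mul_of_one_le_left hx₁pos.le (one_le_pow₀ one_le_two)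
      have := (hx₁ _ h2m).1.1.1
      have hp : 0 < L (2^m * x₁) := (hx₁ _ h2m).1.1.2
      have h1 : L (2 * (2^m * x₁)) ≤ 3/2 * L (2^m * x₁) := by
        rw [div_le_iff₀ hp] at this; linarith
      calc L (2^(m+1) * x₁) = L (2 * (2^m * x₁)) := by ring_nf
        _ ≤ 3/2 * L (2^m * x₁) := h1
        _ ≤ 3/2 * ((3/2)^m * L x₁) := by nlinarith
        _ = (3/2)^(m+1) * L x₁ := by ring
  obtain ⟨m₀, hm₀⟩ : ∃ m₀ : ℕ, ∀ m ≥ m₀, (3/2:ℝ)^(m+1) * L x₁ ≤ 2^m * x₁ := by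
    have h43 : Tendsto (fun m : ℕ => (4/3:ℝ)^m) atTop atTop :=
      tendsto_pow_atTop_atTop_of_one_lt (by norm_num)
    obtain ⟨m₀, hm₀⟩ := (h43.eventually_ge_atTop ((3/2) * L x₁ / x₁)).exists_forall_of_atTop
    refine ⟨m₀, fun m hm => ?_⟩
    have := hm₀ m hm
    have h2 : (0:ℝ) < (3:ℝ)^m := by positivity
    have hpow : (4/3:ℝ)^m = (2:ℝ)^m / (3/2)^m := by
      rw [div_pow, div_pow]
      field_simp
      rw [show (4:ℝ)^m = (2^2:ℝ)^m by norm_num, ← pow_mul]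
      ring
    rw [hpow, div_le_div_iff₀ (by positivity) (by positivity)] at this
    have h32p : (0:ℝ) < (3/2:ℝ)^m := by positivity
    calc (3/2:ℝ)^(m+1) * L x₁ = (3/2) * L x₁ * (3/2)^m := by ring
      _ ≤ 2^m * x₁ := this
  rw [eventually_atTop]
  refine ⟨2^m₀ * x₁, fun x hx => ?_⟩
  set n : ℕ := ⌊x / x₁⌋₊ with hn
  have hxpos : 0 < x := lt_of_lt_of_le (by positivity) hx
  have hfl : (2:ℝ)^m₀ ≤ x / x₁ := (le_div_iff₀ hx₁pos).mpr hx
  have hn_ge : 2^m₀ ≤ n := by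
    apply Nat.le_floor
    push_cast
    exact hfl
  have hn1 : 1 ≤ n := le_trans (Nat.one_le_two_pow) hn_ge
  set m : ℕ := Nat.log 2 n with hm
  have hm_ge : m₀ ≤ m := by
    have := Nat.log_mono_right (b := 2) hn_ge
    rwa [Nat.log_pow (by norm_num)] at this
  have hlow : (2:ℝ)^m * x₁ ≤ x := by
    have h1 : (2:ℕ)^m ≤ n := Nat.pow_log_le_self 2 (by omega)
    have h2 : ((2:ℝ))^m ≤ (n:ℝ) := by exact_mod_cast h1
    have h3 : (n:ℝ) ≤ x / x₁ := Nat.floor_le (by positivity)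
    rw [← le_div_iff₀ hx₁pos]
    linarith
  have hhigh : x < 2^(m+1) * x₁ := by
    have h1 : n < 2^(m+1) := Nat.lt_pow_succ_log_self (by norm_num) n
    have h2 : (n:ℝ) + 1 ≤ (2:ℝ)^(m+1) := by exact_mod_cast Nat.succ_le_of_lt h1
    have h3 : x / x₁ < (n:ℝ) + 1 := Nat.lt_floor_add_one _
    rw [← div_lt_iff₀ hx₁pos]
    linarith
  have hx1le : (1:ℝ) ≤ x := le_trans hx₁1 (le_trans (le_mul_of_one_le_left hx₁pos.le (one_le_pow₀ one_le_two)) hx)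
  have hLmono : L x ≤ L (2^(m+1) * x₁) := hmono hx1le (le_trans hx1le hhigh.le) hhigh.le
  calc L x ≤ L (2^(m+1) * x₁) := hLmono
    _ ≤ (3/2)^(m+1) * L x₁ := key (m+1)
    _ ≤ 2^m * x₁ := hm₀ m hm_ge
    _ ≤ x := hlow

set_option maxHeartbeats 2000000 in
theorem stmt17 {Ω : Type*} [MeasurableSpace Ω] (P : Measure Ω) [IsProbabilityMeasure P]
    (X : Ω → ℝ) (hXpos : ∀ ω, 0 ≤ X ω) (hmeas : Measurable X)
    (L : ℝ → ℝ)
    (hdiff : DifferentiableOn ℝ L (Set.Ici 1))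
    (hmono : MonotoneOn L (Set.Ici 1))
    (htop : Tendsto L atTop atTop)
    (hsv : SlowlyVarying L)
    (hdec : ∃ x₀ : ℝ, AntitoneOn (fun x => x * deriv L x / L x) (Set.Ici x₀))
    (φ ψ : ℝ → ℝ) (hφ : ∀ t, φ t = ∫ u in (1:ℝ)..t, L u / u)
    (hψ : ∀ y ∈ Set.Ici (1:ℝ), ψ (φ y) = y)
    (hψ' : ∀ x ∈ Set.Ici (0:ℝ), φ (ψ x) = x)
    (c : ℝ) (hc : 1 < c)
    (f finv : ℝ → ℝ)
    (hf : ∀ᶠ x in atTop,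
      f x = min ((x / L x) * (Real.log (L x) + Real.log (Real.log x))) x)
    (hfmono : ∃ x₀ : ℝ, MonotoneOn f (Set.Ici x₀))
    (hfinvmono : ∃ y₀ : ℝ, MonotoneOn finv (Set.Ici y₀))
    (hfinv : ∀ᶠ x in atTop, finv (f x) = x)
    (hmom : (∫⁻ ω, ENNReal.ofReal (finv ((X ω) ^ 2)) ∂P) < ⊤) :
    ∀ η > (0:ℝ),
      (∑' k : ℕ, ENNReal.ofReal (ψ (c * k) / L (ψ (c * k)))
          * P {ω | η * Real.sqrt (f (ψ (c * k))) < X ω}) < ⊤ := by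
  intro η hη
  -- ### φ infrastructure
  have hLcont : ContinuousOn L (Set.Ici 1) := hdiff.continuousOn
  have hcont : ContinuousOn (fun u => L u / u) (Set.Ici 1) := by
    apply hLcont.div (continuousOn_id)
    intro x hx; exact ne_of_gt (lt_of_lt_of_le one_pos hx)
  have hInt : ∀ a b : ℝ, 1 ≤ a → a ≤ b → IntervalIntegrable (fun u => L u / u) volume a b := by
    intro a b ha hab
    apply (hcont.mono ?_).intervalIntegrable
    rw [Set.uIcc_of_le hab]
    exact fun x hx => le_trans ha hx.1
  have hφdiff : ∀ a b : ℝ, 1 ≤ a → a ≤ b → φ b - φ a = ∫ u in a..b, L u / u := by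
    intro a b ha hab
    have := intervalIntegral.integral_add_adjacent_intervals (hInt 1 a le_rfl ha) (hInt a b ha hab)
    rw [hφ a, hφ b, ← this]; ring
  have hlow : ∀ a b m : ℝ, 1 ≤ a → a ≤ b → (∀ u ∈ Set.Icc a b, m ≤ L u) → 0 ≤ m →
      m * Real.log (b / a) ≤ φ b - φ a := by
    intro a b m ha hab hm hm0
    rw [hφdiff a b ha hab]
    have h0 : (0:ℝ) ∉ Set.uIcc a b := by
      rw [Set.uIcc_of_le hab]; intro h; linarith [h.1]
    calc m * Real.log (b / a) = ∫ u in a..b, m * (1/u) := by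
          rw [intervalIntegral.integral_const_mul, integral_one_div h0]
      _ ≤ ∫ u in a..b, L u / u := by
          apply intervalIntegral.integral_mono_on hab _ (hInt a b ha hab)
          · intro x hx
            have hx0 : 0 < x := lt_of_lt_of_le one_pos (le_trans ha hx.1)
            rw [mul_one_div]
            exact div_le_div_of_nonneg_right (hm x hx) hx0.le
          · exact (intervalIntegrable_const (c := m)).mul_continuousOn
              (by apply ContinuousOn.div continuousOn_const continuousOn_id;
                  intro x hx; rw [Set.uIcc_of_le hab] at hx; exact ne_of_gt (lt_of_lt_of_le one_pos (le_trans ha hx.1)))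
  have hup : ∀ a b M : ℝ, 1 ≤ a → a ≤ b → (∀ u ∈ Set.Icc a b, L u ≤ M) → 0 ≤ M →
      φ b - φ a ≤ M * (b - a) / a := by
    intro a b M ha hab hM hM0
    rw [hφdiff a b ha hab]
    have ha0 : (0:ℝ) < a := lt_of_lt_of_le one_pos ha
    calc (∫ u in a..b, L u / u) ≤ ∫ u in a..b, M / a := by
          apply intervalIntegral.integral_mono_on hab (hInt a b ha hab)
            intervalIntegrable_const
          intro x hx
          have hx0 : 0 < x := lt_of_lt_of_le ha0 hx.1
          apply div_le_div₀ (le_trans (by positivity) le_rfl) (hM x hx) ha0 hx.1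
      _ = M * (b - a) / a := by
          rw [intervalIntegral.integral_const]; rw [smul_eq_mul]; ring
  obtain ⟨u₁', hu₁'⟩ := (htop.eventually_ge_atTop (1 + 2*c)).exists_forall_of_atTop
  set u₁ : ℝ := max u₁' 1 with hu₁def
  have hu₁1 : (1:ℝ) ≤ u₁ := le_max_right _ _
  have hLu₁ : ∀ u, u₁ ≤ u → 1 + 2*c ≤ L u := fun u hu => hu₁' u (le_trans (le_max_left _ _) hu)
  have hφlt : ∀ a b : ℝ, u₁ ≤ a → a < b → φ a < φ b := by
    intro a b ha hab
    have h1a : 1 ≤ a := le_trans hu₁1 ha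
    have := hlow a b 1 h1a hab.le (fun u hu => le_trans (by linarith) (hLu₁ u (le_trans ha hu.1))) zero_le_one
    have hba : 1 < b / a := (one_lt_div (by linarith)).mpr hab
    nlinarith [Real.log_pos hba]
  have hφle : ∀ a b : ℝ, u₁ ≤ a → u₁ ≤ b → φ a ≤ φ b → a ≤ b := by
    intro a b ha hb h
    by_contra hab
    exact absurd h (not_le.mpr (hφlt b a hb (not_le.mp hab)))
  have hφbd : ∀ M : ℝ, 1 ≤ M → ∀ t ∈ Set.Icc (1:ℝ) M, φ t ≤ max (L M) 0 * (M - 1) := by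
    intro M hM t ht
    have h := hup 1 t (max (L M) 0) le_rfl ht.1 (fun u hu => le_trans (hmono (hu.1) (le_trans hu.1 (le_trans hu.2 ht.2)) (le_trans hu.2 ht.2)) (le_max_left _ _)) (le_max_right _ _)
    have hφ1 : φ 1 = 0 := by rw [hφ]; simp
    rw [hφ1] at h
    have : max (L M) 0 * (t - 1) / 1 ≤ max (L M) 0 * (M - 1) := by
      rw [div_one]
      apply mul_le_mul_of_nonneg_left (by linarith [ht.2]) (le_max_right _ _)
    linarith
  have hsurj : ∀ x : ℝ, 0 ≤ x → ∃ y, 1 ≤ y ∧ φ y = x := by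
    intro x hx
    set Y : ℝ := u₁ * Real.exp (|x - φ u₁| + 1) with hY
    have hexp1 : (1:ℝ) ≤ Real.exp (|x - φ u₁| + 1) := by
      rw [← Real.exp_zero]
      exact Real.exp_le_exp.mpr (by positivity)
    have hu₁Y : u₁ ≤ Y := le_mul_of_one_le_right (by linarith) hexp1
    have h1Y : (1:ℝ) ≤ Y := le_trans hu₁1 hu₁Y
    have hφY : x ≤ φ Y := by
      have := hlow u₁ Y 1 hu₁1 hu₁Y (fun u hu => le_trans (by linarith) (hLu₁ u hu.1)) zero_le_one
      have hYu : Y / u₁ = Real.exp (|x - φ u₁| + 1) := by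
        rw [hY, mul_div_assoc, mul_comm]
        field_simp
      rw [hYu, Real.log_exp, one_mul] at this
      have habs : x - φ u₁ ≤ |x - φ u₁| := le_abs_self _
      linarith
    have hφ1 : φ 1 = 0 := by rw [hφ]; simp
    have hφcont : ContinuousOn φ (Set.Icc 1 Y) := by
      have h1 : ContinuousOn (fun t => ∫ u in (1:ℝ)..t, L u / u) (Set.uIcc 1 Y) := by
        apply intervalIntegral.continuousOn_primitive_interval'
        · exact hInt 1 Y le_rfl h1Y
        · exact Set.left_mem_uIcc
      rw [Set.uIcc_of_le h1Y] at h1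
      exact h1.congr (fun t _ => hφ t)
    have := intermediate_value_Icc h1Y hφcont
    have hxmem : x ∈ Set.Icc (φ 1) (φ Y) := by rw [hφ1]; exact ⟨hx, hφY⟩
    obtain ⟨y, hy, hyx⟩ := this hxmem
    exact ⟨y, hy.1, hyx⟩
  have hψval : ∀ x : ℝ, 0 ≤ x → 1 ≤ ψ x ∧ φ (ψ x) = x := by
    intro x hx
    obtain ⟨y, hy1, hyx⟩ := hsurj x hx
    have : ψ x = y := by rw [← hyx, hψ y hy1]
    rw [this]
    exact ⟨hy1, hyx⟩
  set n : ℕ → ℝ := fun k => ψ (c * k) with hn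
  have hck : ∀ k : ℕ, (0:ℝ) ≤ c * k := fun k => by positivity
  have hn1 : ∀ k, 1 ≤ n k := fun k => (hψval _ (hck k)).1
  have hφn : ∀ k, φ (n k) = c * k := fun k => (hψval _ (hck k)).2
  have hntop : Tendsto n atTop atTop := by
    rw [tendsto_atTop]
    intro M
    set M' : ℝ := max M u₁ with hM'
    have hM'1 : 1 ≤ M' := le_trans hu₁1 (le_max_right _ _)
    obtain ⟨K, hK⟩ := exists_nat_gt ((max (L M') 0 * (M' - 1)) / c)
    rw [eventually_atTop]
    refine ⟨K, fun k hk => ?_⟩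
    by_contra hcon
    push_neg at hcon
    have hnM' : n k ≤ M' := le_trans hcon.le (le_max_left _ _)
    have := hφbd M' hM'1 (n k) ⟨hn1 k, hnM'⟩
    rw [hφn k] at this
    have hcpos : (0:ℝ) < c := by linarith
    have hKk : (K:ℝ) ≤ (k:ℝ) := by exact_mod_cast hk
    rw [div_lt_iff₀ hcpos] at hK
    have h1 : c * (K:ℝ) ≤ c * (k:ℝ) := by nlinarith
    linarith
  -- ### constants and eventual facts
  have hcpos : (0:ℝ) < c := by linarith
  set lam : ℝ := min (η^2) 1 / 2 with hlam
  have hmin0 : 0 < min (η^2) 1 := lt_min (by positivity) one_pos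
  have hlam0 : 0 < lam := by rw [hlam]; positivity
  have hlam1 : lam ≤ 1/2 := by
    have : min (η^2) 1 ≤ 1 := min_le_right _ _
    rw [hlam]; linarith
  have hlamlt : 2 * lam ≤ η^2 := by
    have : min (η^2) 1 ≤ η^2 := min_le_left _ _
    rw [hlam]; linarith
  have hmul : Tendsto (fun x : ℝ => lam * x) atTop atTop :=
    Tendsto.const_mul_atTop hlam0 tendsto_id
  have hLpos : ∀ᶠ x in atTop, 0 < L x := htop.eventually_gt_atTop 0
  have hsvlam : ∀ᶠ x in atTop, lam * L x ≤ η^2 * L (lam * x) := by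
    have h1 : Tendsto (fun y => L ((1/lam) * y) / L y) atTop (nhds 1) := hsv (1/lam) (by positivity)
    have h2 : ∀ᶠ y in atTop, L ((1/lam) * y) / L y ≤ η^2 / lam := by
      apply h1.eventually (eventually_le_nhds ?_)
      rw [lt_div_iff₀ hlam0]; nlinarith
    filter_upwards [hmul.eventually h2, hmul.eventually (htop.eventually_gt_atTop 0)] with x hx hpos
    rw [show (1/lam) * (lam * x) = x by field_simp] at hx
    rw [div_le_div_iff₀ hpos hlam0] at hx
    linarith
  have hLxle : ∀ᶠ x in atTop, L x ≤ x := slowvar_le_self L hmono htop hsv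
  have hdtop : Tendsto (fun x => Real.log (L x) + Real.log (Real.log x)) atTop atTop := by
    apply tendsto_atTop_mono' atTop (f₁ := fun x => Real.log (L x))
      ?_ (Real.tendsto_log_atTop.comp htop)
    filter_upwards [eventually_ge_atTop (Real.exp 1)] with x hx
    have h1 : (1:ℝ) ≤ Real.log x := by
      rw [show (1:ℝ) = Real.log (Real.exp 1) by rw [Real.log_exp]]
      exact Real.log_le_log (Real.exp_pos 1) hx
    have h2 : 0 ≤ Real.log (Real.log x) := Real.log_nonneg h1
    linarith
  have hftop : Tendsto f atTop atTop := by
    rw [tendsto_atTop]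
    intro b
    filter_upwards [hf, hLxle, hLpos, hdtop.eventually_ge_atTop (max b 0),
      eventually_ge_atTop (max b 1)] with x hfx hLx hLp hd hxb
    rw [hfx]
    have h1 : 1 ≤ x / L x := (one_le_div hLp).mpr hLx
    have h2 : b ≤ (x / L x) * (Real.log (L x) + Real.log (Real.log x)) := by
      calc b ≤ max b 0 := le_max_left _ _
        _ ≤ Real.log (L x) + Real.log (Real.log x) := hd
        _ = 1 * (Real.log (L x) + Real.log (Real.log x)) := (one_mul _).symm
        _ ≤ (x / L x) * (Real.log (L x) + Real.log (Real.log x)) :=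
            mul_le_mul_of_nonneg_right h1 (le_trans (le_max_right _ _) hd)
    exact le_min h2 (le_trans (le_max_left _ _) hxb)
  have hflam : ∀ᶠ x in atTop, f (lam * x) ≤ η^2 * f x := by
    filter_upwards [hf, hmul.eventually hf, hsvlam, hLpos, hmul.eventually hLpos,
      hmul.eventually (hdtop.eventually_ge_atTop 0), hmul.eventually (eventually_ge_atTop 2),
      eventually_ge_atTop 2] with x hfx hflx hsvx hLp hLpl hd0 h2l h2x
    set A : ℝ := (x / L x) * (Real.log (L x) + Real.log (Real.log x)) with hA
    set Al : ℝ := ((lam*x) / L (lam*x)) * (Real.log (L (lam*x)) + Real.log (Real.log (lam*x))) with hAl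
    have hxpos : (0:ℝ) < x := by linarith
    have hlx1 : (1:ℝ) ≤ lam * x := by linarith
    have hlxx : lam * x ≤ x := by nlinarith
    have hLle : L (lam * x) ≤ L x := hmono hlx1 (le_trans hlx1 hlxx) hlxx
    have hdle : Real.log (L (lam*x)) + Real.log (Real.log (lam*x))
        ≤ Real.log (L x) + Real.log (Real.log x) := by
      have h1 : Real.log (L (lam*x)) ≤ Real.log (L x) := Real.log_le_log hLpl hLle
      have hloglx : 0 < Real.log (lam*x) := Real.log_pos (by linarith)
      have h2 : Real.log (Real.log (lam*x)) ≤ Real.log (Real.log x) :=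
        Real.log_le_log hloglx (Real.log_le_log (by linarith) hlxx)
      linarith
    have hstep1 : lam * x / L (lam * x) ≤ η^2 * x / L x := by
      rw [div_le_div_iff₀ hLpl hLp]
      nlinarith
    have hAle : Al ≤ η^2 * A := by
      rw [hAl, hA]
      calc (lam*x) / L (lam*x) * (Real.log (L (lam*x)) + Real.log (Real.log (lam*x)))
          ≤ (η^2 * x / L x) * (Real.log (L x) + Real.log (Real.log x)) := by
            apply mul_le_mul hstep1 hdle hd0 (by positivity)
        _ = η^2 * ((x / L x) * (Real.log (L x) + Real.log (Real.log x))) := by ring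
    have hmm : η^2 * min A x = min (η^2 * A) (η^2 * x) := by
      rcases le_total A x with h | h
      · rw [min_eq_left h, min_eq_left (mul_le_mul_of_nonneg_left h (by positivity))]
      · rw [min_eq_right h, min_eq_right (mul_le_mul_of_nonneg_left h (by positivity))]
    rw [hflx, hfx, hmm]
    apply le_min
    · exact le_trans (min_le_left _ _) hAle
    · exact le_trans (min_le_right _ _) (by nlinarith)
  obtain ⟨y₀, hy₀⟩ := hfinvmono
  have hxfacts : ∀ᶠ x in atTop,
      (u₁ ≤ x) ∧ (L (2*x) ≤ 2 * L x) ∧ (0 < L x) ∧ (0 ≤ f x) ∧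
      (∀ t : ℝ, η^2 * f x < t → lam * x ≤ finv t) := by
    have hfinal : ∀ᶠ x in atTop, ∀ t : ℝ, η^2 * f x < t → lam * x ≤ finv t := by
      filter_upwards [hflam, hmul.eventually hfinv, hmul.eventually (hftop.eventually_ge_atTop y₀)]
        with x hfl hfi hfy
      intro t ht
      have h3 : f (lam*x) ≤ t := le_trans (le_trans hfl ht.le) le_rfl
      have := hy₀ (Set.mem_Ici.mpr hfy) (Set.mem_Ici.mpr (le_trans hfy h3)) h3
      rwa [hfi] at this
    have h2L : ∀ᶠ x in atTop, L (2*x) ≤ 2 * L x := by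
      have h32 : ∀ᶠ x in atTop, L (2 * x) / L x ≤ 3/2 :=
        (hsv 2 two_pos).eventually (eventually_le_nhds (by norm_num))
      filter_upwards [h32, hLpos] with x h1 h2
      rw [div_le_iff₀ h2] at h1; linarith
    filter_upwards [eventually_ge_atTop u₁, h2L, hLpos, hftop.eventually_ge_atTop 0, hfinal]
      with x a b cc d e
    exact ⟨a, b, cc, d, e⟩
  obtain ⟨N, hN⟩ := eventually_atTop.mp (hntop.eventually hxfacts)
  -- ### gap estimates, for k ≥ N
  have hgap : ∀ k, N ≤ k → n k < n (k+1) ∧ n (k+1) ≤ 2 * n k ∧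
      n k / L (n k) ≤ 2/c * (n (k+1) - n k) := by
    intro k hk
    obtain ⟨hu₁k, h2Lk, hLpk, _, _⟩ := hN k hk
    obtain ⟨hu₁k1, _, hLpk1, _, _⟩ := hN (k+1) (by omega)
    have hφk1 : φ (n (k+1)) = c * k + c := by
      rw [hφn (k+1)]; push_cast; ring
    have hmonok : n k < n (k+1) := by
      by_contra hle
      push_neg at hle
      rcases eq_or_lt_of_le hle with heq | hlt
      · have := hφn (k+1)
        rw [heq, hφn k] at this
        push_cast at this
        nlinarith
      · have := hφlt (n (k+1)) (n k) hu₁k1 hlt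
        rw [hφn k, hφk1] at this
        linarith
    -- doubling
    have hdbl : n (k+1) ≤ 2 * n k := by
      have hb : ∀ u ∈ Set.Icc (n k) (2 * n k), L (n k) ≤ L u := by
        intro u hu
        exact hmono (hn1 k) (le_trans (hn1 k) hu.1) hu.1
      have hlg := hlow (n k) (2 * n k) (L (n k)) (hn1 k) (by linarith [hn1 k]) hb
        (le_trans (by linarith [hLu₁ (n k) hu₁k]) le_rfl)
      have hnk0 : (0:ℝ) < n k := lt_of_lt_of_le one_pos (hn1 k)
      rw [show (2 * n k) / n k = 2 by field_simp] at hlg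
      have hLk : 1 + 2*c ≤ L (n k) := hLu₁ (n k) hu₁k
      have hlog2 : (0.6931471803:ℝ) < Real.log 2 := Real.log_two_gt_d9
      have hc2 : c ≤ L (n k) * Real.log 2 := by nlinarith
      have hφ2 : φ (n (k+1)) ≤ φ (2 * n k) := by
        rw [hφk1, hφn k] at *
        nlinarith [hlg]
      exact hφle (n (k+1)) (2 * n k) hu₁k1 (le_trans hu₁k (by linarith [hn1 k])) hφ2
    refine ⟨hmonok, hdbl, ?_⟩
    have hnk0 : (0:ℝ) < n k := lt_of_lt_of_le one_pos (hn1 k)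
    have hLk1le : L (n (k+1)) ≤ 2 * L (n k) := by
      have h1 : L (n (k+1)) ≤ L (2 * n k) :=
        hmono (le_trans (hn1 k) hmonok.le) (le_trans (hn1 k) (by linarith)) hdbl
      rw [show (2:ℝ) * n k = 2 * n k from rfl] at h1
      exact le_trans h1 h2Lk
    have hb : ∀ u ∈ Set.Icc (n k) (n (k+1)), L u ≤ L (n (k+1)) := by
      intro u hu
      exact hmono (le_trans (hn1 k) hu.1) (le_trans (hn1 k) hmonok.le) hu.2
    have hupk := hup (n k) (n (k+1)) (L (n (k+1))) (hn1 k) hmonok.le hb hLpk1.le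
    rw [hφk1, hφn k] at hupk
    have hck' : c ≤ L (n (k+1)) * (n (k+1) - n k) / n k := by linarith
    rw [le_div_iff₀ hnk0] at hck'
    rw [div_le_iff₀ hLpk]
    have hΔ : 0 ≤ n (k+1) - n k := by linarith
    have : c * n k ≤ 2 * L (n k) * (n (k+1) - n k) := by nlinarith
    rw [show 2/c * (n (k+1) - n k) * L (n k) = (2 * L (n k) * (n (k+1) - n k))/c by ring]
    rw [le_div_iff₀ hcpos]
    nlinarith
  -- ### B sets
  set B : ℕ → Set Ω := fun k => {ω | η^2 * f (n k) < (X ω)^2} with hBdef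
  have hBmeas : ∀ k, MeasurableSet (B k) :=
    fun k => measurableSet_lt measurable_const (hmeas.pow_const 2)
  have hincl : ∀ k, N ≤ k → {ω | η * Real.sqrt (f (n k)) < X ω} ⊆ B k := by
    intro k hk ω hω
    have h0 : 0 ≤ f (n k) := (hN k hk).2.2.2.1
    simp only [Set.mem_setOf_eq] at hω ⊢
    have h1 : 0 ≤ η * Real.sqrt (f (n k)) := by positivity
    have h2 := mul_self_lt_mul_self h1 hω
    calc η^2 * f (n k) = (η * Real.sqrt (f (n k))) * (η * Real.sqrt (f (n k))) := by
          rw [show (η * Real.sqrt (f (n k))) * (η * Real.sqrt (f (n k)))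
              = η^2 * (Real.sqrt (f (n k)) * Real.sqrt (f (n k))) by ring,
            Real.mul_self_sqrt h0]
      _ < X ω * X ω := h2
      _ = (X ω)^2 := (sq (X ω)).symm
  -- ### splitting the sum
  have hnk : ∀ k : ℕ, ψ (c * k) = n k := fun k => rfl
  simp only [hnk]
  have hsplit : ∀ k : ℕ, ENNReal.ofReal (n k / L (n k)) * P {ω | η * Real.sqrt (f (n k)) < X ω}
      ≤ (if k < N then ENNReal.ofReal (n k / L (n k)) * P {ω | η * Real.sqrt (f (n k)) < X ω} else 0)
        + (if k < N then 0 else ENNReal.ofReal (n k / L (n k)) * P (B k)) := by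
    intro k
    by_cases hk : k < N
    · simp [hk]
    · simp only [if_neg hk, zero_add]
      exact mul_le_mul_right (P.mono (hincl k (not_lt.mp hk))) _
  have hG : (∑' k : ℕ, (if k < N then ENNReal.ofReal (n k / L (n k)) * P {ω | η * Real.sqrt (f (n k)) < X ω} else 0)) < ⊤ := by
    rw [tsum_eq_sum (s := Finset.range N) (by
      intro k hk
      rw [if_neg (by simpa using hk)])]
    apply ENNReal.sum_lt_top.mpr
    intro k _
    split_ifs
    · exact ENNReal.mul_lt_top ENNReal.ofReal_lt_top (measure_lt_top P _)
    · exact ENNReal.zero_lt_top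
  -- ### the tail bound
  have hFbound : (∑' k : ℕ, (if k < N then 0 else ENNReal.ofReal (n k / L (n k)) * P (B k)))
      ≤ ENNReal.ofReal (4 / (c * lam)) * ∫⁻ ω, ENNReal.ofReal (finv ((X ω) ^ 2)) ∂P := by
    have heq : ∀ k : ℕ, (if k < N then 0 else ENNReal.ofReal (n k / L (n k)) * P (B k))
        = ∫⁻ ω, (if k < N then 0 else (B k).indicator (fun _ => ENNReal.ofReal (n k / L (n k))) ω) ∂P := by
      intro k
      split_ifs with hk
      · simp
      · rw [lintegral_indicator_const (hBmeas k)]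
    simp_rw [heq]
    rw [← lintegral_tsum (fun k => by
      split_ifs
      · exact aemeasurable_const
      · exact (measurable_const.indicator (hBmeas k)).aemeasurable)]
    have hpt : ∀ ω, (∑' k : ℕ, (if k < N then 0 else (B k).indicator (fun _ => ENNReal.ofReal (n k / L (n k))) ω))
        ≤ ENNReal.ofReal (4 / (c * lam)) * ENNReal.ofReal (finv ((X ω)^2)) := by
      intro ω
      rw [ENNReal.tsum_eq_iSup_sum]
      apply iSup_le
      intro s
      set s' := s.filter (fun k => N ≤ k ∧ ω ∈ B k) with hs'
      have hsum_eq : (∑ k ∈ s, (if k < N then 0 else (B k).indicator (fun _ => ENNReal.ofReal (n k / L (n k))) ω))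
          = ∑ k ∈ s', (if k < N then 0 else (B k).indicator (fun _ => ENNReal.ofReal (n k / L (n k))) ω) := by
        apply (Finset.sum_filter_of_ne ?_).symm
        intro x hx hne
        constructor
        · by_contra h
          rw [if_pos (by omega)] at hne
          exact hne rfl
        · by_contra h
          rw [Set.indicator_of_notMem h] at hne
          split_ifs at hne <;> exact hne rfl
      rw [hsum_eq]
      rcases Finset.eq_empty_or_nonempty s' with he | hne
      · rw [he]; simp
      set K := s'.max' hne with hK
      have hKmem : K ∈ s' := s'.max'_mem hne
      have hKprop : N ≤ K ∧ ω ∈ B K := (Finset.mem_filter.mp hKmem).2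
      have hsub : s' ⊆ Finset.Icc N K := by
        intro x hx
        obtain ⟨hx1, hx2⟩ := Finset.mem_filter.mp hx
        exact Finset.mem_Icc.mpr ⟨hx2.1, Finset.le_max' s' x hx⟩
      calc (∑ k ∈ s', (if k < N then 0 else (B k).indicator (fun _ => ENNReal.ofReal (n k / L (n k))) ω))
          ≤ ∑ k ∈ Finset.Icc N K, (if k < N then 0 else (B k).indicator (fun _ => ENNReal.ofReal (n k / L (n k))) ω) :=
            Finset.sum_le_sum_of_subset hsub
        _ ≤ ∑ k ∈ Finset.Icc N K, ENNReal.ofReal (n k / L (n k)) := by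
            apply Finset.sum_le_sum
            intro k _
            split_ifs
            · exact zero_le
            · exact Set.indicator_le_self _ _ ω
        _ = ENNReal.ofReal (∑ k ∈ Finset.Icc N K, n k / L (n k)) := by
            rw [ENNReal.ofReal_sum_of_nonneg]
            intro k hk
            have hLp : 0 < L (n k) := (hN k (Finset.mem_Icc.mp hk).1).2.2.1
            exact div_nonneg (le_trans zero_le_one (hn1 k)) hLp.le
        _ ≤ ENNReal.ofReal (4 / (c * lam) * finv ((X ω)^2)) := by
            apply ENNReal.ofReal_le_ofReal
            have htel : (∑ k ∈ Finset.Icc N K, (n (k+1) - n k)) = n (K+1) - n N := by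
              rw [show Finset.Icc N K = Finset.Ico N (K+1) by rw [Finset.Ico_add_one_right_eq_Icc],
                Finset.sum_Ico_eq_sum_range]
              have h1 : N + (K + 1 - N) = K + 1 := by omega
              have h2 : (∑ i ∈ Finset.range (K + 1 - N), (n (N + (i+1)) - n (N + i)))
                  = n (N + (K + 1 - N)) - n (N + 0) := Finset.sum_range_sub (fun j => n (N + j)) _
              simpa [h1, add_assoc] using h2
            have hsum1 : (∑ k ∈ Finset.Icc N K, n k / L (n k)) ≤ 2/c * (n (K+1) - n N) := by
              calc (∑ k ∈ Finset.Icc N K, n k / L (n k))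
                  ≤ ∑ k ∈ Finset.Icc N K, 2/c * (n (k+1) - n k) := by
                    apply Finset.sum_le_sum
                    intro k hk
                    exact (hgap k (Finset.mem_Icc.mp hk).1).2.2
                _ = 2/c * ∑ k ∈ Finset.Icc N K, (n (k+1) - n k) := by
                    rw [Finset.mul_sum]
                _ = 2/c * (n (K+1) - n N) := by rw [htel]
            have hfin : lam * n K ≤ finv ((X ω)^2) := by
              have h5 := (hN K hKprop.1).2.2.2.2
              exact h5 _ hKprop.2
            have hd := (hgap K hKprop.1).2.1
            have hnN : (0:ℝ) ≤ n N := le_trans zero_le_one (hn1 N)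
            have hnK : (0:ℝ) < n K := lt_of_lt_of_le one_pos (hn1 K)
            have hfK : n K ≤ finv ((X ω)^2) / lam := by
              rw [le_div_iff₀ hlam0]; linarith
            calc (∑ k ∈ Finset.Icc N K, n k / L (n k)) ≤ 2/c * (n (K+1) - n N) := hsum1
              _ ≤ 2/c * (2 * n K) := by
                  apply mul_le_mul_of_nonneg_left (by linarith) (by positivity)
              _ = 4/c * n K := by ring
              _ ≤ 4/c * (finv ((X ω)^2) / lam) := by
                  apply mul_le_mul_of_nonneg_left hfK (by positivity)
              _ = 4 / (c * lam) * finv ((X ω)^2) := by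
                  field_simp
        _ ≤ ENNReal.ofReal (4 / (c * lam)) * ENNReal.ofReal (finv ((X ω)^2)) := by
            rw [← ENNReal.ofReal_mul (by positivity)]
    calc (∫⁻ ω, (∑' k : ℕ, (if k < N then 0 else (B k).indicator (fun _ => ENNReal.ofReal (n k / L (n k))) ω)) ∂P)
        ≤ ∫⁻ ω, ENNReal.ofReal (4 / (c * lam)) * ENNReal.ofReal (finv ((X ω)^2)) ∂P :=
          lintegral_mono hpt
      _ = ENNReal.ofReal (4 / (c * lam)) * ∫⁻ ω, ENNReal.ofReal (finv ((X ω)^2)) ∂P :=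
          lintegral_const_mul' _ _ ENNReal.ofReal_ne_top
  calc (∑' k : ℕ, ENNReal.ofReal (n k / L (n k)) * P {ω | η * Real.sqrt (f (n k)) < X ω})
      ≤ ∑' k : ℕ, ((if k < N then ENNReal.ofReal (n k / L (n k)) * P {ω | η * Real.sqrt (f (n k)) < X ω} else 0)
        + (if k < N then 0 else ENNReal.ofReal (n k / L (n k)) * P (B k))) := ENNReal.tsum_le_tsum hsplit
    _ = (∑' k : ℕ, (if k < N then ENNReal.ofReal (n k / L (n k)) * P {ω | η * Real.sqrt (f (n k)) < X ω} else 0))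
        + ∑' k : ℕ, (if k < N then 0 else ENNReal.ofReal (n k / L (n k)) * P (B k)) := ENNReal.tsum_add
    _ < ⊤ := ENNReal.add_lt_top.mpr ⟨hG, lt_of_le_of_lt hFbound (ENNReal.mul_lt_top ENNReal.ofReal_lt_top hmom)⟩
end
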